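/- arXiv:1410.7964 — 4 statements merged into one kernel-verified Lean document; each statement's English description precedes it below -/
import Mathlib

section
/- For a q-regular connected multigraph G without loops on m vertices, where q ≥ 3 is odd and m ≥ 3, the matching number M(G) satisfies M(G) ≥ ⌈((q²−q−1)m−(q−1))/(q(3q−5))⌉. -/
open Finset Relation

set_option linter.unusedSectionVars false

/-- A multigraph on vertex set `Fin m` is modeled by the multiset of its edges,
each edge being an unordered pair of vertices (parallel edges = multiplicity). -/
def Multigraph.degree {m : ℕ} (E : Multiset (Sym2 (Fin m))) (v : Fin m) : ℕ :=
  Multiset.countP (fun e => v ∈ e) E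

/-- No loops: no edge is a diagonal pair. -/
def Multigraph.Loopless {m : ℕ} (E : Multiset (Sym2 (Fin m))) : Prop :=
  ∀ e ∈ E, ¬ e.IsDiag

/-- Adjacency relation induced by the edge multiset. -/
def Multigraph.Adj {m : ℕ} (E : Multiset (Sym2 (Fin m))) (u v : Fin m) : Prop :=
  ∃ e ∈ E, u ∈ e ∧ v ∈ e ∧ u ≠ v

/-- Connectedness: any two vertices are joined by a path. -/
def Multigraph.Connected {m : ℕ} (E : Multiset (Sym2 (Fin m))) : Prop :=
  ∀ u v : Fin m, Relation.ReflTransGen (Multigraph.Adj E) u v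

/-- A matching: a set of edges of the multigraph which are pairwise non-adjacent
(no two distinct edges of the matching share a vertex). -/
def Multigraph.IsMatching {m : ℕ} (E : Multiset (Sym2 (Fin m)))
    (M : Finset (Sym2 (Fin m))) : Prop :=
  (∀ e ∈ M, e ∈ E) ∧ ∀ e ∈ M, ∀ f ∈ M, e ≠ f → ∀ v : Fin m, ¬ (v ∈ e ∧ v ∈ f)

namespace HY

attribute [local instance] Classical.propDecidable

variable {α : Type*} [Fintype α] [DecidableEq α]

/-- If two distinct elements belong to a `Sym2`, it equals their pair. -/
lemma sym2_eq_of_mem {e : Sym2 α} {x y : α} (hx : x ∈ e) (hy : y ∈ e) (hxy : x ≠ y) :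
    e = s(x, y) := by
  induction e using Sym2.ind with
  | _ a b =>
    rw [Sym2.mem_iff] at hx hy
    rcases hx with rfl | rfl <;> rcases hy with rfl | rfl
    · exact absurd rfl hxy
    · rfl
    · exact Sym2.eq_swap
    · exact absurd rfl hxy

def evs (e : Sym2 α) : Finset α := Finset.univ.filter (· ∈ e)

lemma mem_evs {e : Sym2 α} {v : α} : v ∈ evs e ↔ v ∈ e := by
  simp [evs]

lemma card_evs {e : Sym2 α} (he : ¬ e.IsDiag) : (evs e).card = 2 := by
  induction e using Sym2.ind with
  | _ a b =>
    have hab : a ≠ b := by simpa [Sym2.isDiag_iff_proj_eq] using he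
    have : evs s(a, b) = {a, b} := by
      ext v; simp [mem_evs, Sym2.mem_iff]
    rw [this, card_insert_of_notMem (by simpa using hab), card_singleton]

section WithE

variable (E : Multiset (Sym2 α))

/-- matching predicate (mirrors `Multigraph.IsMatching`). -/
def Match (M : Finset (Sym2 α)) : Prop :=
  (∀ e ∈ M, e ∈ E) ∧ ∀ e ∈ M, ∀ f ∈ M, e ≠ f → ∀ v : α, ¬ (v ∈ e ∧ v ∈ f)

/-- matching all of whose edges lie inside the vertex set `A`. -/
def MIn (A : Finset α) (M : Finset (Sym2 α)) : Prop :=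
  Match E M ∧ ∀ e ∈ M, ∀ v ∈ e, v ∈ A

noncomputable def mfs (A : Finset α) : Finset (Finset (Sym2 α)) :=
  E.toFinset.powerset.filter (MIn E A)

lemma mem_mfs {A : Finset α} {M : Finset (Sym2 α)} :
    M ∈ mfs E A ↔ MIn E A M := by
  constructor
  · intro h; exact (mem_filter.mp h).2
  · intro h
    refine mem_filter.mpr ⟨mem_powerset.mpr ?_, h⟩
    intro e he; exact Multiset.mem_toFinset.mpr (h.1.1 e he)

lemma empty_mem_mfs (A : Finset α) : ∅ ∈ mfs E A := by
  rw [mem_mfs]; exact ⟨⟨by simp, by simp⟩, by simp⟩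

noncomputable def nu (A : Finset α) : ℕ := (mfs E A).sup Finset.card

lemma card_le_nu {A : Finset α} {M : Finset (Sym2 α)} (h : MIn E A M) : M.card ≤ nu E A :=
  le_sup ((mem_mfs E).mpr h)

lemma exists_nu (A : Finset α) : ∃ M, MIn E A M ∧ M.card = nu E A := by
  obtain ⟨M, hM, hc⟩ := Finset.exists_mem_eq_sup (mfs E A) ⟨∅, empty_mem_mfs E A⟩ Finset.card
  exact ⟨M, (mem_mfs E).mp hM, hc.symm⟩

lemma nu_mono {A A' : Finset α} (h : A ⊆ A') : nu E A ≤ nu E A' := by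
  obtain ⟨M, hM, hc⟩ := exists_nu E A
  rw [← hc]
  exact card_le_nu E ⟨hM.1, fun e he v hv => h (hM.2 e he v hv)⟩

/-- adjacency -/
def Adj' (u v : α) : Prop := ∃ e ∈ E, u ∈ e ∧ v ∈ e ∧ u ≠ v

lemma Adj'_symm : Symmetric (Adj' E) := by
  rintro u v ⟨e, he, h1, h2, h3⟩; exact ⟨e, he, h2, h1, h3.symm⟩

/-- adjacency within a vertex set `B` -/
def AdjB (B : Finset α) (u v : α) : Prop := u ∈ B ∧ v ∈ B ∧ Adj' E u v

lemma AdjB_symm (B : Finset α) : Symmetric (AdjB E B) := by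
  rintro u v ⟨h1, h2, h3⟩; exact ⟨h2, h1, Adj'_symm E h3⟩

/-- connected component of `v` inside `B`. -/
noncomputable def comp (B : Finset α) (v : α) : Finset α :=
  B.filter (fun w => ReflTransGen (AdjB E B) v w)

lemma mem_comp {B : Finset α} {v w : α} :
    w ∈ comp E B v ↔ w ∈ B ∧ ReflTransGen (AdjB E B) v w := mem_filter

lemma mem_comp_self {B : Finset α} {v : α} (hv : v ∈ B) : v ∈ comp E B v := by
  rw [mem_comp]; exact ⟨hv, ReflTransGen.refl⟩

lemma comp_subset {B : Finset α} {v : α} : comp E B v ⊆ B := filter_subset _ _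

lemma reach_symm {B : Finset α} {u v : α} (h : ReflTransGen (AdjB E B) u v) :
    ReflTransGen (AdjB E B) v u :=
  by haveI : Std.Symm (AdjB E B) := ⟨fun _ _ h => AdjB_symm E B h⟩; exact Std.Symm.symm _ _ h

lemma comp_eq_of_mem {B : Finset α} {v w : α} (h : w ∈ comp E B v) :
    comp E B w = comp E B v := by
  rw [mem_comp] at h
  ext x
  rw [mem_comp, mem_comp]
  constructor
  · rintro ⟨hx, hr⟩; exact ⟨hx, h.2.trans hr⟩
  · rintro ⟨hx, hr⟩; exact ⟨hx, (reach_symm E h.2).trans hr⟩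

lemma comp_closed_adj {B : Finset α} {v x y : α} (hx : x ∈ comp E B v)
    (hxy : AdjB E B x y) : y ∈ comp E B v := by
  rw [mem_comp] at hx ⊢
  exact ⟨hxy.2.1, hx.2.tail hxy⟩

noncomputable def CS (B : Finset α) : Finset (Finset α) := B.image (comp E B)

lemma comp_mem_CS {B : Finset α} {v : α} (hv : v ∈ B) : comp E B v ∈ CS E B :=
  mem_image_of_mem _ hv

lemma CS_spec {B : Finset α} {C : Finset α} (hC : C ∈ CS E B) :
    ∃ v ∈ B, C = comp E B v := by
  obtain ⟨v, hv, h⟩ := mem_image.mp hC; exact ⟨v, hv, h.symm⟩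

lemma comp_eq_comp_of_mem_CS {B : Finset α} {C : Finset α} (hC : C ∈ CS E B) {x : α}
    (hx : x ∈ C) : comp E B x = C := by
  obtain ⟨v, _, rfl⟩ := CS_spec E hC
  exact comp_eq_of_mem E hx

lemma CS_disjoint {B : Finset α} {C C' : Finset α} (hC : C ∈ CS E B) (hC' : C' ∈ CS E B)
    (hne : C ≠ C') : Disjoint C C' := by
  rw [Finset.disjoint_left]
  intro x hx hx'
  exact hne ((comp_eq_comp_of_mem_CS E hC hx).symm.trans (comp_eq_comp_of_mem_CS E hC' hx'))

lemma CS_biUnion {B : Finset α} : (CS E B).biUnion id = B := by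
  ext x
  simp only [mem_biUnion, id]
  constructor
  · rintro ⟨C, hC, hx⟩
    obtain ⟨v, hv, rfl⟩ := CS_spec E hC
    exact comp_subset E hx
  · intro hx; exact ⟨comp E B x, comp_mem_CS E hx, mem_comp_self E hx⟩

lemma sum_card_CS {B : Finset α} : ∑ C ∈ CS E B, C.card = B.card := by
  have h := card_biUnion (s := CS E B) (t := id)
    (fun C hC C' hC' hne => CS_disjoint E hC hC' hne)
  rw [CS_biUnion] at h
  simpa using h.symm

noncomputable def nOdd (B : Finset α) : ℕ := ((CS E B).filter (fun C => Odd C.card)).card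

end WithE

section Walk

variable {α : Type*} [Fintype α]

def wp (mf nf : α → α) (y : α) : ℕ → α
  | 0 => y
  | (k+1) => if Even k then mf (wp mf nf y k) else nf (wp mf nf y k)

variable {mf nf : α → α} {y : α}

lemma wp_succ (k : ℕ) :
    wp mf nf y (k+1) = if Even k then mf (wp mf nf y k) else nf (wp mf nf y k) := rfl

lemma wp_even_succ {k : ℕ} (h : Even k) : wp mf nf y (k+1) = mf (wp mf nf y k) := by
  rw [wp_succ, if_pos h]

lemma wp_odd_succ {k : ℕ} (h : ¬ Even k) : wp mf nf y (k+1) = nf (wp mf nf y k) := by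
  rw [wp_succ, if_neg h]

lemma wp_noDup (hm : Function.Involutive mf) (hn : Function.Involutive nf)
    (hy : nf y = y) :
    ∀ n a, 0 < n → (∀ k, k < a + n → wp mf nf y (k+1) ≠ wp mf nf y k) →
      wp mf nf y a ≠ wp mf nf y (a + n) := by
  intro n
  induction n using Nat.strong_induction_on with
  | _ n ihn =>
    intro a
    induction a using Nat.strong_induction_on with
    | _ a iha =>
      intro hn0 hstop hcol
      rcases Nat.even_or_odd a with ha | ha
      · rcases Nat.even_or_odd (a + n) with hb | hb
        · -- both even
          rcases Nat.eq_zero_or_pos a with rfl | hapos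
          · -- a = 0
            simp only [Nat.zero_add] at hcol hb hstop
            have hn2 : 2 ≤ n := by rcases hb with ⟨l, hl⟩; omega
            have hb' : ¬ Even (n - 1) := by
              rcases hb with ⟨l, hl⟩; rintro ⟨j, hj⟩; omega
            have heq : wp mf nf y n = nf (wp mf nf y (n - 1)) := by
              have h1 : n - 1 + 1 = n := by omega
              have h2 := wp_odd_succ (mf := mf) (nf := nf) (y := y) hb'
              rw [h1] at h2; exact h2
            have h3 : wp mf nf y 0 = wp mf nf y (0 + (n - 1)) := by
              have h4 : nf (wp mf nf y n) = wp mf nf y (n - 1) := by rw [heq, hn]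
              rw [← hcol] at h4
              have h0 : wp mf nf y 0 = y := rfl
              rw [h0, hy] at h4
              rw [Nat.zero_add, ← h4, h0]
            exact ihn (n - 1) (by omega) 0 (by omega)
              (fun k hk => hstop k (by omega)) h3
          · -- a ≥ 2 even
            have ha' : ¬ Even (a - 1) := by
              rcases ha with ⟨j, hj⟩; rintro ⟨l, hl⟩; omega
            have hb' : ¬ Even (a + n - 1) := by
              rcases hb with ⟨j, hj⟩; rintro ⟨l, hl⟩; omega
            have e1 : wp mf nf y a = nf (wp mf nf y (a - 1)) := by
              have h1 : a - 1 + 1 = a := by omega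
              have h2 := wp_odd_succ (mf := mf) (nf := nf) (y := y) ha'
              rw [h1] at h2; exact h2
            have e2 : wp mf nf y (a + n) = nf (wp mf nf y (a + n - 1)) := by
              have h1 : a + n - 1 + 1 = a + n := by omega
              have h2 := wp_odd_succ (mf := mf) (nf := nf) (y := y) hb'
              rw [h1] at h2; exact h2
            have h5 : nf (wp mf nf y (a - 1)) = nf (wp mf nf y (a + n - 1)) := by
              rw [← e1, ← e2, hcol]
            have h6 := hn.injective h5
            have hcol2 : wp mf nf y (a - 1) = wp mf nf y (a - 1 + n) := by
              rw [show a - 1 + n = a + n - 1 by omega]; exact h6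
            exact iha (a - 1) (by omega) hn0 (fun k hk => hstop k (by omega)) hcol2
        · -- a even, a+n odd : mixed
          rcases Nat.lt_or_ge n 2 with h1 | h1
          · have : n = 1 := by omega
            subst this
            exact hstop a (by omega) hcol.symm
          · have hb' : Even (a + n - 1) := by
              rcases hb with ⟨l, hl⟩; exact ⟨l, by omega⟩
            have e2 : wp mf nf y (a + n) = mf (wp mf nf y (a + n - 1)) := by
              have hh : a + n - 1 + 1 = a + n := by omega
              have h2 := wp_even_succ (mf := mf) (nf := nf) (y := y) hb'
              rw [hh] at h2; exact h2
            have e1 : wp mf nf y (a + 1) = mf (wp mf nf y a) :=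
              wp_even_succ (mf := mf) (nf := nf) (y := y) ha
            have h5 : wp mf nf y (a + 1) = wp mf nf y (a + n - 1) := by
              rw [e1, hcol, e2, hm]
            have hcol2 : wp mf nf y (a + 1) = wp mf nf y (a + 1 + (n - 2)) := by
              rw [show a + 1 + (n - 2) = a + n - 1 by omega]; exact h5
            have hn3 : 3 ≤ n := by
              rcases ha with ⟨j, hj⟩; rcases hb with ⟨l, hl⟩; omega
            exact ihn (n - 2) (by omega) (a + 1) (by omega)
              (fun k hk => hstop k (by omega)) hcol2
      · rcases Nat.even_or_odd (a + n) with hb | hb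
        · -- a odd, a+n even : mixed
          rcases Nat.lt_or_ge n 2 with h1 | h1
          · have : n = 1 := by omega
            subst this
            exact hstop a (by omega) hcol.symm
          · have ha'' : ¬ Even a := by
              rcases ha with ⟨j, hj⟩; rintro ⟨l, hl⟩; omega
            have hb' : ¬ Even (a + n - 1) := by
              rcases hb with ⟨l, hl⟩; rintro ⟨j, hj⟩; omega
            have e2 : wp mf nf y (a + n) = nf (wp mf nf y (a + n - 1)) := by
              have hh : a + n - 1 + 1 = a + n := by omega
              have h2 := wp_odd_succ (mf := mf) (nf := nf) (y := y) hb'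
              rw [hh] at h2; exact h2
            have e1 : wp mf nf y (a + 1) = nf (wp mf nf y a) :=
              wp_odd_succ (mf := mf) (nf := nf) (y := y) ha''
            have h5 : wp mf nf y (a + 1) = wp mf nf y (a + n - 1) := by
              rw [e1, hcol, e2, hn]
            have hcol2 : wp mf nf y (a + 1) = wp mf nf y (a + 1 + (n - 2)) := by
              rw [show a + 1 + (n - 2) = a + n - 1 by omega]; exact h5
            have hn3 : 3 ≤ n := by
              rcases ha with ⟨j, hj⟩; rcases hb with ⟨l, hl⟩; omega
            exact ihn (n - 2) (by omega) (a + 1) (by omega)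
              (fun k hk => hstop k (by omega)) hcol2
        · -- both odd
          have ha1 : 1 ≤ a := by rcases ha with ⟨j, hj⟩; omega
          have ha' : Even (a - 1) := by rcases ha with ⟨j, hj⟩; exact ⟨j, by omega⟩
          have hb' : Even (a + n - 1) := by rcases hb with ⟨l, hl⟩; exact ⟨l, by omega⟩
          have e1 : wp mf nf y a = mf (wp mf nf y (a - 1)) := by
            have h1 : a - 1 + 1 = a := by omega
            have h2 := wp_even_succ (mf := mf) (nf := nf) (y := y) ha'
            rw [h1] at h2; exact h2
          have e2 : wp mf nf y (a + n) = mf (wp mf nf y (a + n - 1)) := by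
            have h1 : a + n - 1 + 1 = a + n := by omega
            have h2 := wp_even_succ (mf := mf) (nf := nf) (y := y) hb'
            rw [h1] at h2; exact h2
          have h5 : mf (wp mf nf y (a - 1)) = mf (wp mf nf y (a + n - 1)) := by
            rw [← e1, ← e2, hcol]
          have h6 := hm.injective h5
          have hcol2 : wp mf nf y (a - 1) = wp mf nf y (a - 1 + n) := by
            rw [show a - 1 + n = a + n - 1 by omega]; exact h6
          exact iha (a - 1) (by omega) hn0 (fun k hk => hstop k (by omega)) hcol2

lemma wp_exists_stop (hm : Function.Involutive mf) (hn : Function.Involutive nf)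
    (hy : nf y = y) : ∃ k, wp mf nf y (k+1) = wp mf nf y k := by
  by_contra hno
  push_neg at hno
  have hinj : Function.Injective (wp mf nf y) := by
    intro a b hab
    by_contra hne
    rcases Nat.lt_or_ge a b with h | h
    · exact wp_noDup hm hn hy (b - a) a (by omega) (fun k _ => hno k)
        (by rw [hab]; congr 1; omega)
    · have h' : b < a := by omega
      exact wp_noDup hm hn hy (a - b) b (by omega) (fun k _ => hno k)
        (by rw [← hab]; congr 1; omega)
  exact (Finite.exists_ne_map_eq_of_infinite (wp mf nf y)).elim
    (fun a h => h.elim (fun b ⟨hne, heq⟩ => hne (hinj heq)))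

end Walk



section PF

variable {α : Type*} [Fintype α] [DecidableEq α]

attribute [local instance] Classical.propDecidable

/-- partial involution associated to a matching -/
noncomputable def pf (M : Finset (Sym2 α)) (v : α) : α :=
  if h : ∃ e ∈ M, v ∈ e then Sym2.Mem.other h.choose_spec.2 else v

variable {M : Finset (Sym2 α)}

lemma pf_edge_eq (hMp : ∀ e ∈ M, ∀ f ∈ M, e ≠ f → ∀ v : α, ¬ (v ∈ e ∧ v ∈ f))
    {f : Sym2 α} {v : α} (hf : f ∈ M) (hv : v ∈ f) : f = s(v, pf M v) := by
  have h : ∃ e ∈ M, v ∈ e := ⟨f, hf, hv⟩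
  rw [pf, dif_pos h]
  have hspec := h.choose_spec
  have hfe : f = h.choose := by
    by_contra hne
    exact hMp f hf h.choose hspec.1 hne v ⟨hv, hspec.2⟩
  rw [hfe]
  exact (Sym2.other_spec hspec.2).symm

lemma pf_eq_of_uncov {v : α} (h : ¬ ∃ e ∈ M, v ∈ e) : pf M v = v := by
  rw [pf, dif_neg h]

lemma pf_ne_of_cov (hMnd : ∀ e ∈ M, ¬ e.IsDiag) {v : α} (h : ∃ e ∈ M, v ∈ e) :
    pf M v ≠ v := by
  rw [pf, dif_pos h]
  exact Sym2.other_ne (hMnd _ h.choose_spec.1) h.choose_spec.2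

lemma pf_mem_of_cov (hMp : ∀ e ∈ M, ∀ f ∈ M, e ≠ f → ∀ v : α, ¬ (v ∈ e ∧ v ∈ f))
    {v : α} (h : ∃ e ∈ M, v ∈ e) : s(v, pf M v) ∈ M := by
  obtain ⟨e, he, hv⟩ := h
  rw [← pf_edge_eq hMp he hv]
  exact he

lemma pf_mem_of_ne (hMp : ∀ e ∈ M, ∀ f ∈ M, e ≠ f → ∀ v : α, ¬ (v ∈ e ∧ v ∈ f))
    {v : α} (h : pf M v ≠ v) : s(v, pf M v) ∈ M := by
  by_cases hcov : ∃ e ∈ M, v ∈ e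
  · exact pf_mem_of_cov hMp hcov
  · exact absurd (pf_eq_of_uncov hcov) h

lemma pf_invol (hMp : ∀ e ∈ M, ∀ f ∈ M, e ≠ f → ∀ v : α, ¬ (v ∈ e ∧ v ∈ f))
    (hMnd : ∀ e ∈ M, ¬ e.IsDiag) : Function.Involutive (pf M) := by
  intro v
  by_cases hcov : ∃ e ∈ M, v ∈ e
  · have hne := pf_ne_of_cov hMnd hcov
    have hmem : s(v, pf M v) ∈ M := pf_mem_of_cov hMp hcov
    have hv2 : pf M v ∈ s(v, pf M v) := Sym2.mem_mk_right _ _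
    have hkey := pf_edge_eq hMp hmem hv2
    have hvmem : v ∈ s(v, pf M v) := Sym2.mem_mk_left _ _
    rw [hkey] at hvmem
    rcases Sym2.mem_iff.mp hvmem with h1 | h1
    · exact absurd h1.symm hne
    · exact h1.symm
  · have h1 := pf_eq_of_uncov hcov
    rw [h1, h1]

end PF

section WalkNdef

variable {α : Type*}

def WalkN (R : α → α → Prop) : ℕ → α → α → Prop
  | 0 => fun u v => u = v
  | (n+1) => fun u v => ∃ w, R u w ∧ WalkN R n w v

lemma walkN_snoc {R : α → α → Prop} {n : ℕ} {u w v : α} (h : WalkN R n u w)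
    (h2 : R w v) : WalkN R (n+1) u v := by
  induction n generalizing u with
  | zero => exact ⟨v, h ▸ h2, rfl⟩
  | succ n ih =>
    obtain ⟨x, hx, hw⟩ := h
    exact ⟨x, hx, ih hw⟩

lemma rtg_walkN {R : α → α → Prop} {u v : α} (h : Relation.ReflTransGen R u v) :
    ∃ n, WalkN R n u v := by
  induction h with
  | refl => exact ⟨0, rfl⟩
  | tail h1 h2 ih =>
    obtain ⟨n, hn⟩ := ih
    exact ⟨n+1, walkN_snoc hn h2⟩

end WalkNdef


section GallaiPrep

variable {α : Type*} [Fintype α] [DecidableEq α]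

attribute [local instance] Classical.propDecidable

lemma card_even_range (K : ℕ) :
    (((Finset.range K).filter (fun i => Even i)).card = (K+1)/2) ∧
    (((Finset.range K).filter (fun i => ¬ Even i)).card = K/2) := by
  induction K with
  | zero => simp
  | succ K ih =>
    rw [Finset.range_add_one, Finset.filter_insert, Finset.filter_insert]
    obtain ⟨h1, h2⟩ := ih
    by_cases h : Even K
    · rw [if_pos h, if_neg (by simpa using h), Finset.card_insert_of_notMem (by simp)]
      obtain ⟨j, rfl⟩ := h
      constructor <;> omega
    · rw [if_neg h, if_pos h, Finset.card_insert_of_notMem (by simp)]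
      rcases Nat.even_or_odd K with h' | h'
      · exact absurd h' h
      · obtain ⟨j, rfl⟩ := h'
        constructor <;> omega

def unc (C : Finset α) (M : Finset (Sym2 α)) : Finset α :=
  C.filter (fun v => ∀ e ∈ M, v ∉ e)

lemma mem_unc {C : Finset α} {M : Finset (Sym2 α)} {v : α} :
    v ∈ unc C M ↔ v ∈ C ∧ ∀ e ∈ M, v ∉ e := Finset.mem_filter

lemma card_unc {E : Multiset (Sym2 α)} (hE : ∀ e ∈ E, ¬ e.IsDiag)
    {C : Finset α} {M : Finset (Sym2 α)} (h : MIn E C M) :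
    (unc C M).card + 2 * M.card = C.card := by
  have hsplit := Finset.card_filter_add_card_filter_not
    (s := C) (p := fun v => ∀ e ∈ M, v ∉ e)
  have hcov : C.filter (fun v => ¬ ∀ e ∈ M, v ∉ e) = M.biUnion evs := by
    ext v
    simp only [Finset.mem_filter, Finset.mem_biUnion, mem_evs, not_forall]
    constructor
    · rintro ⟨hvC, e, he, hv⟩
      exact ⟨e, he, by simpa using hv⟩
    · rintro ⟨e, he, hv⟩
      exact ⟨h.2 e he v hv, e, he, by simpa using hv⟩
  have hbc : (M.biUnion evs).card = 2 * M.card := by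
    rw [Finset.card_biUnion]
    · rw [Finset.sum_congr rfl (fun e he => card_evs (hE e (h.1.1 e he)))]
      simp [mul_comm]
    · intro e he f hf hef
      rw [Function.onFun, Finset.disjoint_left]
      intro w hw hw'
      exact h.1.2 e he f hf hef w ⟨mem_evs.mp hw, mem_evs.mp hw'⟩
  rw [hcov, hbc] at hsplit
  exact hsplit

end GallaiPrep


section GallaiMain

variable {α : Type*} [Fintype α] [DecidableEq α]

attribute [local instance] Classical.propDecidable

lemma gallai (E : Multiset (Sym2 α)) (hE : ∀ e ∈ E, ¬ e.IsDiag) (C : Finset α)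
    (hconn : ∀ u v, u ∈ C → v ∈ C → Relation.ReflTransGen (AdjB E C) u v)
    (herase : ∀ v ∈ C, nu E C ≤ nu E (C.erase v)) :
    C.card ≤ 2 * nu E C + 1 := by
  by_contra hcon
  push_neg at hcon
  -- the set of walk-lengths between two distinct uncovered vertices of a maximum matching
  set dSet : Set ℕ := {n | ∃ M u v, (MIn E C M ∧ M.card = nu E C) ∧ u ∈ unc C M ∧
    v ∈ unc C M ∧ u ≠ v ∧ WalkN (AdjB E C) n u v} with hdSet
  obtain ⟨M₀, hM₀, hM₀c⟩ := exists_nu E C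
  have hu₀c : 2 ≤ (unc C M₀).card := by
    have := card_unc hE hM₀
    omega
  obtain ⟨u₀, hu₀, v₀, hv₀, hne₀⟩ := Finset.one_lt_card.mp
    (show 1 < (unc C M₀).card by omega)
  obtain ⟨n₀, hw₀⟩ := rtg_walkN (hconn u₀ v₀ (mem_unc.mp hu₀).1 (mem_unc.mp hv₀).1)
  have hdne : dSet.Nonempty := ⟨n₀, M₀, u₀, v₀, ⟨hM₀, hM₀c⟩, hu₀, hv₀, hne₀, hw₀⟩
  obtain ⟨M, u, v, hMm, hu, hv, huv, hw⟩ := Nat.sInf_mem hdne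
  set d := sInf dSet with hd
  have hdmin : ∀ k, k < d → k ∉ dSet := fun k hk => Nat.notMem_of_lt_sInf hk
  -- d ≥ 2
  have hd2 : 2 ≤ d := by
    rcases Nat.lt_or_ge d 2 with h | h
    · exfalso
      interval_cases d
      · exact huv hw
      · obtain ⟨w, hadj, rfl⟩ := hw
        obtain ⟨e, heE, hue, hve, huvne⟩ := hadj.2.2
        have heM : e ∉ M := fun hmem => (mem_unc.mp hu).2 e hmem hue
        have hin : MIn E C (insert e M) := by
          refine ⟨⟨?_, ?_⟩, ?_⟩
          · intro f hf
            rcases Finset.mem_insert.mp hf with rfl | hf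
            · exact heE
            · exact hMm.1.1.1 f hf
          · intro f hf g hg hfg w' hw'
            have hee : e = s(u, w) := sym2_eq_of_mem hue hve huvne
            rcases Finset.mem_insert.mp hf with rfl | hf' <;>
              rcases Finset.mem_insert.mp hg with rfl | hg'
            · exact hfg rfl
            · have : w' = u ∨ w' = w := by
                rw [hee] at hw'; exact Sym2.mem_iff.mp hw'.1
              rcases this with rfl | rfl
              · exact (mem_unc.mp hu).2 g hg' hw'.2
              · exact (mem_unc.mp hv).2 g hg' hw'.2
            · have : w' = u ∨ w' = w := by
                rw [hee] at hw'; exact Sym2.mem_iff.mp hw'.2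
              rcases this with rfl | rfl
              · exact (mem_unc.mp hu).2 f hf' hw'.1
              · exact (mem_unc.mp hv).2 f hf' hw'.1
            · exact hMm.1.1.2 f hf' g hg' hfg w' hw'
          · intro f hf w' hw'
            rcases Finset.mem_insert.mp hf with rfl | hf'
            · have hee : f = s(u, w) := sym2_eq_of_mem hue hve huvne
              have : w' = u ∨ w' = w := by rw [hee] at hw'; exact Sym2.mem_iff.mp hw'
              rcases this with rfl | rfl
              · exact hadj.1
              · exact hadj.2.1
            · exact hMm.1.2 f hf' w' hw'
        have := card_le_nu E hin
        rw [Finset.card_insert_of_notMem heM] at this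
        omega
    · exact h
  -- decompose the walk
  obtain ⟨t, hut, hwt⟩ : ∃ t, AdjB E C u t ∧ WalkN (AdjB E C) (d - 1) t v := by
    rcases hd : d with _ | d'
    · omega
    · rw [hd] at hw
      obtain ⟨t, h1, h2⟩ := hw
      exact ⟨t, h1, by simpa using h2⟩
  have htC : t ∈ C := hut.2.1
  have hune : u ≠ t := by
    obtain ⟨e', _, _, _, h⟩ := hut.2.2
    exact h
  have htv : t ≠ v := by
    rintro rfl
    have : (1 : ℕ) ∈ dSet := ⟨M, u, t, hMm, hu, hv, huv, t, hut, rfl⟩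
    exact hdmin 1 (by omega) this
  have htcov : t ∉ unc C M := by
    intro htunc
    have : (1 : ℕ) ∈ dSet := ⟨M, u, t, hMm, hu, htunc, hune, t, hut, rfl⟩
    exact hdmin 1 (by omega) this
  -- the family of maximum matchings missing t
  set NS : Finset (Finset (Sym2 α)) :=
    (mfs E C).filter (fun N => N.card = nu E C ∧ ∀ e ∈ N, t ∉ e) with hNS
  have hNSne : NS.Nonempty := by
    obtain ⟨M₁, hM₁, hM₁c⟩ := exists_nu E (C.erase t)
    have hM₁' : MIn E C M₁ :=
      ⟨hM₁.1, fun e he w hw => Finset.mem_of_mem_erase (hM₁.2 e he w hw)⟩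
    have hcard : M₁.card = nu E C :=
      le_antisymm (card_le_nu E hM₁') (by rw [hM₁c]; exact herase t htC)
    refine ⟨M₁, Finset.mem_filter.mpr ⟨(mem_mfs E).mpr hM₁', hcard, ?_⟩⟩
    intro e he ht
    exact Finset.notMem_erase t C (hM₁.2 e he t ht)
  obtain ⟨N, hN𝒩, hNmax⟩ := Finset.exists_max_image NS (fun N => (M ∩ N).card) hNSne
  have hNIn : MIn E C N := (mem_mfs E).mp (Finset.mem_filter.mp hN𝒩).1
  have hNc : N.card = nu E C := (Finset.mem_filter.mp hN𝒩).2.1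
  have hNt : ∀ e ∈ N, t ∉ e := (Finset.mem_filter.mp hN𝒩).2.2
  have htuncN : t ∈ unc C N := mem_unc.mpr ⟨htC, hNt⟩
  have hNu : u ∉ unc C N := by
    intro huN
    have : (1 : ℕ) ∈ dSet :=
      ⟨N, t, u, ⟨hNIn, hNc⟩, htuncN, huN, hune.symm, u, AdjB_symm E C hut, rfl⟩
    exact hdmin 1 (by omega) this
  have hNv : v ∉ unc C N := by
    intro hvN
    have : (d - 1) ∈ dSet := ⟨N, t, v, ⟨hNIn, hNc⟩, htuncN, hvN, htv, hwt⟩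
    exact hdmin (d - 1) (by omega) this
  have hcM := card_unc hE hMm.1
  have hcN := card_unc hE hNIn
  -- find y : uncovered by N, covered by M, different from t
  have hMuv : {u, v} ⊆ unc C M := by
    intro w hw
    rcases Finset.mem_insert.mp hw with rfl | hw
    · exact hu
    · rw [Finset.mem_singleton.mp hw]; exact hv
  obtain ⟨y, hyN, hyR⟩ : ∃ y ∈ unc C N, y ∉ (unc C M \ {u, v}) ∪ {t} := by
    rw [← Finset.not_subset]
    intro hsub
    have h1 : ((unc C M \ {u, v}) ∪ {t}).card ≤ (unc C M).card - 2 + 1 := by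
      calc ((unc C M \ {u, v}) ∪ {t}).card ≤ (unc C M \ {u, v}).card + 1 := by
            simpa using Finset.card_union_le (unc C M \ {u, v}) {t}
        _ = (unc C M).card - 2 + 1 := by
            rw [Finset.card_sdiff_of_subset hMuv]
            congr 1
            rw [Finset.card_insert_of_notMem (by simpa using huv), Finset.card_singleton]
    have h2 := Finset.card_le_card hsub
    have h3 : 2 ≤ (unc C M).card :=
      Finset.one_lt_card.mpr ⟨u, hu, v, hv, huv⟩
    omega
  have hyt : y ≠ t := by
    intro rfl'
    exact hyR (Finset.mem_union_right _ (by rw [rfl']; exact Finset.mem_singleton_self t))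
  have hyM : y ∉ unc C M := by
    intro hyM
    have : y ∈ unc C M \ {u, v} := by
      rw [Finset.mem_sdiff]
      refine ⟨hyM, ?_⟩
      intro hmem
      rcases Finset.mem_insert.mp hmem with rfl | hmem
      · exact hNu hyN
      · rw [Finset.mem_singleton.mp hmem] at hyN
        exact hNv hyN
    exact hyR (Finset.mem_union_left _ this)
  have hyC : y ∈ C := (mem_unc.mp hyN).1
  have hycovM : ∃ e ∈ M, y ∈ e := by
    by_contra hnc
    push_neg at hnc
    exact hyM (mem_unc.mpr ⟨hyC, fun e he hy => hnc e he hy⟩)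
  have hyuncN : ∀ e ∈ N, y ∉ e := (mem_unc.mp hyN).2
  -- involutions
  have hMp := hMm.1.1.2
  have hMnd : ∀ e ∈ M, ¬ e.IsDiag := fun e he => hE e (hMm.1.1.1 e he)
  have hNp := hNIn.1.2
  have hNnd : ∀ e ∈ N, ¬ e.IsDiag := fun e he => hE e (hNIn.1.1 e he)
  have hmInv : Function.Involutive (pf M) := pf_invol hMp hMnd
  have hnInv : Function.Involutive (pf N) := pf_invol hNp hNnd
  have hyfix : pf N y = y := pf_eq_of_uncov (by rintro ⟨e, he, hy⟩; exact hyuncN e he hy)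
  have htfix : pf N t = t := pf_eq_of_uncov (by rintro ⟨e, he, ht⟩; exact hNt e he ht)
  -- the alternating walk
  have hstop := wp_exists_stop hmInv hnInv hyfix
  set K := Nat.find hstop with hKdef
  have hK : wp (pf M) (pf N) y (K+1) = wp (pf M) (pf N) y K := Nat.find_spec hstop
  have hKmin : ∀ k, k < K → wp (pf M) (pf N) y (k+1) ≠ wp (pf M) (pf N) y k :=
    fun k hk => Nat.find_min hstop hk
  have hinj : ∀ a b, a < b → b ≤ K →
      wp (pf M) (pf N) y a ≠ wp (pf M) (pf N) y b := by
    intro a b hab hbK hcol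
    refine wp_noDup hmInv hnInv hyfix (b - a) a (by omega)
      (fun k hk => hKmin k (by omega)) ?_
    rw [show a + (b - a) = b by omega]
    exact hcol
  have hp0 : wp (pf M) (pf N) y 0 = y := rfl
  have hK1 : 1 ≤ K := by
    rcases Nat.eq_zero_or_pos K with h0 | h1
    · exfalso
      rw [h0] at hK
      have h2 : wp (pf M) (pf N) y 1 = pf M y := by
        rw [wp_even_succ (by simp), hp0]
      rw [h2, hp0] at hK
      exact pf_ne_of_cov hMnd hycovM hK
    · exact h1
  -- edge membership facts
  have hedgeM : ∀ i, i < K → Even i →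
      s(wp (pf M) (pf N) y i, wp (pf M) (pf N) y (i+1)) ∈ M ∧
      s(wp (pf M) (pf N) y i, wp (pf M) (pf N) y (i+1)) ∉ N := by
    intro i hi hieven
    have hsucc : wp (pf M) (pf N) y (i+1) = pf M (wp (pf M) (pf N) y i) :=
      wp_even_succ hieven
    have hne : wp (pf M) (pf N) y (i+1) ≠ wp (pf M) (pf N) y i := hKmin i hi
    constructor
    · rw [hsucc]
      exact pf_mem_of_ne hMp (by rw [← hsucc]; exact hne)
    · intro hmemN
      have h1 := pf_edge_eq hNp hmemN (Sym2.mem_mk_left _ _)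
      have h2 : wp (pf M) (pf N) y (i+1) = pf N (wp (pf M) (pf N) y i) :=
        (Sym2.congr_right.mp h1)
      rcases Nat.eq_zero_or_pos i with rfl | hipos
      · rw [hp0, hyfix, ← hp0] at h2
        exact hKmin 0 hi h2
      · have hioddpred : ¬ Even (i - 1) := by
          obtain ⟨j, hj⟩ := hieven; rintro ⟨l, hl⟩; omega
        have h3 : wp (pf M) (pf N) y (i - 1 + 1) = pf N (wp (pf M) (pf N) y (i-1)) :=
          wp_odd_succ hioddpred
        rw [show i - 1 + 1 = i by omega] at h3
        have h4 : pf N (wp (pf M) (pf N) y i) = wp (pf M) (pf N) y (i-1) := by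
          rw [h3, hnInv]
        rw [h4] at h2
        exact hinj (i-1) (i+1) (by omega) (by omega) h2.symm
  have hedgeN : ∀ i, i < K → ¬ Even i →
      s(wp (pf M) (pf N) y i, wp (pf M) (pf N) y (i+1)) ∈ N ∧
      s(wp (pf M) (pf N) y i, wp (pf M) (pf N) y (i+1)) ∉ M := by
    intro i hi hiodd
    have hsucc : wp (pf M) (pf N) y (i+1) = pf N (wp (pf M) (pf N) y i) :=
      wp_odd_succ hiodd
    have hne : wp (pf M) (pf N) y (i+1) ≠ wp (pf M) (pf N) y i := hKmin i hi
    constructor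
    · rw [hsucc]
      exact pf_mem_of_ne hNp (by rw [← hsucc]; exact hne)
    · intro hmemM
      have h1 := pf_edge_eq hMp hmemM (Sym2.mem_mk_left _ _)
      have h2 : wp (pf M) (pf N) y (i+1) = pf M (wp (pf M) (pf N) y i) :=
        (Sym2.congr_right.mp h1)
      have hipos : 1 ≤ i := by
        rcases Nat.eq_zero_or_pos i with rfl | h
        · exact absurd (by simp) hiodd
        · exact h
      have hievenpred : Even (i - 1) := by
        rcases Nat.even_or_odd i with h | h
        · exact absurd h hiodd
        · obtain ⟨j, rfl⟩ := h; exact ⟨j, by omega⟩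
      have h3 : wp (pf M) (pf N) y (i - 1 + 1) = pf M (wp (pf M) (pf N) y (i-1)) :=
        wp_even_succ hievenpred
      rw [show i - 1 + 1 = i by omega] at h3
      have h4 : pf M (wp (pf M) (pf N) y i) = wp (pf M) (pf N) y (i-1) := by
        rw [h3, hmInv]
      rw [h4] at h2
      exact hinj (i-1) (i+1) (by omega) (by omega) h2.symm
  -- edges of the path
  set eFun : ℕ → Sym2 α := fun i => s(wp (pf M) (pf N) y i, wp (pf M) (pf N) y (i+1))
    with heFun
  have hefInj : ∀ i ∈ Finset.range K, ∀ j ∈ Finset.range K, eFun i = eFun j → i = j := by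
    intro i hi j hj hij
    rw [Finset.mem_range] at hi hj
    by_contra hne
    rcases Sym2.eq_iff.mp hij with ⟨h1, _⟩ | ⟨h1, h2⟩
    · rcases Nat.lt_or_ge i j with h | h
      · exact hinj i j h (by omega) h1
      · exact hinj j i (by omega) (by omega) h1.symm
    · rcases Nat.lt_or_ge i j with h | h
      · exact hinj i (j+1) (by omega) (by omega) h1
      · exact hinj j (i+1) (by omega) (by omega) h2.symm
  set Pm := ((Finset.range K).filter (fun i => Even i)).image eFun with hPm
  set Pn := ((Finset.range K).filter (fun i => ¬ Even i)).image eFun with hPn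
  have hPmcard : Pm.card = (K+1)/2 := by
    rw [hPm, Finset.card_image_of_injOn
      (fun i hi j hj => hefInj i (Finset.mem_of_mem_filter i hi) j
        (Finset.mem_of_mem_filter j hj))]
    exact (card_even_range K).1
  have hPncard : Pn.card = K/2 := by
    rw [hPn, Finset.card_image_of_injOn
      (fun i hi j hj => hefInj i (Finset.mem_of_mem_filter i hi) j
        (Finset.mem_of_mem_filter j hj))]
    exact (card_even_range K).2
  have hPmM : Pm ⊆ M := by
    intro e he
    obtain ⟨i, hi, rfl⟩ := Finset.mem_image.mp he
    rw [Finset.mem_filter, Finset.mem_range] at hi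
    exact (hedgeM i hi.1 hi.2).1
  have hPmN : ∀ e ∈ Pm, e ∉ N := by
    intro e he
    obtain ⟨i, hi, rfl⟩ := Finset.mem_image.mp he
    rw [Finset.mem_filter, Finset.mem_range] at hi
    exact (hedgeM i hi.1 hi.2).2
  have hPnN : Pn ⊆ N := by
    intro e he
    obtain ⟨i, hi, rfl⟩ := Finset.mem_image.mp he
    rw [Finset.mem_filter, Finset.mem_range] at hi
    exact (hedgeN i hi.1 hi.2).1
  have hPnM : ∀ e ∈ Pn, e ∉ M := by
    intro e he
    obtain ⟨i, hi, rfl⟩ := Finset.mem_image.mp he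
    rw [Finset.mem_filter, Finset.mem_range] at hi
    exact (hedgeN i hi.1 hi.2).2
  -- N-edges outside the path avoid all path vertices
  have hA : ∀ f ∈ N, f ∉ Pn → ∀ i, i ≤ K → wp (pf M) (pf N) y i ∉ f := by
    intro f hf hfPn i hiK hmem
    have hfeq := pf_edge_eq hNp hf hmem
    rcases Nat.eq_zero_or_pos i with rfl | hipos
    · rw [hp0, hyfix] at hfeq
      exact hNnd f hf (by rw [hfeq]; simp)
    · rcases Nat.even_or_odd i with hie | hio
      · -- i even ≥ 2 : pf N (p i) = p (i-1), f = eFun (i-1) ∈ Pn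
        have hpred : ¬ Even (i - 1) := by
          obtain ⟨j, hj⟩ := hie; rintro ⟨l, hl⟩; omega
        have h3 : wp (pf M) (pf N) y (i - 1 + 1) = pf N (wp (pf M) (pf N) y (i-1)) :=
          wp_odd_succ hpred
        rw [show i - 1 + 1 = i by omega] at h3
        have h4 : pf N (wp (pf M) (pf N) y i) = wp (pf M) (pf N) y (i-1) := by
          rw [h3, hnInv]
        rw [h4] at hfeq
        have : f = eFun (i-1) := by
          rw [heFun]
          simp only []
          rw [show i - 1 + 1 = i by omega, hfeq]
          exact Sym2.eq_swap
        apply hfPn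
        rw [this, hPn]
        exact Finset.mem_image_of_mem _ (Finset.mem_filter.mpr
          ⟨Finset.mem_range.mpr (by omega), hpred⟩)
      · -- i odd
        rcases Nat.lt_or_ge i K with hiK' | hiK'
        · have h3 : wp (pf M) (pf N) y (i+1) = pf N (wp (pf M) (pf N) y i) :=
            wp_odd_succ (by obtain ⟨j, hj⟩ := hio; rintro ⟨l, hl⟩; omega)
          rw [← h3] at hfeq
          have : f = eFun i := hfeq
          apply hfPn
          rw [this, hPn]
          refine Finset.mem_image_of_mem _ (Finset.mem_filter.mpr
            ⟨Finset.mem_range.mpr hiK', ?_⟩)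
          obtain ⟨j, hj⟩ := hio; rintro ⟨l, hl⟩; omega
        · -- i = K odd : pf N (p K) = p K, f diagonal
          have hieq : i = K := by omega
          subst hieq
          have h3 : wp (pf M) (pf N) y (K+1) = pf N (wp (pf M) (pf N) y K) :=
            wp_odd_succ (by obtain ⟨j, hj⟩ := hio; rintro ⟨l, hl⟩; omega)
          rw [hK] at h3
          rw [← h3] at hfeq
          exact hNnd f hf (by rw [hfeq]; simp)
  -- flip
  set N' := (N \ Pn) ∪ Pm with hN'
  have hN'in : MIn E C N' := by
    refine ⟨⟨?_, ?_⟩, ?_⟩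
    · intro e he
      rcases Finset.mem_union.mp he with h | h
      · exact hNIn.1.1 e (Finset.mem_sdiff.mp h).1
      · exact hMm.1.1.1 e (hPmM h)
    · intro e he f hf hef w hw
      have key : ∀ g ∈ Pm, ∀ g' ∈ Pm, g ≠ g' → ∀ w', ¬ (w' ∈ g ∧ w' ∈ g') := by
        intro g hg g' hg' hgg' w' hw'
        obtain ⟨i, hi, rfl⟩ := Finset.mem_image.mp hg
        obtain ⟨j, hj, rfl⟩ := Finset.mem_image.mp hg'
        rw [Finset.mem_filter, Finset.mem_range] at hi hj
        have hij : i ≠ j := fun h => hgg' (by rw [h])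
        have hw1 : w' = wp (pf M) (pf N) y i ∨ w' = wp (pf M) (pf N) y (i+1) :=
          Sym2.mem_iff.mp hw'.1
        have hw2 : w' = wp (pf M) (pf N) y j ∨ w' = wp (pf M) (pf N) y (j+1) :=
          Sym2.mem_iff.mp hw'.2
        have hparm : ∀ a b : ℕ, a ≤ K → b ≤ K → a ≠ b →
            wp (pf M) (pf N) y a ≠ wp (pf M) (pf N) y b := by
          intro a b ha hb hab hcol
          rcases Nat.lt_or_ge a b with h | h
          · exact hinj a b h hb hcol
          · exact hinj b a (by omega) ha hcol.symm
        obtain ⟨ji, hji⟩ := hi.2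
        obtain ⟨jj, hjj⟩ := hj.2
        rcases hw1 with rfl | rfl <;> rcases hw2 with h2 | h2
        · exact hparm i j (by omega) (by omega) hij h2
        · exact hparm i (j+1) (by omega) (by omega) (by omega) h2
        · exact hparm (i+1) j (by omega) (by omega) (by omega) h2
        · exact hparm (i+1) (j+1) (by omega) (by omega) (by omega) h2
      rcases Finset.mem_union.mp he with h1 | h1 <;> rcases Finset.mem_union.mp hf with h2 | h2
      · exact hNp e (Finset.mem_sdiff.mp h1).1 f (Finset.mem_sdiff.mp h2).1 hef w hw
      · obtain ⟨i, hi, rfl⟩ := Finset.mem_image.mp h2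
        rw [Finset.mem_filter, Finset.mem_range] at hi
        rcases Sym2.mem_iff.mp hw.2 with h3 | h3
        · exact hA e (Finset.mem_sdiff.mp h1).1 (Finset.mem_sdiff.mp h1).2 i (by omega)
            (h3 ▸ hw.1)
        · exact hA e (Finset.mem_sdiff.mp h1).1 (Finset.mem_sdiff.mp h1).2 (i+1) (by omega)
            (h3 ▸ hw.1)
      · obtain ⟨i, hi, rfl⟩ := Finset.mem_image.mp h1
        rw [Finset.mem_filter, Finset.mem_range] at hi
        rcases Sym2.mem_iff.mp hw.1 with h3 | h3
        · exact hA f (Finset.mem_sdiff.mp h2).1 (Finset.mem_sdiff.mp h2).2 i (by omega)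
            (h3 ▸ hw.2)
        · exact hA f (Finset.mem_sdiff.mp h2).1 (Finset.mem_sdiff.mp h2).2 (i+1) (by omega)
            (h3 ▸ hw.2)
      · exact key e h1 f h2 hef w hw
    · intro e he w hw
      rcases Finset.mem_union.mp he with h | h
      · exact hNIn.2 e (Finset.mem_sdiff.mp h).1 w hw
      · exact hMm.1.2 e (hPmM h) w hw
  have hdisjU : Disjoint (N \ Pn) Pm := by
    rw [Finset.disjoint_left]
    intro e he hePm
    exact hPmN e hePm (Finset.mem_sdiff.mp he).1
  have hN'card : N'.card = N.card - K/2 + (K+1)/2 := by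
    rw [hN', Finset.card_union_of_disjoint hdisjU, Finset.card_sdiff_of_subset hPnN, hPncard, hPmcard]
  have hPnle : Pn.card ≤ N.card := Finset.card_le_card hPnN
  by_cases hKeven : Even K
  · -- K even : flip to get a maximum matching missing t with larger intersection with M
    have hKge2 : 2 ≤ K := by
      rcases hKeven with ⟨j, hj⟩
      omega
    have hN'c : N'.card = nu E C := by
      rcases hKeven with ⟨j, hj⟩
      rw [hN'card, hNc]
      rw [hPncard] at hPnle
      omega
    -- t is not on the path
    have hB : ∀ i, i ≤ K → wp (pf M) (pf N) y i ≠ t := by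
      intro i hiK
      rcases Nat.eq_zero_or_pos i with rfl | hipos
      · rw [hp0]; exact hyt
      · rcases Nat.even_or_odd i with hie | hio
        · have hpred : ¬ Even (i - 1) := by
            obtain ⟨j, hj⟩ := hie; rintro ⟨l, hl⟩; omega
          have h3 : wp (pf M) (pf N) y (i - 1 + 1) = pf N (wp (pf M) (pf N) y (i-1)) :=
            wp_odd_succ hpred
          rw [show i - 1 + 1 = i by omega] at h3
          intro hcol
          rw [hcol] at h3
          have h4 : pf N t = wp (pf M) (pf N) y (i-1) := by rw [h3, hnInv]
          rw [htfix] at h4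
          exact hinj (i-1) i (by omega) hiK (by rw [← h4]; exact hcol.symm)
        · have hiK' : i < K := by
            rcases Nat.lt_or_ge i K with h | h
            · exact h
            · exfalso
              have : i = K := by omega
              subst this
              obtain ⟨j, hj⟩ := hio
              obtain ⟨l, hl⟩ := hKeven
              omega
          have h3 : wp (pf M) (pf N) y (i+1) = pf N (wp (pf M) (pf N) y i) :=
            wp_odd_succ (by obtain ⟨j, hj⟩ := hio; rintro ⟨l, hl⟩; omega)
          intro hcol
          rw [hcol, htfix, ← hcol] at h3
          exact hKmin i hiK' h3
    have hN't : ∀ e ∈ N', t ∉ e := by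
      intro e he ht
      rcases Finset.mem_union.mp he with h | h
      · exact hNt e (Finset.mem_sdiff.mp h).1 ht
      · obtain ⟨i, hi, rfl⟩ := Finset.mem_image.mp h
        rw [Finset.mem_filter, Finset.mem_range] at hi
        rcases Sym2.mem_iff.mp ht with h3 | h3
        · exact hB i (by omega) h3.symm
        · exact hB (i+1) (by omega) h3.symm
    have hN'NS : N' ∈ NS := Finset.mem_filter.mpr ⟨(mem_mfs E).mpr hN'in, hN'c, hN't⟩
    have hMN' : M ∩ N' = (M ∩ N) ∪ Pm := by
      rw [hN']
      ext e
      simp only [Finset.mem_inter, Finset.mem_union, Finset.mem_sdiff]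
      constructor
      · rintro ⟨heM, h | h⟩
        · exact Or.inl ⟨heM, h.1⟩
        · exact Or.inr h
      · rintro (⟨heM, heN⟩ | h)
        · exact ⟨heM, Or.inl ⟨heN, fun hPn' => hPnM e hPn' heM⟩⟩
        · exact ⟨hPmM h, Or.inr h⟩
    have hdisj2 : Disjoint (M ∩ N) Pm := by
      rw [Finset.disjoint_left]
      intro e he hePm
      exact hPmN e hePm (Finset.mem_inter.mp he).2
    have hMN'card : (M ∩ N').card = (M ∩ N).card + Pm.card := by
      rw [hMN', Finset.card_union_of_disjoint hdisj2]
    have hPmpos : 1 ≤ Pm.card := by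
      rw [hPmcard]
      omega
    have := hNmax N' hN'NS
    omega
  · -- K odd : flip to get a strictly larger matching, contradiction
    have hN'c : N'.card = nu E C + 1 := by
      rcases Nat.even_or_odd K with h | h
      · exact absurd h hKeven
      · rcases h with ⟨j, hj⟩
        rw [hN'card, hNc]
        rw [hPncard] at hPnle
        omega
    have := card_le_nu E hN'in
    omega

end GallaiMain


section BT

variable {α : Type*} [Fintype α] [DecidableEq α]

attribute [local instance] Classical.propDecidable

lemma nu_union_ge (E : Multiset (Sym2 α)) (X Y : Finset α) (hdisj : Disjoint X Y) :
    nu E X + nu E Y ≤ nu E (X ∪ Y) := by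
  obtain ⟨Mx, hMx, hMxc⟩ := exists_nu E X
  obtain ⟨My, hMy, hMyc⟩ := exists_nu E Y
  have hMdisj : Disjoint Mx My := by
    rw [Finset.disjoint_left]
    intro e heX heY
    induction e using Sym2.ind with
    | _ a b =>
      have haX : a ∈ X := hMx.2 _ heX a (Sym2.mem_mk_left _ _)
      have haY : a ∈ Y := hMy.2 _ heY a (Sym2.mem_mk_left _ _)
      exact (Finset.disjoint_left.mp hdisj haX) haY
  have hun : MIn E (X ∪ Y) (Mx ∪ My) := by
    refine ⟨⟨?_, ?_⟩, ?_⟩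
    · intro e he
      rcases Finset.mem_union.mp he with h | h
      · exact hMx.1.1 e h
      · exact hMy.1.1 e h
    · intro e he f hf hef w hw
      rcases Finset.mem_union.mp he with h1 | h1 <;> rcases Finset.mem_union.mp hf with h2 | h2
      · exact hMx.1.2 e h1 f h2 hef w hw
      · have hwX : w ∈ X := hMx.2 e h1 w hw.1
        have hwY : w ∈ Y := hMy.2 f h2 w hw.2
        exact (Finset.disjoint_left.mp hdisj hwX) hwY
      · have hwX : w ∈ X := hMx.2 f h2 w hw.2
        have hwY : w ∈ Y := hMy.2 e h1 w hw.1
        exact (Finset.disjoint_left.mp hdisj hwX) hwY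
      · exact hMy.1.2 e h1 f h2 hef w hw
    · intro e he w hw
      rcases Finset.mem_union.mp he with h | h
      · exact Finset.mem_union_left _ (hMx.2 e h w hw)
      · exact Finset.mem_union_right _ (hMy.2 e h w hw)
  have := card_le_nu E hun
  rw [Finset.card_union_of_disjoint hMdisj] at this
  omega

lemma nu_split (E : Multiset (Sym2 α)) (X Y : Finset α)
    (h : ∀ e ∈ E, (∀ v ∈ e, v ∈ X ∪ Y) → ((∀ v ∈ e, v ∈ X) ∨ (∀ v ∈ e, v ∈ Y))) :
    nu E (X ∪ Y) ≤ nu E X + nu E Y := by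
  obtain ⟨W, hW, hWc⟩ := exists_nu E (X ∪ Y)
  set Wx := W.filter (fun e => ∀ v ∈ e, v ∈ X) with hWx
  set Wy := W.filter (fun e => ¬ ∀ v ∈ e, v ∈ X) with hWy
  have hWxIn : MIn E X Wx := by
    refine ⟨⟨fun e he => hW.1.1 e (Finset.mem_of_mem_filter e he), ?_⟩, ?_⟩
    · intro e he f hf hef w hw
      exact hW.1.2 e (Finset.mem_of_mem_filter e he) f (Finset.mem_of_mem_filter f hf) hef w hw
    · intro e he w hw
      exact (Finset.mem_filter.mp he).2 w hw
  have hWyIn : MIn E Y Wy := by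
    refine ⟨⟨fun e he => hW.1.1 e (Finset.mem_of_mem_filter e he), ?_⟩, ?_⟩
    · intro e he f hf hef w hw
      exact hW.1.2 e (Finset.mem_of_mem_filter e he) f (Finset.mem_of_mem_filter f hf) hef w hw
    · intro e he w hw
      have heW := Finset.mem_of_mem_filter e he
      have hnotX := (Finset.mem_filter.mp he).2
      rcases h e (hW.1.1 e heW) (fun v hv => hW.2 e heW v hv) with hX | hY
      · exact absurd hX hnotX
      · exact hY w hw
  have hsplit : Wx.card + Wy.card = W.card :=
    Finset.card_filter_add_card_filter_not _
  have h1 := card_le_nu E hWxIn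
  have h2 := card_le_nu E hWyIn
  omega

lemma sum_nu_le (E : Multiset (Sym2 α)) (𝒞 : Finset (Finset α))
    (hdisj : ∀ C ∈ 𝒞, ∀ C' ∈ 𝒞, C ≠ C' → Disjoint C C') :
    ∑ C ∈ 𝒞, nu E C ≤ nu E (𝒞.biUnion id) := by
  induction 𝒞 using Finset.induction with
  | empty => simp
  | @insert C 𝒞 hC ih =>
    rw [Finset.sum_insert hC, Finset.biUnion_insert]
    have h1 : Disjoint (C : Finset α) (𝒞.biUnion id) := by
      rw [Finset.disjoint_biUnion_right]
      intro C' hC'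
      exact hdisj C (Finset.mem_insert_self _ _) C' (Finset.mem_insert_of_mem hC')
        (fun h => hC (h ▸ hC'))
    calc nu E C + ∑ C' ∈ 𝒞, nu E C'
        ≤ nu E C + nu E (𝒞.biUnion id) := by
          have := ih (fun C1 h1' C2 h2' hne =>
            hdisj C1 (Finset.mem_insert_of_mem h1') C2 (Finset.mem_insert_of_mem h2') hne)
          omega
      _ ≤ nu E (C ∪ 𝒞.biUnion id) := nu_union_ge E _ _ h1
  
lemma edge_in_comp (E : Multiset (Sym2 α)) {B : Finset α} {C : Finset α} (hC : C ∈ CS E B) :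
    ∀ e ∈ E, (∀ v ∈ e, v ∈ C ∪ (B \ C)) → ((∀ v ∈ e, v ∈ C) ∨ (∀ v ∈ e, v ∈ B \ C)) := by
  intro e heE hsub
  induction e using Sym2.ind with
  | _ a b =>
    have ha := hsub a (Sym2.mem_mk_left _ _)
    have hb := hsub b (Sym2.mem_mk_right _ _)
    have haB : a ∈ B := by
      rcases Finset.mem_union.mp ha with h | h
      · obtain ⟨w, _, rfl⟩ := CS_spec E hC; exact comp_subset E h
      · exact (Finset.mem_sdiff.mp h).1
    have hbB : b ∈ B := by
      rcases Finset.mem_union.mp hb with h | h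
      · obtain ⟨w, _, rfl⟩ := CS_spec E hC; exact comp_subset E h
      · exact (Finset.mem_sdiff.mp h).1
    by_cases hab : a = b
    · subst hab
      rcases Finset.mem_union.mp ha with h | h
      · left; intro v hv; rcases Sym2.mem_iff.mp hv with rfl | rfl <;> exact h
      · right; intro v hv; rcases Sym2.mem_iff.mp hv with rfl | rfl <;> exact h
    · have hadj : AdjB E B a b :=
        ⟨haB, hbB, ⟨s(a,b), heE, Sym2.mem_mk_left _ _, Sym2.mem_mk_right _ _, hab⟩⟩
      by_cases haC : a ∈ C
      · left
        have : b ∈ C := by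
          have h1 : comp E B a = C := comp_eq_comp_of_mem_CS E hC haC
          rw [← h1]
          exact comp_closed_adj E (mem_comp_self E haB) hadj
        intro v hv; rcases Sym2.mem_iff.mp hv with rfl | rfl
        · exact haC
        · exact this
      · right
        have hbC : b ∉ C := by
          intro hbC
          have h1 : comp E B b = C := comp_eq_comp_of_mem_CS E hC hbC
          apply haC
          rw [← h1]
          exact comp_closed_adj E (mem_comp_self E hbB) (AdjB_symm E B hadj)
        intro v hv; rcases Sym2.mem_iff.mp hv with rfl | rfl
        · exact Finset.mem_sdiff.mpr ⟨haB, haC⟩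
        · exact Finset.mem_sdiff.mpr ⟨hbB, hbC⟩

lemma comp_conn (E : Multiset (Sym2 α)) {B : Finset α} {C : Finset α} (hC : C ∈ CS E B) :
    ∀ u v, u ∈ C → v ∈ C → Relation.ReflTransGen (AdjB E C) u v := by
  have key : ∀ x y, Relation.ReflTransGen (AdjB E B) x y → x ∈ C →
      y ∈ C ∧ Relation.ReflTransGen (AdjB E C) x y := by
    intro x y hxy hx
    induction hxy with
    | refl => exact ⟨hx, Relation.ReflTransGen.refl⟩
    | @tail z w hxz hady ih =>
      obtain ⟨hzC, hrtg⟩ := ih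
      have hwC : w ∈ C := by
        rw [← comp_eq_comp_of_mem_CS E hC hzC]
        exact comp_closed_adj E (mem_comp_self E hady.1) hady
      exact ⟨hwC, hrtg.tail ⟨hzC, hwC, hady.2.2⟩⟩
  intro u v hu hv
  obtain ⟨w, hw, rfl⟩ := CS_spec E hC
  have h1 : Relation.ReflTransGen (AdjB E B) u v :=
    (reach_symm E ((mem_comp E).mp hu).2).trans ((mem_comp E).mp hv).2
  exact (key u v h1 hu).2

theorem bt (E : Multiset (Sym2 α)) (hE : ∀ e ∈ E, ¬ e.IsDiag) :
    ∀ A : Finset α, ∃ S, S ⊆ A ∧ A.card + S.card ≤ 2 * nu E A + nOdd E (A \ S) := by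
  intro A
  induction A using Finset.strongInduction with
  | _ A ih =>
    by_cases hcase : ∃ v ∈ A, nu E (A.erase v) + 1 ≤ nu E A
    · obtain ⟨v, hv, hnu⟩ := hcase
      obtain ⟨S', hS'sub, hS'ineq⟩ := ih (A.erase v) (Finset.erase_ssubset hv)
      refine ⟨insert v S', ?_, ?_⟩
      · intro w hw
        rcases Finset.mem_insert.mp hw with rfl | hw
        · exact hv
        · exact Finset.mem_of_mem_erase (hS'sub hw)
      · have hvS' : v ∉ S' := fun h => Finset.notMem_erase v A (hS'sub h)
        have hsd : A \ insert v S' = (A.erase v) \ S' := by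
          ext w
          simp only [Finset.mem_sdiff, Finset.mem_insert, Finset.mem_erase, not_or]
          tauto
        rw [hsd, Finset.card_insert_of_notMem hvS']
        have hce : (A.erase v).card = A.card - 1 := Finset.card_erase_of_mem hv
        have hA1 : 1 ≤ A.card := Finset.card_pos.mpr ⟨v, hv⟩
        omega
    · push_neg at hcase
      have hA2 : ∀ v ∈ A, nu E A ≤ nu E (A.erase v) := fun v hv => by
        have := hcase v hv; omega
      refine ⟨∅, Finset.empty_subset _, ?_⟩
      rw [Finset.sdiff_empty, Finset.card_empty]
      -- per-component bound
      have hcomp : ∀ C ∈ CS E A, C.card ≤ 2 * nu E C + (if Odd C.card then 1 else 0) := by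
        intro C hC
        have hCsub : C ⊆ A := by
          obtain ⟨w, hw, rfl⟩ := CS_spec E hC; exact comp_subset E
        have herase : ∀ v ∈ C, nu E C ≤ nu E (C.erase v) := by
          intro v hvC
          have hXY : C ∪ (A \ C) = A := Finset.union_sdiff_of_subset hCsub
          have hXY' : (C.erase v) ∪ (A \ C) = A.erase v := by
            ext w
            simp only [Finset.mem_union, Finset.mem_erase, Finset.mem_sdiff]
            constructor
            · rintro (⟨hne, hw⟩ | ⟨hw, hnC⟩)
              · exact ⟨hne, hCsub hw⟩
              · exact ⟨fun h => hnC (h ▸ hvC), hw⟩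
            · rintro ⟨hne, hw⟩
              by_cases hwC : w ∈ C
              · exact Or.inl ⟨hne, hwC⟩
              · exact Or.inr ⟨hw, hwC⟩
          have h1 : nu E A ≤ nu E (C.erase v) + nu E (A \ C) := by
            calc nu E A ≤ nu E (A.erase v) := hA2 v (hCsub hvC)
                _ = nu E ((C.erase v) ∪ (A \ C)) := by rw [hXY']
                _ ≤ nu E (C.erase v) + nu E (A \ C) := by
                    apply nu_split
                    intro e heE hsub
                    have hsub' : ∀ w ∈ e, w ∈ C ∪ (A \ C) := by
                      intro w hw
                      rcases Finset.mem_union.mp (hsub w hw) with h | h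
                      · exact Finset.mem_union_left _ (Finset.mem_of_mem_erase h)
                      · exact Finset.mem_union_right _ h
                    rcases edge_in_comp E hC e heE hsub' with hL | hR
                    · left
                      intro w hw
                      have hwC := hL w hw
                      rcases Finset.mem_union.mp (hsub w hw) with h | h
                      · exact h
                      · exact absurd hwC (Finset.mem_sdiff.mp h).2
                    · right; exact hR
          have h2 : nu E C + nu E (A \ C) ≤ nu E A := by
            have := nu_union_ge E C (A \ C) Finset.disjoint_sdiff
            rwa [hXY] at this
          omega
        have hg := gallai E hE C (comp_conn E hC) herase
        by_cases hodd : Odd C.card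
        · rw [if_pos hodd]; exact hg
        · rw [if_neg hodd]
          rcases Nat.even_or_odd C.card with he | ho
          · obtain ⟨l, hl⟩ := he
            omega
          · exact absurd ho hodd
      have hsum : ∑ C ∈ CS E A, C.card ≤ 2 * (∑ C ∈ CS E A, nu E C) + nOdd E A := by
        have h1 : ∑ C ∈ CS E A, C.card ≤
            ∑ C ∈ CS E A, (2 * nu E C + (if Odd C.card then 1 else 0)) :=
          Finset.sum_le_sum hcomp
        rw [Finset.sum_add_distrib, ← Finset.mul_sum] at h1
        have h2 : ∑ C ∈ CS E A, (if Odd C.card then 1 else 0) = nOdd E A := by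
          rw [nOdd]
          exact (Finset.card_filter _ _).symm
        omega
      have hnuA : ∑ C ∈ CS E A, nu E C ≤ nu E A := by
        have := sum_nu_le E (CS E A) (fun C hC C' hC' hne => CS_disjoint E hC hC' hne)
        rw [CS_biUnion] at this
        exact this
      have hAcard := sum_card_CS E (B := A)
      omega

end BT


section Counting1

variable {α : Type*} [Fintype α] [DecidableEq α]

attribute [local instance] Classical.propDecidable

/-- all vertices of the edge in `T` -/
def inb (T : Finset α) (e : Sym2 α) : Prop := ∀ v ∈ e, v ∈ T

/-- edge crossing `T` : a vertex in `T` and a vertex outside -/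
def xr (T : Finset α) (e : Sym2 α) : Prop := (∃ v ∈ e, v ∈ T) ∧ ¬ inb T e

def deg (E : Multiset (Sym2 α)) (v : α) : ℕ := Multiset.countP (fun e => v ∈ e) E

lemma inb_iff {T : Finset α} {a b : α} : inb T s(a, b) ↔ a ∈ T ∧ b ∈ T := by
  constructor
  · intro h
    exact ⟨h a (Sym2.mem_mk_left _ _), h b (Sym2.mem_mk_right _ _)⟩
  · rintro ⟨h1, h2⟩ v hv
    rcases Sym2.mem_iff.mp hv with rfl | rfl
    · exact h1
    · exact h2

lemma countP_eq_sum_map (p : Sym2 α → Prop) (E : Multiset (Sym2 α)) :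
    Multiset.countP p E = (E.map (fun e => if p e then 1 else 0)).sum := by
  induction E using Multiset.induction with
  | empty => simp
  | cons e E ih =>
    rw [Multiset.countP_cons, Multiset.map_cons, Multiset.sum_cons, ih]
    omega

lemma sum_deg (E : Multiset (Sym2 α)) (T : Finset α) :
    ∑ v ∈ T, deg E v = (E.map (fun e => (T.filter (· ∈ e)).card)).sum := by
  induction E using Multiset.induction with
  | empty => simp [deg]
  | cons e E ih =>
    simp only [deg, Multiset.countP_cons, Multiset.map_cons, Multiset.sum_cons] at *
    rw [Finset.sum_add_distrib, ih]
    have : ∑ v ∈ T, (if v ∈ e then 1 else 0) = (T.filter (· ∈ e)).card :=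
      (Finset.card_filter _ _).symm
    omega

lemma local_count {T : Finset α} {a b : α} (hab : a ≠ b) :
    (T.filter (· ∈ s(a, b))).card =
      (if inb T s(a, b) then 2 else 0) + (if xr T s(a, b) then 1 else 0) := by
  have hfil : T.filter (· ∈ s(a, b)) = T ∩ {a, b} := by
    ext v
    simp [Sym2.mem_iff, Finset.mem_inter]
  rw [hfil]
  have hxr : xr T s(a, b) ↔ ((a ∈ T ∨ b ∈ T) ∧ ¬ (a ∈ T ∧ b ∈ T)) := by
    rw [xr, inb_iff]
    constructor
    · rintro ⟨⟨v, hv, hvT⟩, h2⟩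
      refine ⟨?_, h2⟩
      rcases Sym2.mem_iff.mp hv with rfl | rfl
      · exact Or.inl hvT
      · exact Or.inr hvT
    · rintro ⟨h1, h2⟩
      refine ⟨?_, h2⟩
      rcases h1 with h | h
      · exact ⟨a, Sym2.mem_mk_left _ _, h⟩
      · exact ⟨b, Sym2.mem_mk_right _ _, h⟩
  by_cases ha : a ∈ T <;> by_cases hb : b ∈ T
  · rw [if_pos (inb_iff.mpr ⟨ha, hb⟩), if_neg (by rw [hxr]; tauto)]
    have : T ∩ {a, b} = {a, b} := by
      rw [Finset.inter_comm, Finset.inter_eq_left]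
      intro v hv
      rcases Finset.mem_insert.mp hv with rfl | hv
      · exact ha
      · rw [Finset.mem_singleton.mp hv]; exact hb
    rw [this, Finset.card_insert_of_notMem (by simpa using hab), Finset.card_singleton]
  · rw [if_neg (by rw [inb_iff]; tauto), if_pos (by rw [hxr]; tauto)]
    have : T ∩ {a, b} = {a} := by
      ext v
      simp only [Finset.mem_inter, Finset.mem_insert, Finset.mem_singleton]
      constructor
      · rintro ⟨hvT, rfl | rfl⟩
        · rfl
        · exact absurd hvT hb
      · rintro rfl; exact ⟨ha, Or.inl rfl⟩
    rw [this, Finset.card_singleton]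
  · rw [if_neg (by rw [inb_iff]; tauto), if_pos (by rw [hxr]; tauto)]
    have : T ∩ {a, b} = {b} := by
      ext v
      simp only [Finset.mem_inter, Finset.mem_insert, Finset.mem_singleton]
      constructor
      · rintro ⟨hvT, rfl | rfl⟩
        · exact absurd hvT ha
        · rfl
      · rintro rfl; exact ⟨hb, Or.inr rfl⟩
    rw [this, Finset.card_singleton]
  · rw [if_neg (by rw [inb_iff]; tauto), if_neg (by rw [hxr]; tauto)]
    have : T ∩ {a, b} = ∅ := by
      ext v
      simp only [Finset.mem_inter, Finset.mem_insert, Finset.mem_singleton,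
        Finset.notMem_empty, iff_false, not_and, not_or]
      rintro hvT
      constructor
      · rintro rfl; exact ha hvT
      · rintro rfl; exact hb hvT
    rw [this, Finset.card_empty]

lemma sum_deg_eq (E : Multiset (Sym2 α)) (hE : ∀ e ∈ E, ¬ e.IsDiag) (T : Finset α) :
    ∑ v ∈ T, deg E v = 2 * Multiset.countP (inb T) E + Multiset.countP (xr T) E := by
  rw [sum_deg]
  have hcong : E.map (fun e => (T.filter (· ∈ e)).card) =
      E.map (fun e => (if inb T e then 2 else 0) + (if xr T e then 1 else 0)) := by
    apply Multiset.map_congr rfl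
    intro e he
    induction e using Sym2.ind with
    | _ a b =>
      have hab : a ≠ b := by
        intro h
        exact hE _ he (by rw [h]; simp)
      exact local_count hab
  rw [hcong, Multiset.sum_map_add]
  have h1 : (E.map (fun e => if inb T e then 2 else 0)).sum =
      2 * Multiset.countP (inb T) E := by
    rw [countP_eq_sum_map]
    have : E.map (fun e => if inb T e then 2 else 0) =
        E.map (fun e => 2 * (if inb T e then 1 else 0)) := by
      apply Multiset.map_congr rfl
      intro e _
      by_cases h : inb T e <;> simp [h]
    rw [this, ← Multiset.sum_map_mul_left]
  have h2 : (E.map (fun e => if xr T e then 1 else 0)).sum = Multiset.countP (xr T) E := by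
    rw [countP_eq_sum_map]
  omega

lemma countP_partition {γ : Type*} [DecidableEq γ] (F : Multiset (Sym2 α)) (𝒞 : Finset γ)
    (pr : γ → Sym2 α → Prop)
    (hdis : ∀ x ∈ F, ∀ C ∈ 𝒞, ∀ C' ∈ 𝒞, C ≠ C' → pr C x → ¬ pr C' x) :
    Multiset.countP (fun x => ∃ C ∈ 𝒞, pr C x) F = ∑ C ∈ 𝒞, Multiset.countP (pr C) F := by
  induction 𝒞 using Finset.induction with
  | empty => simp
  | @insert C 𝒞 hC ih =>
    rw [Finset.sum_insert hC]
    rw [← ih (fun x hx C1 h1 C2 h2 hne =>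
      hdis x hx C1 (Finset.mem_insert_of_mem h1) C2 (Finset.mem_insert_of_mem h2) hne)]
    have key := Multiset.filter_add_filter (pr C) (fun x => ∃ C' ∈ 𝒞, pr C' x) F
    have hand : Multiset.filter (fun x => pr C x ∧ ∃ C' ∈ 𝒞, pr C' x) F = 0 := by
      rw [Multiset.filter_eq_nil]
      rintro x hx ⟨h1, C', hC', h2⟩
      exact hdis x hx C (Finset.mem_insert_self _ _) C' (Finset.mem_insert_of_mem hC')
        (fun h => hC (h ▸ hC')) h1 h2
    have hor : Multiset.filter (fun x => pr C x ∨ ∃ C' ∈ 𝒞, pr C' x) F =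
        Multiset.filter (fun x => ∃ C'' ∈ insert C 𝒞, pr C'' x) F := by
      apply Multiset.filter_congr
      intro x _
      simp only [Finset.mem_insert]
      constructor
      · rintro (h | ⟨C', hC', h⟩)
        · exact ⟨C, Or.inl rfl, h⟩
        · exact ⟨C', Or.inr hC', h⟩
      · rintro ⟨C'', rfl | hC'', h⟩
        · exact Or.inl h
        · exact Or.inr ⟨C'', hC'', h⟩
    have e1 : Multiset.countP (pr C) F = (Multiset.filter (pr C) F).card :=
      (Multiset.countP_eq_card_filter _ _)
    have e2 : Multiset.countP (fun x => ∃ C' ∈ 𝒞, pr C' x) F =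
        (Multiset.filter (fun x => ∃ C' ∈ 𝒞, pr C' x) F).card :=
      (Multiset.countP_eq_card_filter _ _)
    have e3 : Multiset.countP (fun x => ∃ C'' ∈ insert C 𝒞, pr C'' x) F =
        (Multiset.filter (fun x => ∃ C'' ∈ insert C 𝒞, pr C'' x) F).card :=
      (Multiset.countP_eq_card_filter _ _)
    have hcard := congrArg Multiset.card key
    rw [Multiset.card_add, Multiset.card_add, hand, hor] at hcard
    simp only [Multiset.card_zero] at hcard
    omega

end Counting1

section ConnCount

variable {β : Type*} [Fintype β] [DecidableEq β]

attribute [local instance] Classical.propDecidable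

lemma rtg_bot {F : Multiset (Sym2 β)} (hF : F = 0) {u v : β}
    (h : Relation.ReflTransGen (Adj' F) u v) : u = v := by
  induction h with
  | refl => rfl
  | tail _ hadj ih =>
    obtain ⟨e, he, _⟩ := hadj
    rw [hF] at he
    exact absurd he (Multiset.notMem_zero e)

noncomputable def compSetoid (F : Multiset (Sym2 β)) : Setoid β :=
  ⟨Relation.ReflTransGen (Adj' F),
    ⟨fun _ => Relation.ReflTransGen.refl,
     fun h => by haveI : Std.Symm (Adj' F) := ⟨fun _ _ h => Adj'_symm F h⟩; exact Std.Symm.symm _ _ h,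
     fun h1 h2 => h1.trans h2⟩⟩

noncomputable def ncomp (F : Multiset (Sym2 β)) : ℕ := Nat.card (Quotient (compSetoid F))

lemma rtg_cons {e : Sym2 β} {F : Multiset (Sym2 β)} {x y : β} {p q : β} (hpq : e = s(p, q))
    (h : Relation.ReflTransGen (Adj' (e ::ₘ F)) x y) :
    Relation.ReflTransGen (Adj' F) x y ∨
    (Relation.ReflTransGen (Adj' F) x p ∧ Relation.ReflTransGen (Adj' F) q y) ∨
    (Relation.ReflTransGen (Adj' F) x q ∧ Relation.ReflTransGen (Adj' F) p y) := by
  induction h with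
  | refl => exact Or.inl Relation.ReflTransGen.refl
  | @tail z y' hxz hady ih =>
    obtain ⟨f, hf, hz, hy, hne⟩ := hady
    rcases Multiset.mem_cons.mp hf with rfl | hfF
    · have hz' : z = p ∨ z = q := by rw [hpq] at hz; exact Sym2.mem_iff.mp hz
      have hy' : y' = p ∨ y' = q := by rw [hpq] at hy; exact Sym2.mem_iff.mp hy
      rcases hz' with rfl | rfl <;> rcases hy' with h2 | h2
      · exact absurd h2.symm hne
      · subst h2
        rcases ih with h3 | ⟨h3, h4⟩ | ⟨h3, h4⟩
        · exact Or.inr (Or.inl ⟨h3, Relation.ReflTransGen.refl⟩)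
        · exact Or.inr (Or.inl ⟨h3, Relation.ReflTransGen.refl⟩)
        · exact Or.inl h3
      · subst h2
        rcases ih with h3 | ⟨h3, h4⟩ | ⟨h3, h4⟩
        · exact Or.inr (Or.inr ⟨h3, Relation.ReflTransGen.refl⟩)
        · exact Or.inl h3
        · exact Or.inr (Or.inr ⟨h3, Relation.ReflTransGen.refl⟩)
      · exact absurd h2.symm hne
    · have hadj : Adj' F z y' := ⟨f, hfF, hz, hy, hne⟩
      rcases ih with h3 | ⟨h3, h4⟩ | ⟨h3, h4⟩
      · exact Or.inl (h3.tail hadj)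
      · exact Or.inr (Or.inl ⟨h3, h4.tail hadj⟩)
      · exact Or.inr (Or.inr ⟨h3, h4.tail hadj⟩)

lemma ncomp_cons (e : Sym2 β) (F : Multiset (Sym2 β)) :
    ncomp F ≤ ncomp (e ::ₘ F) + 1 := by
  induction e using Sym2.ind with
  | _ p q =>
    set S1 := compSetoid F with hS1
    set S2 := compSetoid (s(p, q) ::ₘ F) with hS2
    have hmono : ∀ {x y : β}, Relation.ReflTransGen (Adj' F) x y →
        Relation.ReflTransGen (Adj' (s(p, q) ::ₘ F)) x y := by
      intro x y h
      refine Relation.ReflTransGen.lift id ?_ _ _ h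
      rintro u v ⟨f, hf, h1, h2, h3⟩
      exact ⟨f, Multiset.mem_cons_of_mem hf, h1, h2, h3⟩
    let φ : Quotient S1 → Quotient S2 :=
      Quotient.map' id (fun x y h => hmono h)
    let ψ : Quotient S1 → Quotient S2 ⊕ Unit := fun c =>
      if c = Quotient.mk S1 q ∧ ¬ (Quotient.mk S1 p = Quotient.mk S1 q)
      then Sum.inr () else Sum.inl (φ c)
    have hinj : Function.Injective ψ := by
      intro c1 c2 h
      by_cases h1 : c1 = Quotient.mk S1 q ∧ ¬ (Quotient.mk S1 p = Quotient.mk S1 q) <;>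
        by_cases h2 : c2 = Quotient.mk S1 q ∧ ¬ (Quotient.mk S1 p = Quotient.mk S1 q)
      · exact h1.1.trans h2.1.symm
      · simp only [ψ, if_pos h1, if_neg h2] at h
        exact absurd h (by simp)
      · simp only [ψ, if_neg h1, if_pos h2] at h
        exact absurd h (by simp)
      · simp only [ψ, if_neg h1, if_neg h2, Sum.inl.injEq] at h
        obtain ⟨x, rfl⟩ := Quotient.exists_rep c1
        obtain ⟨y, rfl⟩ := Quotient.exists_rep c2
        have h3 : Relation.ReflTransGen (Adj' (s(p, q) ::ₘ F)) x y := by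
          have := Quotient.exact' (a := x) (b := y) (by exact h)
          exact this
        rcases rtg_cons rfl h3 with h4 | ⟨h4, h5⟩ | ⟨h4, h5⟩
        · exact Quotient.sound h4
        · have hy : Quotient.mk S1 y = Quotient.mk S1 q :=
            Quotient.sound (by haveI : Std.Symm (Adj' F) := ⟨fun _ _ h => Adj'_symm F h⟩; exact (Std.Symm.symm _ _ h5 : Relation.ReflTransGen (Adj' F) y q))
          have hpq' : Quotient.mk S1 p = Quotient.mk S1 q := by
            by_contra hc
            exact h2 ⟨hy, hc⟩
          have hpq'' : Relation.ReflTransGen (Adj' F) p q := Quotient.exact' hpq'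
          exact Quotient.sound ((h4.trans hpq'').trans h5)
        · have hx : Quotient.mk S1 x = Quotient.mk S1 q := Quotient.sound h4
          have hpq' : Quotient.mk S1 p = Quotient.mk S1 q := by
            by_contra hc
            exact h1 ⟨hx, hc⟩
          have hqp : Relation.ReflTransGen (Adj' F) q p :=
            by haveI : Std.Symm (Adj' F) := ⟨fun _ _ h => Adj'_symm F h⟩; exact Std.Symm.symm _ _ (Quotient.exact' hpq')
          exact Quotient.sound ((h4.trans hqp).trans h5)
    have hcard := Nat.card_le_card_of_injective ψ hinj
    rw [Nat.card_sum] at hcard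
    simp only [Nat.card_unique] at hcard
    exact hcard

lemma card_le_card_add_ncomp (F : Multiset (Sym2 β)) :
    Fintype.card β ≤ Multiset.card F + ncomp F := by
  induction F using Multiset.induction with
  | empty =>
    have hbij : Function.Bijective (Quotient.mk (compSetoid (0 : Multiset (Sym2 β)))) := by
      constructor
      · intro x y h
        exact rtg_bot rfl (Quotient.exact h)
      · exact Quotient.exists_rep
    have := Nat.card_eq_of_bijective _ hbij
    simp only [Multiset.card_zero, Nat.zero_add, ncomp]
    rw [← this, Nat.card_eq_fintype_card]
  | cons e F ih =>
    have h1 := ncomp_cons e F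
    rw [Multiset.card_cons]
    omega

lemma conn_card_le (F : Multiset (Sym2 β))
    (hconn : ∀ u v : β, Relation.ReflTransGen (Adj' F) u v) :
    Fintype.card β ≤ Multiset.card F + 1 := by
  have h := card_le_card_add_ncomp F
  have hsub : Subsingleton (Quotient (compSetoid F)) := by
    constructor
    intro a b
    induction a using Quotient.inductionOn with
    | _ x =>
      induction b using Quotient.inductionOn with
      | _ y => exact Quotient.sound (hconn x y)
  have : ncomp F ≤ 1 := by
    rw [ncomp]
    rcases isEmpty_or_nonempty (Quotient (compSetoid F)) with he | hne
    · simp [Nat.card_of_isEmpty]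
    · haveI := hsub
      rw [Nat.card_of_subsingleton hne.some]
  omega

end ConnCount


section Counting2

variable {α : Type*} [Fintype α] [DecidableEq α]

attribute [local instance] Classical.propDecidable

variable (E : Multiset (Sym2 α))

/-- number of edges leaving `C` (with multiplicity) -/
noncomputable def cut (C : Finset α) : ℕ := Multiset.countP (xr C) E

lemma countP_iff_congr {p p' : Sym2 α → Prop} (h : ∀ e ∈ E, p e ↔ p' e) :
    Multiset.countP p E = Multiset.countP p' E := by
  rw [Multiset.countP_eq_card_filter, Multiset.countP_eq_card_filter]
  congr 1
  exact Multiset.filter_congr h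

variable {E}

lemma sum_deg_const {q : ℕ} (hreg : ∀ v : α, deg E v = q) (T : Finset α) :
    ∑ v ∈ T, deg E v = q * T.card := by
  rw [Finset.sum_congr rfl (fun v _ => hreg v), Finset.sum_const, smul_eq_mul, mul_comm]

lemma deg_sum_comp (hE : ∀ e ∈ E, ¬ e.IsDiag) {q : ℕ} (hreg : ∀ v : α, deg E v = q)
    (C : Finset α) : q * C.card = 2 * Multiset.countP (inb C) E + cut E C := by
  rw [← sum_deg_const hreg, sum_deg_eq E hE, cut]

/-- for `C` a component of `B = univ \ S`, a crossing edge has its other end in `S` -/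
lemma xr_comp_struct (hE : ∀ e ∈ E, ¬ e.IsDiag) {S : Finset α}
    {C : Finset α} (hC : C ∈ CS E (Finset.univ \ S)) {e : Sym2 α} (heE : e ∈ E)
    (hxr : xr C e) : ∃ a b, e = s(a, b) ∧ a ∈ C ∧ b ∈ S := by
  set B := Finset.univ \ S with hB
  induction e using Sym2.ind with
  | _ x y =>
    have hxy : x ≠ y := fun h => hE _ heE (by rw [h]; simp)
    obtain ⟨⟨w, hw, hwC⟩, hnin⟩ := hxr
    have hCB : C ⊆ B := by
      obtain ⟨v, hv, rfl⟩ := CS_spec E hC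
      exact comp_subset E
    have hother : ∀ a b : α, s(x, y) = s(a, b) → a ∈ C → b ∉ C → b ∈ S := by
      intro a b heq haC hbC
      by_contra hbS
      have hbB : b ∈ B := by
        rw [hB]
        exact Finset.mem_sdiff.mpr ⟨Finset.mem_univ b, hbS⟩
      have hab : a ≠ b := by
        intro h
        exact hbC (h ▸ haC)
      have hadj : AdjB E B a b := ⟨hCB haC, hbB,
        ⟨s(x,y), heE, by rw [heq]; exact Sym2.mem_mk_left _ _,
          by rw [heq]; exact Sym2.mem_mk_right _ _, hab⟩⟩
      apply hbC
      rw [← comp_eq_comp_of_mem_CS E hC haC]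
      exact comp_closed_adj E (mem_comp_self E (hCB haC)) hadj
    rcases Sym2.mem_iff.mp hw with rfl | rfl
    · -- w = x ∈ C
      have hyC : y ∉ C := by
        intro hyC
        exact hnin (fun v hv => by
          rcases Sym2.mem_iff.mp hv with rfl | rfl
          · exact hwC
          · exact hyC)
      exact ⟨w, y, rfl, hwC, hother w y rfl hwC hyC⟩
    · -- w = y ∈ C
      have hxC : x ∉ C := by
        intro hxC
        exact hnin (fun v hv => by
          rcases Sym2.mem_iff.mp hv with rfl | rfl
          · exact hxC
          · exact hwC)
      exact ⟨w, x, Sym2.eq_swap, hwC, hother w x Sym2.eq_swap hwC hxC⟩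

lemma card_one_cut (hE : ∀ e ∈ E, ¬ e.IsDiag) {q : ℕ} (hreg : ∀ v : α, deg E v = q)
    {C : Finset α} (hcard : C.card = 1) : cut E C = q := by
  obtain ⟨v, rfl⟩ := Finset.card_eq_one.mp hcard
  have h0 : Multiset.countP (inb {v}) E = 0 := by
    rw [Multiset.countP_eq_zero]
    intro e heE hin
    induction e using Sym2.ind with
    | _ x y =>
      have hxy : x ≠ y := fun h => hE _ heE (by rw [h]; simp)
      obtain ⟨h1, h2⟩ := inb_iff.mp hin
      rw [Finset.mem_singleton] at h1 h2
      exact hxy (h1.trans h2.symm)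
  have := deg_sum_comp hE hreg {v}
  rw [h0, Finset.card_singleton] at this
  omega

lemma cut_parity (hE : ∀ e ∈ E, ¬ e.IsDiag) {q : ℕ} (hqodd : Odd q)
    (hreg : ∀ v : α, deg E v = q) {C : Finset α} (hodd : Odd C.card) :
    Odd (cut E C) := by
  have h := deg_sum_comp hE hreg C
  obtain ⟨k, hk⟩ := hqodd.mul hodd
  exact ⟨k - Multiset.countP (inb C) E, by omega⟩

lemma cut_disjoint (hE : ∀ e ∈ E, ¬ e.IsDiag) {S : Finset α} :
    ∀ e ∈ E, ∀ C ∈ CS E (Finset.univ \ S), ∀ C' ∈ CS E (Finset.univ \ S),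
      C ≠ C' → xr C e → ¬ xr C' e := by
  intro e heE C hC C' hC' hne h1 h2
  obtain ⟨a, b, hab, haC, hbS⟩ := xr_comp_struct hE hC heE h1
  obtain ⟨a', b', hab', haC', hbS'⟩ := xr_comp_struct hE hC' heE h2
  have hCB : C ⊆ Finset.univ \ S := by
    obtain ⟨v, hv, rfl⟩ := CS_spec E hC; exact comp_subset E
  have hC'B : C' ⊆ Finset.univ \ S := by
    obtain ⟨v, hv, rfl⟩ := CS_spec E hC'; exact comp_subset E
  -- a' ∈ e, a' ∈ C' ; but e = s(a,b) with a ∈ C, b ∈ S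
  have ha' : a' ∈ s(a, b) := by
    rw [← hab, hab']
    exact Sym2.mem_mk_left _ _
  rcases Sym2.mem_iff.mp ha' with rfl | rfl
  · exact (Finset.disjoint_left.mp (CS_disjoint E hC hC' hne) haC) haC'
  · exact (Finset.mem_sdiff.mp (hC'B haC')).2 hbS

lemma xr_S_iff (hE : ∀ e ∈ E, ¬ e.IsDiag) {S : Finset α} :
    ∀ e ∈ E, (xr S e ↔ ∃ C ∈ CS E (Finset.univ \ S), xr C e) := by
  intro e heE
  constructor
  · intro hxr
    induction e using Sym2.ind with
    | _ x y =>
      obtain ⟨⟨w, hw, hwS⟩, hnin⟩ := hxr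
      have : ∃ z, z ∈ s(x, y) ∧ z ∉ S := by
        by_contra hc
        push_neg at hc
        exact hnin (fun v hv => hc v hv)
      obtain ⟨z, hz, hzS⟩ := this
      have hzB : z ∈ Finset.univ \ S := Finset.mem_sdiff.mpr ⟨Finset.mem_univ z, hzS⟩
      refine ⟨comp E (Finset.univ \ S) z, comp_mem_CS E hzB, ⟨z, hz, mem_comp_self E hzB⟩, ?_⟩
      intro hin
      have := hin w hw
      exact (Finset.mem_sdiff.mp (comp_subset E this)).2 hwS
  · rintro ⟨C, hC, hxr⟩
    obtain ⟨a, b, hab, haC, hbS⟩ := xr_comp_struct hE hC heE hxr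
    have hCB : C ⊆ Finset.univ \ S := by
      obtain ⟨v, hv, rfl⟩ := CS_spec E hC; exact comp_subset E
    refine ⟨⟨b, by rw [hab]; exact Sym2.mem_mk_right _ _, hbS⟩, ?_⟩
    intro hin
    have := hin a (by rw [hab]; exact Sym2.mem_mk_left _ _)
    exact (Finset.mem_sdiff.mp (hCB haC)).2 this

lemma cutS_sum (hE : ∀ e ∈ E, ¬ e.IsDiag) (S : Finset α) :
    Multiset.countP (xr S) E = ∑ C ∈ CS E (Finset.univ \ S), cut E C := by
  rw [countP_iff_congr E (xr_S_iff hE)]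
  have h := countP_partition E (CS E (Finset.univ \ S)) (fun C e => xr C e) (cut_disjoint hE)
  convert h using 2
  rfl

lemma qs_eq (hE : ∀ e ∈ E, ¬ e.IsDiag) {q : ℕ} (hreg : ∀ v : α, deg E v = q)
    (S : Finset α) :
    q * S.card = 2 * Multiset.countP (inb S) E + ∑ C ∈ CS E (Finset.univ \ S), cut E C := by
  rw [← cutS_sum hE S, ← sum_deg_eq E hE S, sum_deg_const hreg]

/-- the connectivity inequality : #S + #components ≤ (edges touching S) + 1 -/
lemma conn_ineq (hE : ∀ e ∈ E, ¬ e.IsDiag)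
    (hconn : ∀ u v : α, Relation.ReflTransGen (Adj' E) u v) (S : Finset α) :
    S.card + (CS E (Finset.univ \ S)).card ≤
      Multiset.countP (inb S) E + Multiset.countP (xr S) E + 1 := by
  classical
  set B := Finset.univ \ S with hB
  set parts : Finset (Finset α) := S.image (fun v => {v}) ∪ CS E B with hparts
  -- the vertex-to-part map
  have hmem : ∀ v : α, (if v ∈ S then ({v} : Finset α) else comp E B v) ∈ parts := by
    intro v
    by_cases hv : v ∈ S
    · rw [if_pos hv, hparts]
      exact Finset.mem_union_left _ (Finset.mem_image_of_mem _ hv)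
    · rw [if_neg hv, hparts]
      exact Finset.mem_union_right _ (comp_mem_CS E
        (Finset.mem_sdiff.mpr ⟨Finset.mem_univ v, hv⟩))
  set pr : α → ↥parts := fun v => ⟨if v ∈ S then ({v} : Finset α) else comp E B v, hmem v⟩
    with hpr
  set F : Multiset (Sym2 ↥parts) :=
    (E.filter (fun e => ∃ v ∈ e, v ∈ S)).map (Sym2.map pr) with hF
  -- connectivity of the quotient
  have hstep : ∀ z w : α, Adj' E z w →
      Relation.ReflTransGen (Adj' F) (pr z) (pr w) := by
    intro z w hzw
    by_cases heq : pr z = pr w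
    · rw [heq]
    · obtain ⟨e, heE, hz, hw, hzw'⟩ := hzw
      have hcross : ∃ v ∈ e, v ∈ S := by
        by_contra hc
        push_neg at hc
        have hzB : z ∈ B := Finset.mem_sdiff.mpr ⟨Finset.mem_univ z, hc z hz⟩
        have hwB : w ∈ B := Finset.mem_sdiff.mpr ⟨Finset.mem_univ w, hc w hw⟩
        have hadj : AdjB E B z w := ⟨hzB, hwB, ⟨e, heE, hz, hw, hzw'⟩⟩
        apply heq
        refine Subtype.ext ?_
        show (if z ∈ S then ({z} : Finset α) else comp E B z) =
             (if w ∈ S then ({w} : Finset α) else comp E B w)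
        rw [if_neg (Finset.mem_sdiff.mp hzB).2, if_neg (Finset.mem_sdiff.mp hwB).2]
        exact (comp_eq_of_mem E (comp_closed_adj E (mem_comp_self E hzB) hadj)).symm
      refine Relation.ReflTransGen.single ?_
      refine ⟨Sym2.map pr e, ?_, ?_, ?_, heq⟩
      · rw [hF]
        exact Multiset.mem_map_of_mem _ (Multiset.mem_filter.mpr ⟨heE, hcross⟩)
      · exact Sym2.mem_map.mpr ⟨z, hz, rfl⟩
      · exact Sym2.mem_map.mpr ⟨w, hw, rfl⟩
  have hconnF : ∀ x y : ↥parts, Relation.ReflTransGen (Adj' F) x y := by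
    have hmain : ∀ u v : α, Relation.ReflTransGen (Adj' F) (pr u) (pr v) := by
      intro u v
      induction hconn u v with
      | refl => exact Relation.ReflTransGen.refl
      | @tail z w hz hzw ih => exact ih.trans (hstep z w hzw)
    intro x y
    obtain ⟨u, hu⟩ : ∃ u : α, pr u = x := by
      obtain ⟨P, hP⟩ := x
      rw [hparts] at hP
      rcases Finset.mem_union.mp hP with h | h
      · obtain ⟨v, hv, rfl⟩ := Finset.mem_image.mp h
        exact ⟨v, Subtype.ext (show (if v ∈ S then ({v} : Finset α) else comp E B v) = {v}
          from by rw [if_pos hv])⟩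
      · obtain ⟨v, hv, rfl⟩ := CS_spec E h
        exact ⟨v, Subtype.ext (show (if v ∈ S then ({v} : Finset α) else comp E B v) =
            comp E B v
          from by rw [if_neg (Finset.mem_sdiff.mp hv).2])⟩
    obtain ⟨v, hv⟩ : ∃ v : α, pr v = y := by
      obtain ⟨P, hP⟩ := y
      rw [hparts] at hP
      rcases Finset.mem_union.mp hP with h | h
      · obtain ⟨w, hw, rfl⟩ := Finset.mem_image.mp h
        exact ⟨w, Subtype.ext (show (if w ∈ S then ({w} : Finset α) else comp E B w) = {w}
          from by rw [if_pos hw])⟩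
      · obtain ⟨w, hw, rfl⟩ := CS_spec E h
        exact ⟨w, Subtype.ext (show (if w ∈ S then ({w} : Finset α) else comp E B w) =
            comp E B w
          from by rw [if_neg (Finset.mem_sdiff.mp hw).2])⟩
    rw [← hu, ← hv]
    exact hmain u v
  have hcount := conn_card_le F hconnF
  have hcardparts : parts.card = S.card + (CS E B).card := by
    rw [hparts]
    rw [Finset.card_union_of_disjoint]
    · congr 1
      exact Finset.card_image_of_injOn (fun a _ b _ h => Finset.singleton_injective h)
    · rw [Finset.disjoint_left]
      rintro P hP hP'
      obtain ⟨v, hv, rfl⟩ := Finset.mem_image.mp hP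
      obtain ⟨w, hw, heq⟩ := CS_spec E hP'
      have : v ∈ comp E B w := by rw [← heq]; exact Finset.mem_singleton_self v
      exact (Finset.mem_sdiff.mp (comp_subset E this)).2 hv
  have hcardF : Multiset.card F = Multiset.countP (fun e => ∃ v ∈ e, v ∈ S) E := by
    rw [hF, Multiset.card_map, ← Multiset.countP_eq_card_filter]
  have hsplitc : Multiset.countP (fun e => ∃ v ∈ e, v ∈ S) E =
      Multiset.countP (inb S) E + Multiset.countP (xr S) E := by
    have key := Multiset.filter_add_filter (inb S) (xr S) E
    have hand : Multiset.filter (fun e => inb S e ∧ xr S e) E = 0 := by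
      rw [Multiset.filter_eq_nil]
      rintro e heE ⟨h1, h2⟩
      exact h2.2 h1
    have hor : Multiset.filter (fun e => inb S e ∨ xr S e) E =
        Multiset.filter (fun e => ∃ v ∈ e, v ∈ S) E := by
      apply Multiset.filter_congr
      intro e heE
      constructor
      · rintro (h | h)
        · induction e using Sym2.ind with
          | _ x y => exact ⟨x, Sym2.mem_mk_left _ _, h x (Sym2.mem_mk_left _ _)⟩
        · exact h.1
      · intro h
        by_cases hin : inb S e
        · exact Or.inl hin
        · exact Or.inr ⟨h, hin⟩
    have hcc := congrArg Multiset.card key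
    rw [Multiset.card_add, Multiset.card_add, hand, hor] at hcc
    simp only [Multiset.card_zero] at hcc
    rw [Multiset.countP_eq_card_filter, Multiset.countP_eq_card_filter,
      Multiset.countP_eq_card_filter]
    omega
  have hfin : Fintype.card ↥parts = parts.card := Fintype.card_coe _
  rw [hfin, hcardparts, hcardF, hsplitc] at hcount
  omega

end Counting2


section Final

variable {α : Type*} [Fintype α] [DecidableEq α]

attribute [local instance] Classical.propDecidable

lemma pointwise_bound {E : Multiset (Sym2 α)} (hE : ∀ e ∈ E, ¬ e.IsDiag) {q : ℕ}
    (hq : 3 ≤ q) (hqodd : Odd q) (hreg : ∀ v : α, deg E v = q) {S : Finset α}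
    {C : Finset α} (hC : C ∈ CS E (Finset.univ \ S)) :
    ((q : ℤ) * (3 * q - 5)) * (if Odd C.card then 1 else 0) ≤
      ((q : ℤ) - 1) * ((q : ℤ) - 2) * C.card + 2 * ((q : ℤ) - 2) * cut E C
        + 2 * ((q : ℤ) - 1) := by
  have hq' : (3 : ℤ) ≤ (q : ℤ) := by exact_mod_cast hq
  by_cases hodd : Odd C.card
  · rw [if_pos hodd]
    have hcut_odd : Odd (cut E C) := cut_parity hE hqodd hreg hodd
    by_cases hone : C.card = 1
    · have hcq : cut E C = q := card_one_cut hE hreg hone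
      rw [hone, hcq]
      push_cast
      nlinarith [hq']
    · have hc3 : 3 ≤ C.card := by
        obtain ⟨r, hr⟩ := hodd
        omega
      have hc3' : (3 : ℤ) ≤ (C.card : ℤ) := by exact_mod_cast hc3
      by_cases hcut1 : cut E C = 1
      · rw [hcut1]
        push_cast
        nlinarith [mul_nonneg (mul_nonneg (by linarith : (0:ℤ) ≤ (q:ℤ)-1)
          (by linarith : (0:ℤ) ≤ (q:ℤ)-2)) (by linarith : (0:ℤ) ≤ (C.card:ℤ) - 3)]
      · have hcut3 : 3 ≤ cut E C := by
          obtain ⟨r, hr⟩ := hcut_odd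
          omega
        have hcut3' : (3 : ℤ) ≤ (cut E C : ℤ) := by exact_mod_cast hcut3
        nlinarith [mul_nonneg (mul_nonneg (by linarith : (0:ℤ) ≤ (q:ℤ)-1)
            (by linarith : (0:ℤ) ≤ (q:ℤ)-2)) (by linarith : (0:ℤ) ≤ (C.card:ℤ) - 3),
          mul_nonneg (by linarith : (0:ℤ) ≤ 2*((q:ℤ)-2))
            (by linarith : (0:ℤ) ≤ (cut E C:ℤ) - 3)]
  · rw [if_neg hodd]
    have h1 : (0:ℤ) ≤ (C.card : ℤ) := by positivity
    have h2 : (0:ℤ) ≤ (cut E C : ℤ) := by positivity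
    nlinarith [mul_nonneg (mul_nonneg (by linarith : (0:ℤ) ≤ (q:ℤ)-1)
        (by linarith : (0:ℤ) ≤ (q:ℤ)-2)) h1,
      mul_nonneg (by linarith : (0:ℤ) ≤ 2*((q:ℤ)-2)) h2]

set_option maxHeartbeats 2000000 in
lemma counting_ineq {E : Multiset (Sym2 α)} (hE : ∀ e ∈ E, ¬ e.IsDiag) {q : ℕ}
    (hq : 3 ≤ q) (hqodd : Odd q) (hreg : ∀ v : α, deg E v = q)
    (hconn : ∀ u v : α, Relation.ReflTransGen (Adj' E) u v) (S : Finset α) :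
    ((q : ℤ) * (3 * q - 5)) * (nOdd E (Finset.univ \ S)) ≤
      ((q : ℤ) - 1) * ((q : ℤ) - 2) * (Fintype.card α)
        + ((q : ℤ) * (3 * q - 5)) * S.card + 2 * ((q : ℤ) - 1) := by
  classical
  have hq' : (3 : ℤ) ≤ (q : ℤ) := by exact_mod_cast hq
  set B := Finset.univ \ S with hB
  have h := Finset.sum_le_sum (fun C hC => pointwise_bound hE hq hqodd hreg (S := S) hC)
  have hL : ∑ C ∈ CS E B, ((q : ℤ) * (3 * q - 5)) * (if Odd C.card then 1 else 0)
      = ((q : ℤ) * (3 * q - 5)) * (nOdd E B) := by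
    rw [← Finset.mul_sum]
    congr 1
    rw [nOdd]
    rw [Finset.sum_boole]
  have hR : ∑ C ∈ CS E B, (((q : ℤ) - 1) * ((q : ℤ) - 2) * C.card
        + 2 * ((q : ℤ) - 2) * cut E C + 2 * ((q : ℤ) - 1))
      = ((q : ℤ) - 1) * ((q : ℤ) - 2) * (∑ C ∈ CS E B, (C.card : ℤ))
        + 2 * ((q : ℤ) - 2) * (∑ C ∈ CS E B, (cut E C : ℤ))
        + 2 * ((q : ℤ) - 1) * (CS E B).card := by
    rw [Finset.sum_add_distrib, Finset.sum_add_distrib, ← Finset.mul_sum, ← Finset.mul_sum,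
      Finset.sum_const, nsmul_eq_mul]
    ring
  rw [hL, hR] at h
  -- numeric facts, cast to ℤ
  have hF1 : ∑ C ∈ CS E B, C.card = B.card := sum_card_CS E
  have hBS : B.card + S.card = Fintype.card α := by
    rw [hB, Finset.card_sdiff_add_card_eq_card (Finset.subset_univ S), Finset.card_univ]
  have hF2 : q * S.card = 2 * Multiset.countP (inb S) E + ∑ C ∈ CS E B, cut E C :=
    qs_eq hE hreg S
  have hF3 : S.card + (CS E B).card ≤
      Multiset.countP (inb S) E + Multiset.countP (xr S) E + 1 := conn_ineq hE hconn S
  have hF6 : Multiset.countP (xr S) E = ∑ C ∈ CS E B, cut E C := cutS_sum hE S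
  rw [hF6] at hF3
  set aZ : ℤ := (B.card : ℤ) with haZ
  set cZ : ℤ := ((∑ C ∈ CS E B, cut E C : ℕ) : ℤ) with hcZ
  set kZ : ℤ := ((CS E B).card : ℤ) with hkZ
  set eZ : ℤ := ((Multiset.countP (inb S) E : ℕ) : ℤ) with heZ
  set sZ : ℤ := (S.card : ℤ) with hsZ
  set mZ : ℤ := ((Fintype.card α : ℕ) : ℤ) with hmZ
  have hsum : ((q : ℤ) * (3 * q - 5)) * (nOdd E B) ≤
      ((q : ℤ) - 1) * ((q : ℤ) - 2) * aZ + 2 * ((q : ℤ) - 2) * cZ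
        + 2 * ((q : ℤ) - 1) * kZ := by
    have e1 : (∑ C ∈ CS E B, (C.card : ℤ)) = aZ := by
      rw [haZ, ← hF1]
      push_cast
      rfl
    have e2 : (∑ C ∈ CS E B, (cut E C : ℤ)) = cZ := by
      rw [hcZ]
      push_cast
      rfl
    rw [e1, e2] at h
    exact h
  have hF2' : (q : ℤ) * sZ = 2 * eZ + cZ := by
    rw [hsZ, heZ, hcZ]
    exact_mod_cast hF2
  have hF3' : sZ + kZ ≤ eZ + cZ + 1 := by
    rw [hsZ, hkZ, heZ, hcZ]
    exact_mod_cast hF3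
  have hBS' : aZ + sZ = mZ := by
    rw [haZ, hsZ, hmZ]
    exact_mod_cast hBS
  have H3 : 2*((q:ℤ)-1) * (sZ + kZ) ≤ 2*((q:ℤ)-1) * (eZ + cZ + 1) :=
    mul_le_mul_of_nonneg_left hF3' (by linarith)
  have H2 : 2*((q:ℤ)-2) * ((q:ℤ)*sZ) = 2*((q:ℤ)-2) * (2*eZ + cZ) := by rw [hF2']
  have H2b : 2*((q:ℤ)-1) * ((q:ℤ)*sZ) = 2*((q:ℤ)-1) * (2*eZ + cZ) := by rw [hF2']
  have HeSS : (0:ℤ) ≤ (6*(q:ℤ)-10) * eZ := by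
    have : (0:ℤ) ≤ eZ := by rw [heZ]; positivity
    nlinarith
  have H1 : ((q:ℤ)-1)*((q:ℤ)-2)*aZ = ((q:ℤ)-1)*((q:ℤ)-2)*mZ - ((q:ℤ)-1)*((q:ℤ)-2)*sZ := by
    rw [← hBS']; ring
  linarith [hsum, H3, H2, H2b, H1, HeSS]

end Final


end HY

/-- For a `q`-regular connected loopless multigraph on `m ≥ 3` vertices with `q ≥ 3` odd,
the matching number is at least `⌈((q²−q−1)m−(q−1))/(q(3q−5))⌉`. -/
theorem matching_number_lower_bound_odd (q m : ℕ) (hq : 3 ≤ q) (hqodd : Odd q)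
    (hm : 3 ≤ m) (E : Multiset (Sym2 (Fin m)))
    (hloop : Multigraph.Loopless E) (hconn : Multigraph.Connected E)
    (hreg : ∀ v : Fin m, Multigraph.degree E v = q) :
    ∃ M : Finset (Sym2 (Fin m)), Multigraph.IsMatching E M ∧
      ⌈(((q : ℚ)^2 - q - 1) * m - (q - 1)) / (q * (3 * q - 5))⌉ ≤ (M.card : ℤ) := by
  classical
  have hE : ∀ e ∈ E, ¬ e.IsDiag := hloop
  obtain ⟨S, hSsub, hbt⟩ := HY.bt E hE Finset.univ
  obtain ⟨Mx, hMx, hMxc⟩ := HY.exists_nu E Finset.univ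
  have hconn' : ∀ u v : Fin m, Relation.ReflTransGen (HY.Adj' E) u v := hconn
  have hreg' : ∀ v : Fin m, HY.deg E v = q := hreg
  have hcount := HY.counting_ineq hE hq hqodd hreg' hconn' S
  refine ⟨Mx, hMx.1, ?_⟩
  have hm' : Fintype.card (Fin m) = m := Fintype.card_fin m
  have hbt' : m + S.card ≤ 2 * HY.nu E Finset.univ + HY.nOdd E (Finset.univ \ S) := by
    rwa [Finset.card_univ, hm'] at hbt
  rw [hm'] at hcount
  have hq' : (3:ℤ) ≤ (q:ℤ) := by exact_mod_cast hq
  have hbtZ : (m:ℤ) + (S.card : ℤ) ≤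
      2*(HY.nu E Finset.univ : ℤ) + (HY.nOdd E (Finset.univ \ S) : ℤ) := by
    exact_mod_cast hbt'
  have hpos : (0:ℤ) ≤ (q:ℤ)*(3*(q:ℤ)-5) := by nlinarith
  have hbtZ2 := mul_le_mul_of_nonneg_left hbtZ hpos
  have hkey : (((q:ℤ)^2 - q - 1) * m - ((q:ℤ) - 1)) ≤
      ((q:ℤ)*(3*(q:ℤ)-5)) * (HY.nu E Finset.univ) := by
    linarith [hcount, hbtZ2]
  rw [hMxc, Int.ceil_le]
  have hqposQ : (0:ℚ) < (q:ℚ) * (3*(q:ℚ) - 5) := by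
    have h3 : (3:ℚ) ≤ (q:ℚ) := by exact_mod_cast hq
    nlinarith
  rw [div_le_iff₀ hqposQ]
  have hkeyQ : (((q:ℚ)^2 - q - 1) * m - ((q:ℚ) - 1)) ≤
      ((q:ℚ)*(3*(q:ℚ)-5)) * (HY.nu E Finset.univ) := by
    exact_mod_cast hkey
  push_cast
  push_cast at hkeyQ
  linarith [hkeyQ]
end

section
/- For a q-regular connected multigraph G without loops on m vertices, where q ≥ 2 is even and m ≥ 3, the matching number M(G) satisfies M(G) ≥ min(⌊m/2⌋, ⌈(q+2)m/(3q+2)⌉). -/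
namespace TB

variable {V : Type*} [DecidableEq V] [Fintype V]

/-- step relation within a finite vertex set -/
def Step (G : V → V → Prop) (A : Finset V) (x y : V) : Prop := x ∈ A ∧ y ∈ A ∧ G x y

/-- reachability within `A` -/
def Reach (G : V → V → Prop) (A : Finset V) : V → V → Prop :=
  Relation.ReflTransGen (Step G A)

open Classical in
/-- connected component of `v` inside `A` -/
noncomputable def comp (G : V → V → Prop) (A : Finset V) (v : V) : Finset V :=
  A.filter (fun w => Reach G A v w)

open Classical in
noncomputable def comps (G : V → V → Prop) (A : Finset V) : Finset (Finset V) :=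
  A.image (comp G A)

open Classical in
noncomputable def oc (G : V → V → Prop) (A : Finset V) : ℕ :=
  ((comps G A).filter (fun C => Odd C.card)).card

variable {G : V → V → Prop} {A : Finset V}

lemma reach_trans {u v w : V} (h1 : Reach G A u v) (h2 : Reach G A v w) :
    Reach G A u w := Relation.ReflTransGen.trans h1 h2

lemma reach_symm (hsym : Symmetric G) {u v : V} (h : Reach G A u v) : Reach G A v u := by
  induction h with
  | refl => exact Relation.ReflTransGen.refl
  | tail _ h2 ih =>
      exact Relation.ReflTransGen.trans
        (Relation.ReflTransGen.single ⟨h2.2.1, h2.1, hsym h2.2.2⟩) ih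

lemma mem_comp {v w : V} : w ∈ comp G A v ↔ w ∈ A ∧ Reach G A v w := by
  simp [comp]

lemma mem_comp_self {v : V} (hv : v ∈ A) : v ∈ comp G A v :=
  mem_comp.2 ⟨hv, Relation.ReflTransGen.refl⟩

lemma comp_subset {v : V} : comp G A v ⊆ A := fun w hw => (mem_comp.1 hw).1

lemma comp_eq_of_reach (hsym : Symmetric G) {v w : V} (h : Reach G A v w) :
    comp G A v = comp G A w := by
  ext x
  simp only [mem_comp]
  exact ⟨fun hx => ⟨hx.1, reach_trans (reach_symm hsym h) hx.2⟩,
         fun hx => ⟨hx.1, reach_trans h hx.2⟩⟩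

lemma mem_comps_of_mem {C : Finset V} (hC : C ∈ comps G A) : ∃ v ∈ A, C = comp G A v := by
  simpa [comps, eq_comm] using hC

lemma comp_mem_comps {v : V} (hv : v ∈ A) : comp G A v ∈ comps G A :=
  Finset.mem_image_of_mem _ hv

lemma comps_nonempty {C : Finset V} (hC : C ∈ comps G A) : C.Nonempty := by
  obtain ⟨v, hv, rfl⟩ := mem_comps_of_mem hC
  exact ⟨v, mem_comp_self hv⟩

lemma comp_eq_of_mem (hsym : Symmetric G) {v w : V} (hw : w ∈ comp G A v) :
    comp G A v = comp G A w := comp_eq_of_reach hsym (mem_comp.1 hw).2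

lemma comps_disjoint (hsym : Symmetric G) {C₁ C₂ : Finset V} (h1 : C₁ ∈ comps G A)
    (h2 : C₂ ∈ comps G A) (hne : C₁ ≠ C₂) : Disjoint C₁ C₂ := by
  obtain ⟨v, hv, rfl⟩ := mem_comps_of_mem h1
  obtain ⟨w, hw, rfl⟩ := mem_comps_of_mem h2
  rw [Finset.disjoint_left]
  intro x hx1 hx2
  exact hne ((comp_eq_of_mem hsym hx1).trans (comp_eq_of_mem hsym hx2).symm)

lemma comps_subset {C : Finset V} (hC : C ∈ comps G A) : C ⊆ A := by
  obtain ⟨v, _, rfl⟩ := mem_comps_of_mem hC; exact comp_subset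

lemma mem_comp_closure (hsym : Symmetric G) {C : Finset V} (hC : C ∈ comps G A)
    {u w : V} (hu : u ∈ C) (hw : w ∈ A) (huw : G u w) : w ∈ C := by
  obtain ⟨v, hv, rfl⟩ := mem_comps_of_mem hC
  rw [mem_comp] at hu ⊢
  exact ⟨hw, hu.2.tail ⟨hu.1, hw, huw⟩⟩

lemma biUnion_comps (hsym : Symmetric G) : (comps G A).biUnion id = A := by
  apply Finset.Subset.antisymm
  · intro x hx
    simp only [Finset.mem_biUnion, id] at hx
    obtain ⟨C, hC, hx⟩ := hx
    exact comps_subset hC hx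
  · intro x hx
    simp only [Finset.mem_biUnion, id]
    exact ⟨comp G A x, comp_mem_comps hx, mem_comp_self hx⟩

lemma sum_comps_card (hsym : Symmetric G) : ∑ C ∈ comps G A, C.card = A.card := by
  conv_rhs => rw [← biUnion_comps (G := G) (A := A) hsym]
  rw [Finset.card_biUnion]
  · rfl
  intro x hx y hy hxy
  exact comps_disjoint hsym hx hy hxy

/-- within its own set, a component is fully reachable -/
lemma reach_in_comp (hsym : Symmetric G) {v u : V} (hv : v ∈ A) (hu : u ∈ comp G A v) :
    Reach G (comp G A v) v u := by
  rw [mem_comp] at hu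
  obtain ⟨huA, hr⟩ := hu
  induction hr with
  | refl => exact Relation.ReflTransGen.refl
  | @tail b c hb hbc ih =>
      have hbmem : b ∈ comp G A v := mem_comp.2 ⟨hbc.1, hb⟩
      have hcmem : c ∈ comp G A v := mem_comp.2 ⟨hbc.2.1, hb.tail hbc⟩
      exact (ih hbc.1).tail ⟨hbmem, hcmem, hbc.2.2⟩

lemma reach_of_reach_subset {B : Finset V} (hBA : B ⊆ A) {u v : V}
    (h : Reach G B u v) : Reach G A u v := by
  induction h with
  | refl => exact Relation.ReflTransGen.refl
  | tail _ h2 ih => exact ih.tail ⟨hBA h2.1, hBA h2.2.1, h2.2.2⟩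

/-- characterization of components -/
lemma mem_comps_iff (hsym : Symmetric G) {C : Finset V} :
    C ∈ comps G A ↔ C.Nonempty ∧ C ⊆ A ∧ (∀ u ∈ C, ∀ v ∈ C, Reach G C u v) ∧
      (∀ u ∈ C, ∀ v ∈ A, G u v → v ∈ C) := by
  constructor
  · intro hC
    refine ⟨comps_nonempty hC, comps_subset hC, ?_, fun u hu v hv huv =>
      mem_comp_closure hsym hC hu hv huv⟩
    obtain ⟨v, hv, rfl⟩ := mem_comps_of_mem hC
    intro u hu w hw
    exact reach_trans (reach_symm hsym (reach_in_comp hsym hv hu)) (reach_in_comp hsym hv hw)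
  · rintro ⟨⟨v₀, hv₀⟩, hCA, hconn, hclose⟩
    have : C = comp G A v₀ := by
      apply Finset.Subset.antisymm
      · intro u hu
        exact mem_comp.2 ⟨hCA hu, reach_of_reach_subset hCA (hconn v₀ hv₀ u hu)⟩
      · intro w hw
        rw [mem_comp] at hw
        obtain ⟨hwA, hr⟩ := hw
        clear hwA
        induction hr with
        | refl => exact hv₀
        | tail _ h2 ih => exact hclose _ ih _ h2.2.1 h2.2.2
    rw [this]
    exact comp_mem_comps (hCA hv₀)


lemma reach_stay (hsym : Symmetric G) {A₁ A₂ : Finset V}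
    (hcross : ∀ x ∈ A₁, ∀ y ∈ A₂, ¬ G x y) {u v : V}
    (h : Reach G (A₁ ∪ A₂) u v) (hu : u ∈ A₁) : v ∈ A₁ := by
  induction h with
  | refl => exact hu
  | @tail b c hb hbc ih =>
      rcases Finset.mem_union.1 hbc.2.1 with h1 | h2
      · exact h1
      · exact absurd hbc.2.2 (hcross b ih c h2)

/-- components split over a disconnected union -/
lemma comps_union (hsym : Symmetric G) {A₁ A₂ : Finset V} (hdis : Disjoint A₁ A₂)
    (hcross : ∀ x ∈ A₁, ∀ y ∈ A₂, ¬ G x y) :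
    comps G (A₁ ∪ A₂) = comps G A₁ ∪ comps G A₂ := by
  have hcross' : ∀ x ∈ A₂, ∀ y ∈ A₁, ¬ G x y := fun x hx y hy hG => hcross y hy x hx (hsym hG)
  ext C
  simp only [Finset.mem_union]
  constructor
  · intro hC
    rw [mem_comps_iff hsym] at hC
    obtain ⟨⟨v₀, hv₀⟩, hCA, hconn, hclose⟩ := hC
    rcases Finset.mem_union.1 (hCA hv₀) with h1 | h2
    · left
      rw [mem_comps_iff hsym]
      have hsub : C ⊆ A₁ := fun u hu =>
        reach_stay hsym hcross (reach_of_reach_subset hCA (hconn v₀ hv₀ u hu)) h1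
      exact ⟨⟨v₀, hv₀⟩, hsub, hconn, fun u hu v hv hG =>
        hclose u hu v (Finset.mem_union_left _ hv) hG⟩
    · right
      rw [mem_comps_iff hsym]
      have hsub : C ⊆ A₂ := by
        intro u hu
        refine reach_stay (A₁ := A₂) (A₂ := A₁) hsym hcross' ?_ h2
        have := reach_of_reach_subset hCA (hconn v₀ hv₀ u hu)
        rwa [Finset.union_comm] at this
      exact ⟨⟨v₀, hv₀⟩, hsub, hconn, fun u hu v hv hG =>
        hclose u hu v (Finset.mem_union_right _ hv) hG⟩
  · intro hC
    rcases hC with h | h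
    · rw [mem_comps_iff hsym] at h ⊢
      obtain ⟨hne, hCA, hconn, hclose⟩ := h
      refine ⟨hne, hCA.trans Finset.subset_union_left, hconn, ?_⟩
      intro u hu v hv hG
      rcases Finset.mem_union.1 hv with h1 | h2
      · exact hclose u hu v h1 hG
      · exact absurd hG (hcross u (hCA hu) v h2)
    · rw [mem_comps_iff hsym] at h ⊢
      obtain ⟨hne, hCA, hconn, hclose⟩ := h
      refine ⟨hne, hCA.trans Finset.subset_union_right, hconn, ?_⟩
      intro u hu v hv hG
      rcases Finset.mem_union.1 hv with h1 | h2
      · exact absurd (hsym hG) (hcross v h1 u (hCA hu))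
      · exact hclose u hu v h2 hG

lemma comps_disjoint_sets (hsym : Symmetric G) {A₁ A₂ : Finset V} (hdis : Disjoint A₁ A₂) :
    Disjoint (comps G A₁) (comps G A₂) := by
  rw [Finset.disjoint_left]
  intro C h1 h2
  obtain ⟨v, hv⟩ := comps_nonempty h1
  exact Finset.disjoint_left.1 hdis (comps_subset h1 hv) (comps_subset h2 hv)

lemma oc_union (hsym : Symmetric G) {A₁ A₂ : Finset V} (hdis : Disjoint A₁ A₂)
    (hcross : ∀ x ∈ A₁, ∀ y ∈ A₂, ¬ G x y) :
    oc G (A₁ ∪ A₂) = oc G A₁ + oc G A₂ := by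
  classical
  rw [oc, comps_union hsym hdis hcross, Finset.filter_union,
    Finset.card_union_of_disjoint (Finset.disjoint_filter_filter (comps_disjoint_sets hsym hdis))]
  rfl

/-- parity: number of odd components has same parity as the number of vertices -/
lemma oc_parity (hsym : Symmetric G) : (oc G A : ℤ) % 2 = (A.card : ℤ) % 2 := by
  classical
  have hsum := sum_comps_card (G := G) (A := A) hsym
  have h1 : (A.card : ℤ) = ∑ C ∈ comps G A, (C.card : ℤ) := by
    rw [← hsum]; push_cast; ring
  rw [h1, Finset.sum_int_mod]
  have h2 : ∀ C ∈ comps G A, ((C.card : ℤ) % 2) = if Odd C.card then 1 else 0 := by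
    intro C _
    rcases Nat.even_or_odd C.card with h | h
    · have := Nat.even_iff.1 h
      rw [if_neg (Nat.not_odd_iff_even.2 h)]
      omega
    · have := Nat.odd_iff.1 h
      rw [if_pos h]
      omega
  rw [Finset.sum_congr rfl h2, Finset.sum_boole]
  simp only [oc]
  try omega

/-- a set of odd size has at least one odd component -/
lemma oc_pos_of_odd (hsym : Symmetric G) (h : Odd A.card) : 1 ≤ oc G A := by
  have := oc_parity (G := G) (A := A) hsym
  have h2 : (A.card : ℤ) % 2 = 1 := by
    have := Nat.odd_iff.1 h; omega
  by_contra hc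
  push_neg at hc
  have h3 : oc G A = 0 := by omega
  rw [h3] at this
  omega

open Classical in
noncomputable def maxDef (G : V → V → Prop) (A : Finset V) : ℤ :=
  (A.powerset.image (fun S => (oc G (A \ S) : ℤ) - S.card)).max'
    ⟨(oc G (A \ ∅) : ℤ) - (∅ : Finset V).card,
      Finset.mem_image_of_mem _ (Finset.empty_mem_powerset A)⟩

lemma defic_le_maxDef {S : Finset V} (hS : S ⊆ A) :
    (oc G (A \ S) : ℤ) - S.card ≤ maxDef G A := by
  classical
  apply Finset.le_max'
  exact Finset.mem_image_of_mem _ (Finset.mem_powerset.2 hS)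

lemma maxDef_nonneg : 0 ≤ maxDef G A := by
  have h := defic_le_maxDef (G := G) (A := A) (S := ∅) (Finset.empty_subset A)
  simp at h
  have : (0:ℤ) ≤ (oc G (A \ ∅) : ℤ) - 0 := by simp
  calc (0:ℤ) ≤ (oc G (A \ ∅) : ℤ) - (∅:Finset V).card := by simp
    _ ≤ _ := defic_le_maxDef (Finset.empty_subset A)


/-- a matching on vertex set `A` along relation `G` -/
def MOn (G : V → V → Prop) (A : Finset V) (M : Finset (Sym2 V)) : Prop :=
  (∀ e ∈ M, ∃ x y, x ≠ y ∧ G x y ∧ x ∈ A ∧ y ∈ A ∧ e = s(x, y)) ∧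
  (∀ e ∈ M, ∀ f ∈ M, e ≠ f → ∀ v : V, ¬ (v ∈ e ∧ v ∈ f))

lemma MOn.mem_vertex {M : Finset (Sym2 V)} (h : MOn G A M) {e : Sym2 V} {v : V}
    (he : e ∈ M) (hv : v ∈ e) : v ∈ A := by
  obtain ⟨x, y, hxy, _, hx, hy, rfl⟩ := h.1 e he
  rcases Sym2.mem_iff.1 hv with rfl | rfl <;> assumption

lemma MOn.mono {M : Finset (Sym2 V)} {A' : Finset V} (h : MOn G A M) (hAA : A ⊆ A') :
    MOn G A' M :=
  ⟨fun e he => by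
    obtain ⟨x, y, hxy, hG, hx, hy, rfl⟩ := h.1 e he
    exact ⟨x, y, hxy, hG, hAA hx, hAA hy, rfl⟩, h.2⟩

lemma MOn.empty : MOn G A (∅ : Finset (Sym2 V)) := by
  constructor <;> intro e he <;> simp at he

lemma MOn.union {A₁ A₂ : Finset V} {M₁ M₂ : Finset (Sym2 V)}
    (h1 : MOn G A₁ M₁) (h2 : MOn G A₂ M₂) (hdis : Disjoint A₁ A₂) :
    MOn G (A₁ ∪ A₂) (M₁ ∪ M₂) ∧ (M₁ ∪ M₂).card = M₁.card + M₂.card := by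
  have hMdis : Disjoint M₁ M₂ := by
    rw [Finset.disjoint_left]
    intro e he1 he2
    obtain ⟨x, y, hxy, _, hx, _, rfl⟩ := h1.1 e he1
    exact Finset.disjoint_left.1 hdis hx (h2.mem_vertex he2 (Sym2.mem_mk_left x y))
  refine ⟨⟨?_, ?_⟩, Finset.card_union_of_disjoint hMdis⟩
  · intro e he
    rcases Finset.mem_union.1 he with h | h
    · exact (h1.mono Finset.subset_union_left).1 e h
    · exact (h2.mono Finset.subset_union_right).1 e h
  · intro e he f hf hef v hva
    rcases Finset.mem_union.1 he with he' | he' <;> rcases Finset.mem_union.1 hf with hf' | hf'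
    · exact h1.2 e he' f hf' hef v hva
    · exact Finset.disjoint_left.1 hdis (h1.mem_vertex he' hva.1) (h2.mem_vertex hf' hva.2)
    · exact Finset.disjoint_left.1 hdis (h1.mem_vertex hf' hva.2) (h2.mem_vertex he' hva.1)
    · exact h2.2 e he' f hf' hef v hva

lemma MOn.biUnion {𝒞 : Finset (Finset V)} {h : Finset V → Finset V}
    {g : Finset V → Finset (Sym2 V)}
    (hdis : ∀ C ∈ 𝒞, ∀ C' ∈ 𝒞, C ≠ C' → Disjoint (h C) (h C'))
    (hg : ∀ C ∈ 𝒞, MOn G (h C) (g C)) :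
    MOn G (𝒞.biUnion h) (𝒞.biUnion g) ∧ (𝒞.biUnion g).card = ∑ C ∈ 𝒞, (g C).card := by
  classical
  induction 𝒞 using Finset.induction with
  | empty => simpa using (MOn.empty (G := G) (A := ∅))
  | @insert C₀ 𝒞 hC₀ ih =>
      have hdis' : ∀ C ∈ 𝒞, ∀ C' ∈ 𝒞, C ≠ C' → Disjoint (h C) (h C') := fun C hC C' hC' =>
        hdis C (Finset.mem_insert_of_mem hC) C' (Finset.mem_insert_of_mem hC')
      obtain ⟨ihM, ihcard⟩ := ih hdis' (fun C hC => hg C (Finset.mem_insert_of_mem hC))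
      have hdisj : Disjoint (h C₀) (𝒞.biUnion h) := by
        rw [Finset.disjoint_right]
        intro x hx hx0
        simp only [Finset.mem_biUnion] at hx
        obtain ⟨C, hC, hxC⟩ := hx
        have hne : C₀ ≠ C := by rintro rfl; exact hC₀ hC
        exact Finset.disjoint_left.1
          (hdis C₀ (Finset.mem_insert_self _ _) C (Finset.mem_insert_of_mem hC) hne) hx0 hxC
      obtain ⟨hM, hcard⟩ := (hg C₀ (Finset.mem_insert_self _ _)).union ihM hdisj
      rw [Finset.biUnion_insert, Finset.biUnion_insert]
      exact ⟨hM, by rw [hcard, ihcard, Finset.sum_insert hC₀]⟩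


lemma comps_self (hsym : Symmetric G) {C : Finset V} (hC : C ∈ comps G A) :
    comps G C = {C} := by
  have hch := (mem_comps_iff (A := A) hsym).1 hC
  obtain ⟨hne, hCA, hconn, hclose⟩ := hch
  have hCC : C ∈ comps G C :=
    (mem_comps_iff (A := C) hsym).2 ⟨hne, Finset.Subset.rfl, hconn, fun u hu v hv _ => hv⟩
  apply Finset.Subset.antisymm
  · intro C' hC'
    rw [Finset.mem_singleton]
    obtain ⟨v, hv, rfl⟩ := mem_comps_of_mem hC'
    apply Finset.Subset.antisymm comp_subset
    intro u hu
    exact mem_comp.2 ⟨hu, hconn v hv u hu⟩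
  · intro C' hC'
    rw [Finset.mem_singleton] at hC'
    subst hC'
    exact hCC

lemma oc_self_odd (hsym : Symmetric G) {C : Finset V} (hC : C ∈ comps G A)
    (h : Odd C.card) : oc G C = 1 := by
  rw [oc, comps_self hsym hC, Finset.filter_singleton, if_pos h, Finset.card_singleton]

lemma oc_self_even (hsym : Symmetric G) {C : Finset V} (hC : C ∈ comps G A)
    (h : ¬ Odd C.card) : oc G C = 0 := by
  rw [oc, comps_self hsym hC, Finset.filter_singleton, if_neg h, Finset.card_empty]

/-- splitting off one component -/
lemma oc_split_comp (hsym : Symmetric G) {B C : Finset V} (hC : C ∈ comps G B)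
    {C' : Finset V} (hC' : C' ⊆ C) :
    (B \ C) ∪ C' = C' ∪ (B \ C) ∧ Disjoint C' (B \ C) ∧
      oc G (C' ∪ (B \ C)) = oc G C' + oc G (B \ C) := by
  have hsub := comps_subset hC
  have hdis : Disjoint C' (B \ C) := by
    rw [Finset.disjoint_left]
    intro x hx hx'
    exact (Finset.mem_sdiff.1 hx').2 (hC' hx)
  refine ⟨Finset.union_comm _ _, hdis, oc_union hsym hdis ?_⟩
  intro x hx y hy hG
  have hyB : y ∈ B := (Finset.mem_sdiff.1 hy).1
  exact (Finset.mem_sdiff.1 hy).2 (mem_comp_closure hsym hC (hC' hx) hyB hG)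

/-- decompose `B` as `C ∪ (B \ C)` for a component `C`, yielding the oc relation -/
lemma oc_eq_comp_add (hsym : Symmetric G) {B C : Finset V} (hC : C ∈ comps G B) :
    oc G B = oc G C + oc G (B \ C) := by
  obtain ⟨_, _, h⟩ := oc_split_comp hsym hC (Finset.Subset.rfl)
  rw [← h, Finset.union_sdiff_of_subset (comps_subset hC)]

theorem tb (hsym : Symmetric G) (n : ℕ) : ∀ (A : Finset V), A.card ≤ n →
    ∃ M : Finset (Sym2 V), MOn G A M ∧ (A.card : ℤ) ≤ 2 * M.card + maxDef G A := by
  induction n with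
  | zero =>
      intro A hA
      have : A = ∅ := Finset.card_eq_zero.1 (Nat.le_zero.1 hA)
      subst this
      exact ⟨∅, MOn.empty, by simpa using maxDef_nonneg (G := G) (A := ∅)⟩
  | succ n IH =>
    intro A hAcard
    rcases A.eq_empty_or_nonempty with rfl | hAne
    · exact ⟨∅, MOn.empty, by simpa using maxDef_nonneg (G := G) (A := ∅)⟩
    haveI : Nonempty V := ⟨hAne.choose⟩
    classical
    -- choose S maximizing deficiency, then cardinality
    obtain ⟨S, hSpow, hSmax⟩ := Finset.exists_max_image A.powerset
      (fun S => ((oc G (A \ S) : ℤ) - S.card) * (A.card + 1) + S.card) ⟨∅, Finset.empty_mem_powerset A⟩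
    have hSA : S ⊆ A := Finset.mem_powerset.1 hSpow
    set B := A \ S with hB
    set D : ℤ := (oc G B : ℤ) - S.card with hD
    have hDmax : ∀ T ⊆ A, (oc G (A \ T) : ℤ) - T.card ≤ D := by
      intro T hT
      by_contra hc
      push_neg at hc
      have h1 := hSmax T (Finset.mem_powerset.2 hT)
      have hsc : (S.card : ℤ) ≤ A.card := by exact_mod_cast Finset.card_le_card hSA
      have htc : (0 : ℤ) ≤ T.card := by positivity
      nlinarith [hc, h1]
    have hDcard : ∀ T ⊆ A, (oc G (A \ T) : ℤ) - T.card = D → (T.card : ℤ) ≤ S.card := by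
      intro T hT hTD
      have h1 := hSmax T (Finset.mem_powerset.2 hT)
      rw [hTD] at h1
      linarith
    have hD0 : 0 ≤ D := by
      have h := hDmax ∅ (Finset.empty_subset A)
      simp only [Finset.sdiff_empty, Finset.card_empty, Nat.cast_zero, sub_zero] at h
      exact le_trans (by positivity) h
    -- parity of deficiencies
    have hpar : ∀ T ⊆ A, ((oc G (A \ T) : ℤ) - T.card) % 2 = (A.card : ℤ) % 2 := by
      intro T hT
      have h := oc_parity (G := G) (A := A \ T) hsym
      have h2 : ((A \ T).card : ℤ) = A.card - T.card := by
        rw [Finset.card_sdiff_of_subset hT]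
        exact_mod_cast Nat.cast_sub (Finset.card_le_card hT)
      omega
    have hDstrict : ∀ T ⊆ A, (S.card : ℤ) < T.card →
        (oc G (A \ T) : ℤ) - T.card ≤ D - 2 := by
      intro T hT hlt
      have h1 := hDmax T hT
      have h3 := hpar T hT
      have h4 := hpar S hSA
      rcases eq_or_lt_of_le h1 with he | hlt2
      · exact absurd (hDcard T hT he) (by linarith)
      · rw [← hB] at h4
        omega
    -- Step 1 : all components of B are odd
    have hodd : ∀ C ∈ comps G B, Odd C.card := by
      intro C hC
      by_contra heven
      obtain ⟨v, hv⟩ := comps_nonempty hC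
      have hvB : v ∈ B := comps_subset hC hv
      have hvA : v ∈ A := (Finset.mem_sdiff.1 hvB).1
      have hvS : v ∉ S := (Finset.mem_sdiff.1 hvB).2
      set T := insert v S with hT
      have hTA : T ⊆ A := Finset.insert_subset hvA hSA
      have hATB : A \ T = B \ {v} := by
        rw [hB, hT]
        ext x
        simp only [Finset.mem_sdiff, Finset.mem_insert, Finset.mem_singleton]
        tauto
      obtain ⟨-, -, hocs⟩ := oc_split_comp hsym hC (Finset.sdiff_subset : C \ {v} ⊆ C)
      have hBv : B \ {v} = (C \ {v}) ∪ (B \ C) := by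
        ext x
        simp only [Finset.mem_sdiff, Finset.mem_union, Finset.mem_singleton]
        constructor
        · rintro ⟨hxB, hxv⟩
          by_cases hxC : x ∈ C
          · exact Or.inl ⟨hxC, hxv⟩
          · exact Or.inr ⟨hxB, hxC⟩
        · rintro (⟨hxC, hxv⟩ | ⟨hxB, hxC⟩)
          · exact ⟨comps_subset hC hxC, hxv⟩
          · refine ⟨hxB, ?_⟩
            rintro rfl
            exact hxC hv
      have h1 : oc G (A \ T) = oc G (C \ {v}) + oc G (B \ C) := by
        rw [hATB, hBv, hocs]
      have hocB2 : oc G B = oc G (B \ C) := by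
        rw [oc_eq_comp_add hsym hC, oc_self_even hsym hC heven, zero_add]
      have hodd1 : Odd (C \ {v}).card := by
        rw [Finset.card_sdiff_of_subset (Finset.singleton_subset_iff.2 hv), Finset.card_singleton]
        have hpos : 1 ≤ C.card := Finset.card_pos.2 ⟨v, hv⟩
        rw [Nat.not_odd_iff_even, Nat.even_iff] at heven
        rw [Nat.odd_iff]
        omega
      have hocCv : 1 ≤ oc G (C \ {v}) := oc_pos_of_odd hsym hodd1
      have hTcard : (T.card : ℤ) = S.card + 1 := by
        rw [hT, Finset.card_insert_of_notMem hvS]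
        push_cast
        ring
      have hge : D ≤ (oc G (A \ T) : ℤ) - T.card := by
        rw [h1, hTcard, hD, hocB2]
        push_cast
        linarith
      have hEq : (oc G (A \ T) : ℤ) - T.card = D := le_antisymm (hDmax T hTA) hge
      have := hDcard T hTA hEq
      rw [hTcard] at this
      linarith
    have hocB : oc G B = (comps G B).card := by
      rw [oc, Finset.filter_true_of_mem hodd]
    -- Step 2 : Hall condition
    have hall : ∀ J : Finset {y : V // y ∈ S},
        J.card ≤ (J.biUnion (fun s => (comps G B).filter (fun C => ∃ y ∈ C, G s.1 y))).card := by
      intro J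
      set T : Finset V := J.image Subtype.val with hTdef
      have hTS : T ⊆ S := by
        intro z hz
        rw [hTdef, Finset.mem_image] at hz
        obtain ⟨s, _, rfl⟩ := hz
        exact s.2
      have hTJ : T.card = J.card := Finset.card_image_of_injective J Subtype.val_injective
      set N : Finset (Finset V) := (comps G B).filter (fun C => ∃ s' ∈ T, ∃ y ∈ C, G s' y)
        with hNdef
      have hbiU : J.biUnion (fun s => (comps G B).filter (fun C => ∃ y ∈ C, G s.1 y)) = N := by
        ext C
        simp only [Finset.mem_biUnion, hNdef, Finset.mem_filter, hTdef, Finset.mem_image]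
        constructor
        · rintro ⟨s, hsJ, hC, y, hy, hG⟩
          exact ⟨hC, s.1, ⟨s, hsJ, rfl⟩, y, hy, hG⟩
        · rintro ⟨hC, s', ⟨s, hsJ, rfl⟩, y, hy, hG⟩
          exact ⟨s, hsJ, hC, y, hy, hG⟩
      set S' := S \ T with hS'
      have hS'A : S' ⊆ A := Finset.sdiff_subset.trans hSA
      have hK : ∀ C ∈ comps G B, C ∉ N → C ∈ comps G (A \ S') := by
        intro C hC hCN
        obtain ⟨hne, hCB, hconn2, hclose⟩ := (mem_comps_iff (A := B) hsym).1 hC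
        rw [mem_comps_iff hsym]
        have hsub2 : C ⊆ A \ S' := by
          intro z hz
          have hzB := hCB hz
          rw [Finset.mem_sdiff] at hzB ⊢
          exact ⟨hzB.1, fun hzS' => hzB.2 (Finset.mem_sdiff.1 hzS').1⟩
        refine ⟨hne, hsub2, hconn2, ?_⟩
        intro u hu w hw hG
        rw [Finset.mem_sdiff] at hw
        by_cases hwB : w ∈ B
        · exact hclose u hu w hwB hG
        · have hwS : w ∈ S := by
            rw [hB, Finset.mem_sdiff] at hwB
            push_neg at hwB
            exact hwB hw.1
          have hwT : w ∈ T := by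
            by_contra hwT
            exact hw.2 (Finset.mem_sdiff.2 ⟨hwS, hwT⟩)
          exact absurd (Finset.mem_filter.2 ⟨hC, ⟨w, hwT, u, hu, hsym hG⟩⟩) hCN
      set K := (comps G B).filter (fun C => C ∉ N) with hKdef
      have hKsub : K ⊆ Finset.filter (fun C => Odd C.card) (comps G (A \ S')) := by
        intro C hCK
        rw [Finset.mem_filter] at hCK ⊢
        exact ⟨hK C hCK.1 hCK.2, hodd C hCK.1⟩
      have hNsub : N ⊆ comps G B := Finset.filter_subset _ _
      have hKcard : (comps G B).card ≤ N.card + K.card := by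
        have h2 : K = comps G B \ N := by
          rw [hKdef]
          ext C
          simp only [Finset.mem_sdiff, Finset.mem_filter]
          try tauto
        rw [h2, Finset.card_sdiff_of_subset hNsub]
        have := Finset.card_le_card hNsub
        omega
      have hocS' : (comps G B).card ≤ N.card + oc G (A \ S') := by
        have := Finset.card_le_card hKsub
        rw [oc]
        omega
      have hS'card : (S'.card : ℤ) = (S.card : ℤ) - T.card := by
        rw [hS', Finset.card_sdiff_of_subset hTS]
        exact_mod_cast Nat.cast_sub (Finset.card_le_card hTS)
      have hdef := hDmax S' hS'A
      rw [hbiU]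
      have hcast : (T.card : ℤ) ≤ N.card := by
        rw [hD, hocB] at hdef
        omega
      omega
    obtain ⟨f, hfinj, hf⟩ := (Finset.all_card_le_biUnion_card_iff_exists_injective
      (fun s : {y : V // y ∈ S} => (comps G B).filter (fun C => ∃ y ∈ C, G s.1 y))).1 hall
    have hfcomp : ∀ s, f s ∈ comps G B := fun s => (Finset.mem_filter.1 (hf s)).1
    have hfadj : ∀ s, ∃ y ∈ f s, G s.1 y := fun s => (Finset.mem_filter.1 (hf s)).2
    choose x hx1 hx2 using hfadj
    have hxB : ∀ a, x a ∈ B := fun a => comps_subset (hfcomp a) (hx1 a)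
    have hSBdis : Disjoint S B := by
      rw [hB]
      exact Finset.disjoint_sdiff
    -- roots
    set ρ : Finset V → V := fun C =>
      if h : ∃ a, f a = C then x h.choose
      else if hn : C.Nonempty then hn.choose else Classical.arbitrary V with hρdef
    have hρmem : ∀ C ∈ comps G B, ρ C ∈ C := by
      intro C hC
      simp only [hρdef]
      split_ifs with h1 h2
      · have hmem := hx1 h1.choose
        rwa [h1.choose_spec] at hmem
      · exact h2.choose_spec
      · exact absurd (comps_nonempty hC) h2
    have hρf : ∀ a, ρ (f a) = x a := by
      intro a
      have hex : ∃ a', f a' = f a := ⟨a, rfl⟩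
      simp only [hρdef]
      rw [dif_pos hex, hfinj hex.choose_spec]
    -- Step 3 : inside each component, matchings missing exactly the root
    have hcomp_match : ∀ C, ∃ MC : Finset (Sym2 V), C ∈ comps G B →
        (MOn G (C \ {ρ C}) MC ∧ (C.card : ℤ) - 1 ≤ 2 * MC.card) := by
      intro C
      by_cases hC : C ∈ comps G B
      swap
      · exact ⟨∅, fun h => absurd h hC⟩
      have hrC : ρ C ∈ C := hρmem C hC
      have hCB : C ⊆ B := comps_subset hC
      have hmd : maxDef G (C \ {ρ C}) ≤ 0 := by
        apply Finset.max'_le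
        intro y hy
        rw [Finset.mem_image] at hy
        obtain ⟨T, hTpow, rfl⟩ := hy
        rw [Finset.mem_powerset] at hTpow
        set RT : Finset V := insert (ρ C) T with hRTdef
        have hrT : ρ C ∉ T := fun hmem => (Finset.mem_sdiff.1 (hTpow hmem)).2 (by simp)
        have hRTC : RT ⊆ C := Finset.insert_subset hrC (hTpow.trans Finset.sdiff_subset)
        have hRTB : RT ⊆ B := hRTC.trans hCB
        set Sx := S ∪ RT with hSxdef
        have hSxA : Sx ⊆ A := Finset.union_subset hSA (hRTB.trans (hB ▸ Finset.sdiff_subset))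
        have hAx : A \ Sx = B \ RT := by
          rw [hSxdef, hB]
          ext z
          simp only [Finset.mem_sdiff, Finset.mem_union]
          tauto
        have hBRT : B \ RT = (C \ RT) ∪ (B \ C) := by
          ext z
          simp only [Finset.mem_sdiff, Finset.mem_union]
          constructor
          · rintro ⟨hzB, hzRT⟩
            by_cases hzC : z ∈ C
            · exact Or.inl ⟨hzC, hzRT⟩
            · exact Or.inr ⟨hzB, hzC⟩
          · rintro (⟨hzC, hzRT⟩ | ⟨hzB, hzC⟩)
            · exact ⟨hCB hzC, hzRT⟩
            · exact ⟨hzB, fun hzRT => hzC (hRTC hzRT)⟩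
        obtain ⟨-, -, hocs⟩ := oc_split_comp hsym hC (Finset.sdiff_subset : C \ RT ⊆ C)
        have h2 : oc G (A \ Sx) = oc G (C \ RT) + oc G (B \ C) := by
          rw [hAx, hBRT, hocs]
        have hocBC : oc G B = 1 + oc G (B \ C) := by
          rw [oc_eq_comp_add hsym hC, oc_self_odd hsym hC (hodd C hC)]
        have hRTcard : (RT.card : ℤ) = T.card + 1 := by
          rw [hRTdef, Finset.card_insert_of_notMem hrT]
          push_cast
          ring
        have hRTSdis : Disjoint S RT := hSBdis.mono_right hRTB
        have hSxcard : (Sx.card : ℤ) = S.card + T.card + 1 := by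
          rw [hSxdef, Finset.card_union_of_disjoint hRTSdis]
          push_cast
          linarith [hRTcard]
        have hstrict := hDstrict Sx hSxA (by rw [hSxcard]; omega)
        have hgoal : (oc G (C \ RT) : ℤ) ≤ T.card := by
          rw [h2] at hstrict
          rw [hD, hocBC] at hstrict
          push_cast at hstrict ⊢
          linarith [hSxcard, hstrict]
        have hset : (C \ {ρ C}) \ T = C \ RT := by
          ext z
          simp only [Finset.mem_sdiff, Finset.mem_singleton, hRTdef, Finset.mem_insert]
          tauto
        rw [hset]
        linarith
      -- apply induction hypothesis
      have hcard_le : (C \ {ρ C}).card ≤ n := by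
        have h1 : (C \ {ρ C}).card = C.card - 1 := by
          rw [Finset.card_sdiff_of_subset (Finset.singleton_subset_iff.2 hrC), Finset.card_singleton]
        have h2 : C.card ≤ A.card := Finset.card_le_card (hCB.trans (hB ▸ Finset.sdiff_subset))
        have h3 : 1 ≤ C.card := Finset.card_pos.2 ⟨ρ C, hrC⟩
        omega
      obtain ⟨MC, hMC, hMCcard⟩ := IH (C \ {ρ C}) hcard_le
      refine ⟨MC, fun _ => ⟨hMC, ?_⟩⟩
      have hCr : ((C \ {ρ C}).card : ℤ) = (C.card : ℤ) - 1 := by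
        rw [Finset.card_sdiff_of_subset (Finset.singleton_subset_iff.2 hrC), Finset.card_singleton]
        have h3 : 1 ≤ C.card := Finset.card_pos.2 ⟨ρ C, hrC⟩
        push_cast [Nat.cast_sub h3]
        ring
      linarith
    choose g hg using hcomp_match
    -- the star matching from S into distinct components
    set M₀ : Finset (Sym2 V) := Finset.univ.image (fun a : {y : V // y ∈ S} => s(a.1, x a))
      with hM₀def
    have hinj0 : Function.Injective (fun a : {y : V // y ∈ S} => s(a.1, x a)) := by
      intro a b hEq
      simp only [Sym2.eq_iff] at hEq
      rcases hEq with ⟨h1, _⟩ | ⟨h1, h2⟩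
      · exact Subtype.ext h1
      · exact absurd (h1 ▸ a.2) (Finset.disjoint_right.1 hSBdis (hxB b))
    have hM₀card : M₀.card = S.card := by
      rw [hM₀def, Finset.card_image_of_injective _ hinj0, Finset.card_univ, Fintype.card_coe]
    set X : Finset V := Finset.univ.image (fun a : {y : V // y ∈ S} => x a) with hXdef
    have hXB : X ⊆ B := by
      intro z hz
      rw [hXdef, Finset.mem_image] at hz
      obtain ⟨a, _, rfl⟩ := hz
      exact hxB a
    have hM₀ : MOn G (S ∪ X) M₀ := by
      constructor
      · intro e he
        rw [hM₀def, Finset.mem_image] at he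
        obtain ⟨a, _, rfl⟩ := he
        refine ⟨a.1, x a, ?_, hx2 a, Finset.mem_union_left _ a.2,
          Finset.mem_union_right _ ?_, rfl⟩
        · intro hEq
          exact Finset.disjoint_left.1 hSBdis a.2 (hEq ▸ hxB a)
        · rw [hXdef, Finset.mem_image]
          exact ⟨a, Finset.mem_univ a, rfl⟩
      · intro e he e' he' hee v ⟨hv1, hv2⟩
        rw [hM₀def, Finset.mem_image] at he he'
        obtain ⟨a, _, rfl⟩ := he
        obtain ⟨b, _, rfl⟩ := he'
        have hne : a ≠ b := fun hEq => hee (by rw [hEq])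
        rcases Sym2.mem_iff.1 hv1 with rfl | rfl <;> rcases Sym2.mem_iff.1 hv2 with h | h
        · exact hne (Subtype.ext h)
        · exact Finset.disjoint_left.1 hSBdis a.2 (h ▸ hxB b)
        · exact Finset.disjoint_left.1 hSBdis (h ▸ b.2) (hxB a)
        · have hfne : f a ≠ f b := fun hEq => hne (hfinj hEq)
          have hd := comps_disjoint hsym (hfcomp a) (hfcomp b) hfne
          exact Finset.disjoint_left.1 hd (hx1 a) (h ▸ hx1 b)
    -- rest of the matching inside components
    have hdisC : ∀ C ∈ comps G B, ∀ C' ∈ comps G B, C ≠ C' →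
        Disjoint (C \ {ρ C}) (C' \ {ρ C'}) := fun C hC C' hC' hne =>
      Finset.disjoint_of_subset_left Finset.sdiff_subset
        (Finset.disjoint_of_subset_right Finset.sdiff_subset (comps_disjoint hsym hC hC' hne))
    obtain ⟨hMrest, hMrestcard⟩ := MOn.biUnion (G := G) (𝒞 := comps G B)
      (h := fun C => C \ {ρ C}) (g := g) hdisC (fun C hC => (hg C hC).1)
    have hdisj0 : Disjoint (S ∪ X) ((comps G B).biUnion (fun C => C \ {ρ C})) := by
      rw [Finset.disjoint_left]
      intro v hv hv2
      rw [Finset.mem_biUnion] at hv2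
      obtain ⟨C, hC, hvC⟩ := hv2
      rw [Finset.mem_sdiff, Finset.mem_singleton] at hvC
      rcases Finset.mem_union.1 hv with hvS | hvX
      · exact Finset.disjoint_left.1 hSBdis hvS (comps_subset hC hvC.1)
      · rw [hXdef, Finset.mem_image] at hvX
        obtain ⟨a, _, rfl⟩ := hvX
        have hCfa : C = f a := by
          by_contra hne
          exact Finset.disjoint_left.1 (comps_disjoint hsym hC (hfcomp a) hne) hvC.1 (hx1 a)
        exact hvC.2 (by rw [hCfa, hρf a])
    obtain ⟨hMall, hMallcard⟩ := hM₀.union hMrest hdisj0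
    refine ⟨M₀ ∪ (comps G B).biUnion g, hMall.mono ?_, ?_⟩
    · apply Finset.union_subset (Finset.union_subset hSA (hXB.trans (hB ▸ Finset.sdiff_subset)))
      apply Finset.biUnion_subset.2
      intro C hC
      exact (Finset.sdiff_subset.trans (comps_subset hC)).trans (hB ▸ Finset.sdiff_subset)
    · -- cardinality count
      have hsumge : ∑ C ∈ comps G B, ((C.card : ℤ) - 1) ≤
          ∑ C ∈ comps G B, (2 * ((g C).card : ℤ)) :=
        Finset.sum_le_sum (fun C hC => (hg C hC).2)
      have hsum1 : ∑ C ∈ comps G B, (C.card : ℤ) = (B.card : ℤ) := by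
        rw [← sum_comps_card (G := G) (A := B) hsym]
        push_cast
        rfl
      have hsum2 : ∑ C ∈ comps G B, ((C.card : ℤ) - 1) =
          (B.card : ℤ) - (comps G B).card := by
        rw [Finset.sum_sub_distrib, hsum1]
        simp
      have hABcard : (A.card : ℤ) = S.card + B.card := by
        rw [hB, Finset.card_sdiff_of_subset hSA]
        have := Finset.card_le_card hSA
        push_cast [Nat.cast_sub this]
        ring
      have hmaxD : D ≤ maxDef G A := by
        have h := defic_le_maxDef (G := G) (A := A) hSA
        rw [← hB] at h
        rw [hD]
        exact h
      have hMrestcard' : ((((comps G B).biUnion g).card : ℤ)) =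
          ∑ C ∈ comps G B, ((g C).card : ℤ) := by
        rw [hMrestcard]
        push_cast
        rfl
      have hMallcard' : (((M₀ ∪ (comps G B).biUnion g).card : ℤ)) =
          (S.card : ℤ) + ∑ C ∈ comps G B, ((g C).card : ℤ) := by
        rw [hMallcard, hM₀card]
        push_cast [← hMrestcard']
        try ring
      rw [hMallcard']
      have hDval : D = ((comps G B).card : ℤ) - S.card := by rw [hD, hocB]
      have hsum3 : (B.card : ℤ) - (comps G B).card ≤
          2 * ∑ C ∈ comps G B, ((g C).card : ℤ) := by
        rw [← hsum2]
        rw [Finset.mul_sum] at *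
        linarith [hsumge]
      linarith [hmaxD, hABcard, hsum3, hDval]

lemma countP_eq_sum_map {α : Type*} (E : Multiset α) (p : α → Prop) [DecidablePred p] :
    E.countP p = (E.map (fun e => if p e then 1 else 0)).sum := by
  induction E using Multiset.induction with
  | empty => simp
  | cons a E ih => simp [Multiset.countP_cons, ih]; omega

lemma sum_countP_swap {α β : Type*} [DecidableEq β] (E : Multiset α) (F : Finset β)
    (p : β → α → Prop) [∀ C e, Decidable (p C e)] :
    ∑ C ∈ F, E.countP (p C) = (E.map (fun e => (F.filter (fun C => p C e)).card)).sum := by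
  induction E using Multiset.induction with
  | empty => simp
  | cons a E ih =>
      simp only [Multiset.countP_cons, Multiset.map_cons, Multiset.sum_cons, Finset.sum_add_distrib, ih]
      rw [Finset.sum_boole]
      push_cast
      omega

lemma msum_le {α : Type*} (E : Multiset α) (f g : α → ℕ) (h : ∀ a ∈ E, f a ≤ g a) :
    (E.map f).sum ≤ (E.map g).sum := by
  induction E using Multiset.induction with
  | empty => simp
  | cons a E ih =>
      simp only [Multiset.map_cons, Multiset.sum_cons]
      have := h a (Multiset.mem_cons_self a E)
      have := ih (fun b hb => h b (Multiset.mem_cons_of_mem hb))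
      omega

/-- per-edge vertex count in `C` -/
lemma edge_vertex_count {α : Type*} [DecidableEq α] (C : Finset α) (e : Sym2 α)
    (hnd : ¬ e.IsDiag) [Decidable (∀ v ∈ e, v ∈ C)]
    [Decidable ((∃ v ∈ e, v ∈ C) ∧ ¬ (∀ v ∈ e, v ∈ C))] :
    (C.filter (· ∈ e)).card =
      2 * (if ∀ v ∈ e, v ∈ C then 1 else 0) +
      (if (∃ v ∈ e, v ∈ C) ∧ ¬ (∀ v ∈ e, v ∈ C) then 1 else 0) := by
  obtain ⟨a, b, rfl⟩ : ∃ a b, e = s(a, b) := ⟨e.out.1, e.out.2, (Quot.out_eq e).symm⟩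
  have hab : a ≠ b := by rwa [Sym2.mk_isDiag_iff] at hnd
  have hfa : (∀ v ∈ s(a, b), v ∈ C) ↔ a ∈ C ∧ b ∈ C := by
    constructor
    · intro h
      exact ⟨h a (by simp), h b (by simp)⟩
    · rintro ⟨h1, h2⟩ v hv
      rcases Sym2.mem_iff.1 hv with rfl | rfl <;> assumption
  have hex : (∃ v ∈ s(a, b), v ∈ C) ↔ a ∈ C ∨ b ∈ C := by
    constructor
    · rintro ⟨v, hv, hvC⟩
      rcases Sym2.mem_iff.1 hv with rfl | rfl
      · exact Or.inl hvC
      · exact Or.inr hvC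
    · rintro (h | h)
      · exact ⟨a, by simp, h⟩
      · exact ⟨b, by simp, h⟩
  have hfilter : C.filter (· ∈ s(a, b)) = (C.filter (fun z => z = a ∨ z = b)) := by
    apply Finset.filter_congr
    intro z _
    simp [Sym2.mem_iff]
  rw [hfilter]
  by_cases ha : a ∈ C <;> by_cases hb : b ∈ C
  · have hset : C.filter (fun z => z = a ∨ z = b) = {a, b} := by
      ext z
      simp only [Finset.mem_filter, Finset.mem_insert, Finset.mem_singleton]
      constructor
      · exact fun h => h.2
      · rintro (rfl | rfl) <;> exact ⟨by assumption, by tauto⟩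
    rw [hset, Finset.card_pair hab, if_pos (hfa.2 ⟨ha, hb⟩),
      if_neg (fun h => h.2 (hfa.2 ⟨ha, hb⟩))]
  · have hset : C.filter (fun z => z = a ∨ z = b) = {a} := by
      ext z
      simp only [Finset.mem_filter, Finset.mem_singleton]
      constructor
      · rintro ⟨hz, rfl | rfl⟩
        · rfl
        · exact absurd hz hb
      · rintro rfl
        exact ⟨ha, Or.inl rfl⟩
    rw [hset, Finset.card_singleton, if_neg (fun h => hb (hfa.1 h).2),
      if_pos ⟨hex.2 (Or.inl ha), fun h => hb (hfa.1 h).2⟩]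
  · have hset : C.filter (fun z => z = a ∨ z = b) = {b} := by
      ext z
      simp only [Finset.mem_filter, Finset.mem_singleton]
      constructor
      · rintro ⟨hz, rfl | rfl⟩
        · exact absurd hz ha
        · rfl
      · rintro rfl
        exact ⟨hb, Or.inr rfl⟩
    rw [hset, Finset.card_singleton, if_neg (fun h => ha (hfa.1 h).1),
      if_pos ⟨hex.2 (Or.inr hb), fun h => ha (hfa.1 h).1⟩]
  · have hset : C.filter (fun z => z = a ∨ z = b) = ∅ := by
      ext z
      simp only [Finset.mem_filter, Finset.notMem_empty, iff_false]
      rintro ⟨hz, rfl | rfl⟩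
      · exact ha hz
      · exact hb hz
    rw [hset, if_neg (fun h => ha (hfa.1 h).1),
      if_neg (fun h => (hex.1 h.1).elim ha hb)]
    simp

lemma sum_two_add {α : Type*} (E : Multiset α) (f g : α → ℕ) :
    (E.map (fun e => 2 * f e + g e)).sum = 2 * (E.map f).sum + (E.map g).sum := by
  induction E using Multiset.induction with
  | empty => simp
  | cons a E ih =>
      simp only [Multiset.map_cons, Multiset.sum_cons, ih]
      ring

/-- degree sum over a vertex set equals twice inner edges plus boundary edges -/
lemma degree_sum_set {m : ℕ} (E : Multiset (Sym2 (Fin m))) (hloop : Multigraph.Loopless E)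
    (C : Finset (Fin m)) :
    ∑ v ∈ C, Multigraph.degree E v =
      2 * E.countP (fun e => ∀ v ∈ e, v ∈ C) +
      E.countP (fun e => (∃ v ∈ e, v ∈ C) ∧ ¬ (∀ v ∈ e, v ∈ C)) := by
  have h1 : ∑ v ∈ C, Multigraph.degree E v =
      (E.map (fun e => (C.filter (· ∈ e)).card)).sum := by
    simp only [Multigraph.degree]
    exact sum_countP_swap E C (fun v e => v ∈ e)
  have h2 : E.map (fun e => (C.filter (· ∈ e)).card) =
      E.map (fun e => 2 * (if ∀ v ∈ e, v ∈ C then 1 else 0) +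
        (if (∃ v ∈ e, v ∈ C) ∧ ¬ (∀ v ∈ e, v ∈ C) then 1 else 0)) := by
    apply Multiset.map_congr rfl
    intro e he
    exact edge_vertex_count C e (hloop e he)
  rw [h1, h2, sum_two_add, ← countP_eq_sum_map, ← countP_eq_sum_map]

lemma exists_maxDef_witness (G : V → V → Prop) (A : Finset V) :
    ∃ S ⊆ A, maxDef G A = (oc G (A \ S) : ℤ) - S.card := by
  classical
  have h := Finset.max'_mem (A.powerset.image (fun S => (oc G (A \ S) : ℤ) - S.card))
    ⟨(oc G (A \ ∅) : ℤ) - (∅ : Finset V).card,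
      Finset.mem_image_of_mem _ (Finset.empty_mem_powerset A)⟩
  obtain ⟨S, hSpow, hval⟩ := Finset.mem_image.1 h
  exact ⟨S, Finset.mem_powerset.1 hSpow, hval.symm⟩

lemma exists_crossing {α : Type*} {r : α → α → Prop} {C : Finset α} {u w : α}
    (h : Relation.ReflTransGen r u w) (hu : u ∈ C) (hw : w ∉ C) :
    ∃ a b, a ∈ C ∧ b ∉ C ∧ r a b := by
  induction h with
  | refl => exact absurd hu hw
  | @tail b c hb hbc ih =>
      by_cases hbC : b ∈ C
      · exact ⟨b, c, hbC, hw, hbc⟩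
      · exact ih hbC

end TB

/-- For a `q`-regular connected loopless multigraph on `m ≥ 3` vertices with `q ≥ 2` even,
the matching number is at least `min(⌊m/2⌋, ⌈(q+2)m/(3q+2)⌉)`. -/
theorem matching_number_lower_bound_even (q m : ℕ) (hq : 2 ≤ q) (hqeven : Even q)
    (hm : 3 ≤ m) (E : Multiset (Sym2 (Fin m)))
    (hloop : Multigraph.Loopless E) (hconn : Multigraph.Connected E)
    (hreg : ∀ v : Fin m, Multigraph.degree E v = q) :
    ∃ M : Finset (Sym2 (Fin m)), Multigraph.IsMatching E M ∧
      min ⌊(m : ℚ) / 2⌋ ⌈((q : ℚ) + 2) * m / (3 * q + 2)⌉ ≤ (M.card : ℤ) := by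
  classical
  set G : Fin m → Fin m → Prop := Multigraph.Adj E with hGdef
  have hGsym : Symmetric G := by
    rintro u v ⟨e, he, hu, hv, hne⟩
    exact ⟨e, he, hv, hu, hne.symm⟩
  obtain ⟨M, hM, hMcard⟩ := TB.tb (G := G) hGsym
    (Finset.univ : Finset (Fin m)).card Finset.univ le_rfl
  have hMgraph : Multigraph.IsMatching E M := by
    constructor
    · intro e he
      obtain ⟨u, v, huv, hadj, _, _, rfl⟩ := hM.1 e he
      obtain ⟨e', he', hu, hv, _⟩ := hadj
      rwa [Sym2.eq_of_ne_mem huv (Sym2.mem_mk_left u v) (Sym2.mem_mk_right u v) hu hv]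
    · exact hM.2
  refine ⟨M, hMgraph, ?_⟩
  obtain ⟨S, hSuniv, hSval⟩ := TB.exists_maxDef_witness G (Finset.univ : Finset (Fin m))
  rw [hSval] at hMcard
  have hmuniv : (Finset.univ : Finset (Fin m)).card = m := by simp
  rw [hmuniv] at hMcard
  set B : Finset (Fin m) := Finset.univ \ S with hBdef
  -- case split on deficiency
  by_cases hd1 : (m : ℤ) - 2 * M.card ≤ 1
  · -- floor case
    refine le_trans (min_le_left _ _) ?_
    have hle : ((m : ℚ) / 2) ≤ (M.card : ℚ) + 1 / 2 := by
      have h2 : (m : ℚ) ≤ 2 * M.card + 1 := by exact_mod_cast (by linarith : (m : ℤ) ≤ 2 * M.card + 1)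
      linarith
    calc ⌊(m : ℚ) / 2⌋ ≤ ⌊(M.card : ℚ) + 1 / 2⌋ := Int.floor_mono hle
      _ = M.card := by
          rw [show ((M.card : ℚ) + 1 / 2) = ((M.card : ℤ) : ℚ) + 1 / 2 by push_cast; ring,
            Int.floor_intCast_add]
          norm_num
  · push_neg at hd1
    have hd2 : 2 ≤ (m : ℤ) - 2 * M.card := hd1
    -- S is nonempty
    have hS1 : 1 ≤ S.card := by
      by_contra hc
      push_neg at hc
      have hS0 : S = ∅ := Finset.card_eq_zero.1 (by omega)
      have hBuniv : B = Finset.univ := by rw [hBdef, hS0, Finset.sdiff_empty]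
      have hone : TB.oc G B ≤ 1 := by
        have hcomps : (TB.comps G B).card ≤ 1 := by
          rw [Finset.card_le_one]
          intro C hC C' hC'
          obtain ⟨v, hv, rfl⟩ := TB.mem_comps_of_mem hC
          obtain ⟨w, hw, rfl⟩ := TB.mem_comps_of_mem hC'
          apply TB.comp_eq_of_reach hGsym
          exact Relation.ReflTransGen.mono (p := TB.Step G B)
            (show ∀ x y, Multigraph.Adj E x y → TB.Step G B x y from fun x y h => ⟨by rw [hBuniv]; exact Finset.mem_univ x,
              by rw [hBuniv]; exact Finset.mem_univ y, h⟩) v w (hconn v w)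
        exact le_trans (Finset.card_le_card (Finset.filter_subset _ _)) hcomps
      rw [hS0] at hMcard
      simp only [Finset.card_empty, Nat.cast_zero, sub_zero] at hMcard
      omega
    -- counting setup
    set 𝒪 := (TB.comps G B).filter (fun C => Odd C.card) with h𝒪
    have hocB : TB.oc G B = 𝒪.card := rfl
    set out : Finset (Fin m) → ℕ :=
      fun C => E.countP (fun e => (∃ v ∈ e, v ∈ C) ∧ ¬ (∀ v ∈ e, v ∈ C)) with hout
    have hdegC : ∀ C ∈ TB.comps G B, q * C.card =
        2 * E.countP (fun e => ∀ v ∈ e, v ∈ C) + out C := by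
      intro C hC
      have h := TB.degree_sum_set E hloop C
      rw [Finset.sum_congr rfl (fun v _ => hreg v), Finset.sum_const, smul_eq_mul,
        mul_comm] at h
      exact h
    have houteven : ∀ C ∈ TB.comps G B, out C % 2 = 0 := by
      intro C hC
      have h := hdegC C hC
      have he : (q * C.card) % 2 = 0 := Nat.even_iff.1 (hqeven.mul_right _)
      generalize hqc : q * C.card = w at h he
      omega
    have houtpos : ∀ C ∈ 𝒪, 1 ≤ out C := by
      obtain ⟨w, hw⟩ := Finset.card_pos.1 hS1
      intro C hC
      have hC' := (Finset.mem_filter.1 hC).1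
      obtain ⟨u, hu⟩ := TB.comps_nonempty hC'
      have hwnot : w ∉ C := fun hmem => (Finset.mem_sdiff.1 (TB.comps_subset hC' hmem)).2 hw
      obtain ⟨a, b, haC, hbC, hab⟩ := TB.exists_crossing (hconn u w) hu hwnot
      obtain ⟨e, he, hae, hbe, hne⟩ := hab
      exact Multiset.countP_pos.2 ⟨e, he, ⟨a, hae, haC⟩, fun hall => hbC (hall b hbe)⟩
    have hout2 : ∀ C ∈ 𝒪, 2 ≤ out C := by
      intro C hC
      have h1 := houtpos C hC
      have h2 := houteven C (Finset.mem_filter.1 hC).1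
      omega
    have hsingle : ∀ C ∈ 𝒪, C.card = 1 → out C = q := by
      intro C hC h1
      obtain ⟨v, rfl⟩ := Finset.card_eq_one.1 h1
      have hinn : E.countP (fun e => ∀ w ∈ e, w ∈ ({v} : Finset (Fin m))) = 0 := by
        rw [Multiset.countP_eq_zero]
        intro e he hall
        apply hloop e he
        obtain ⟨a, b, rfl⟩ : ∃ a b, e = s(a, b) := ⟨e.out.1, e.out.2, (Quot.out_eq e).symm⟩
        have ha := hall a (by simp)
        have hb := hall b (by simp)
        simp only [Finset.mem_singleton] at ha hb
        rw [Sym2.mk_isDiag_iff, ha, hb]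
      have h := hdegC {v} (Finset.mem_filter.1 hC).1
      rw [hinn, Finset.card_singleton] at h
      omega
    -- edge counting: total boundary at most q * |S|
    have hedgesum : ∑ C ∈ 𝒪, out C ≤ q * S.card := by
      have hswap := TB.sum_countP_swap E 𝒪
        (fun C e => (∃ v ∈ e, v ∈ C) ∧ ¬ (∀ v ∈ e, v ∈ C))
      have hstep2 : (E.map (fun e =>
            (𝒪.filter (fun C => (∃ v ∈ e, v ∈ C) ∧ ¬ (∀ v ∈ e, v ∈ C))).card)).sum ≤
          (E.map (fun e => (S.filter (· ∈ e)).card)).sum := by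
        apply TB.msum_le
        intro e he
        by_cases hne : (𝒪.filter (fun C => (∃ v ∈ e, v ∈ C) ∧ ¬ (∀ v ∈ e, v ∈ C))).Nonempty
        · obtain ⟨C0, hC0⟩ := hne
          rw [Finset.mem_filter] at hC0
          obtain ⟨hC0O, ⟨v, hv, hvC⟩, hnall⟩ := hC0
          push_neg at hnall
          obtain ⟨w, hw, hwC⟩ := hnall
          have hvw : v ≠ w := fun h => hwC (h ▸ hvC)
          have hC0' := (Finset.mem_filter.1 hC0O).1
          have hwS : w ∈ S := by
            by_contra hwS
            have hwB : w ∈ B := Finset.mem_sdiff.2 ⟨Finset.mem_univ w, hwS⟩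
            exact hwC (TB.mem_comp_closure hGsym hC0' hvC hwB ⟨e, he, hv, hw, hvw⟩)
          have hcard1 : (𝒪.filter (fun C => (∃ v ∈ e, v ∈ C) ∧ ¬ (∀ v ∈ e, v ∈ C))).card ≤ 1 := by
            rw [Finset.card_le_one]
            intro C1 h1 C2 h2
            rw [Finset.mem_filter] at h1 h2
            obtain ⟨h1O, ⟨v1, hv1, hv1C⟩, hna1⟩ := h1
            obtain ⟨h2O, ⟨v2, hv2, hv2C⟩, hna2⟩ := h2
            have h1O' := (Finset.mem_filter.1 h1O).1
            have h2O' := (Finset.mem_filter.1 h2O).1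
            have hesy : e = s(v, w) := Sym2.eq_of_ne_mem hvw hv hw
              (Sym2.mem_mk_left v w) (Sym2.mem_mk_right v w)
            have hv1' : v1 = v := by
              rcases Sym2.mem_iff.1 (hesy ▸ hv1) with h | h
              · exact h
              · exfalso
                refine (Finset.mem_sdiff.1 (TB.comps_subset h1O' ?_)).2 hwS
                rwa [h] at hv1C
            have hv2' : v2 = v := by
              rcases Sym2.mem_iff.1 (hesy ▸ hv2) with h | h
              · exact h
              · exfalso
                refine (Finset.mem_sdiff.1 (TB.comps_subset h2O' ?_)).2 hwS
                rwa [h] at hv2C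
            by_contra hC12
            exact Finset.disjoint_left.1 (TB.comps_disjoint hGsym h1O' h2O' hC12)
              (hv1' ▸ hv1C) (hv2' ▸ hv2C)
          have hge1 : 1 ≤ (S.filter (· ∈ e)).card :=
            Finset.card_pos.2 ⟨w, Finset.mem_filter.2 ⟨hwS, hw⟩⟩
          omega
        · rw [Finset.not_nonempty_iff_eq_empty.1 hne]
          simp
      have hdegS : (E.map (fun e => (S.filter (· ∈ e)).card)).sum = q * S.card := by
        rw [← TB.sum_countP_swap E S (fun v e => v ∈ e)]
        have : ∀ v ∈ S, E.countP (fun e => v ∈ e) = q := fun v _ => hreg v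
        rw [Finset.sum_congr rfl this, Finset.sum_const, smul_eq_mul, mul_comm]
      calc ∑ C ∈ 𝒪, out C = _ := hswap
        _ ≤ _ := hstep2
        _ = q * S.card := hdegS
    -- vertex counting
    have hvertsum : S.card + ∑ C ∈ 𝒪, C.card ≤ m := by
      have h1 : ∑ C ∈ TB.comps G B, C.card = B.card := TB.sum_comps_card hGsym
      have h2 : ∑ C ∈ 𝒪, C.card ≤ B.card := by
        rw [← h1]
        exact Finset.sum_le_sum_of_subset (Finset.filter_subset _ _)
      have h3 : B.card + S.card = m := by
        rw [hBdef, Finset.card_sdiff_of_subset hSuniv, hmuniv]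
        have := Finset.card_le_card hSuniv
        rw [hmuniv] at this
        omega
      omega
    -- split into singleton components and larger ones
    set t1 := (𝒪.filter (fun C => C.card = 1)).card with ht1
    set u := (𝒪.filter (fun C => ¬ C.card = 1)).card with hu
    have htu : t1 + u = 𝒪.card := Finset.card_filter_add_card_filter_not _
    have hedge2 : q * t1 + 2 * u ≤ ∑ C ∈ 𝒪, out C := by
      rw [← Finset.sum_filter_add_sum_filter_not 𝒪 (fun C => C.card = 1) out]
      have e1 : ∑ C ∈ 𝒪.filter (fun C => C.card = 1), out C = q * t1 := by
        rw [Finset.sum_congr rfl (fun C hC =>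
          hsingle C (Finset.mem_filter.1 hC).1 (Finset.mem_filter.1 hC).2),
          Finset.sum_const, smul_eq_mul, mul_comm]
      have e2 : 2 * u ≤ ∑ C ∈ 𝒪.filter (fun C => ¬ C.card = 1), out C := by
        calc 2 * u = ∑ _C ∈ 𝒪.filter (fun C => ¬ C.card = 1), 2 := by
              rw [Finset.sum_const, smul_eq_mul, mul_comm]
          _ ≤ _ := Finset.sum_le_sum (fun C hC => hout2 C (Finset.mem_filter.1 hC).1)
      omega
    have hvert2 : t1 + 3 * u ≤ ∑ C ∈ 𝒪, C.card := by
      rw [← Finset.sum_filter_add_sum_filter_not 𝒪 (fun C => C.card = 1) (fun C => C.card)]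
      have e1 : ∑ C ∈ 𝒪.filter (fun C => C.card = 1), C.card = t1 := by
        rw [Finset.sum_congr rfl (fun C hC => (Finset.mem_filter.1 hC).2),
          Finset.sum_const, smul_eq_mul, mul_one]
      have e2 : 3 * u ≤ ∑ C ∈ 𝒪.filter (fun C => ¬ C.card = 1), C.card := by
        calc 3 * u = ∑ _C ∈ 𝒪.filter (fun C => ¬ C.card = 1), 3 := by
              rw [Finset.sum_const, smul_eq_mul, mul_comm]
          _ ≤ _ := by
              apply Finset.sum_le_sum
              intro C hC
              rw [Finset.mem_filter] at hC
              have hodd := (Finset.mem_filter.1 hC.1).2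
              have := hC.2
              rw [Nat.odd_iff] at hodd
              omega
      omega
    -- assemble the integer inequality
    have hkey : ((q : ℤ) + 2) * m ≤ (M.card : ℤ) * (3 * q + 2) := by
      have hF1 : (q : ℤ) * t1 + 2 * u ≤ (q : ℤ) * S.card := by
        exact_mod_cast hedge2.trans hedgesum
      have hF2 : (S.card : ℤ) + t1 + 3 * u ≤ m := by
        have := hvert2
        have h2 := hvertsum
        exact_mod_cast by omega
      have hF3 : (m : ℤ) ≤ 2 * M.card + (t1 + u) - S.card := by
        rw [hocB, ← htu] at hMcard
        push_cast at hMcard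
        linarith
      have hq2 : (2 : ℤ) ≤ q := by exact_mod_cast hq
      have hu0 : (0 : ℤ) ≤ u := by positivity
      have ht10 : (0 : ℤ) ≤ t1 := by positivity
      have hA : (q : ℤ) * ((t1 + u) - S.card) ≤ ((q : ℤ) - 2) * u := by
        have hexp : (q : ℤ) * ((t1 + u) - S.card) =
            (q : ℤ) * t1 + (q : ℤ) * u - (q : ℤ) * S.card := by ring
        have hexp2 : ((q : ℤ) - 2) * u = (q : ℤ) * u - 2 * u := by ring
        rw [hexp, hexp2]
        linarith [hF1]
      have hB2 : (3 * (q : ℤ) + 2) * u ≤ (q : ℤ) * m := by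
        have hmul : (q : ℤ) * ((S.card : ℤ) + t1 + 3 * u) ≤ (q : ℤ) * m :=
          mul_le_mul_of_nonneg_left hF2 (by linarith)
        have hexp : (q : ℤ) * ((S.card : ℤ) + t1 + 3 * u) =
            (q : ℤ) * S.card + (q : ℤ) * t1 + 3 * ((q : ℤ) * u) := by ring
        rw [hexp] at hmul
        have hqt1 : 0 ≤ (q : ℤ) * t1 := mul_nonneg (by linarith) ht10
        have hexp2 : (3 * (q : ℤ) + 2) * u = 3 * ((q : ℤ) * u) + 2 * u := by ring
        rw [hexp2]
        linarith [hF1]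
      have hq0 : (0 : ℤ) < q := by linarith
      have hC2 : (q : ℤ) * ((3 * q + 2) * ((m : ℤ) - 2 * M.card)) ≤
          (q : ℤ) * (((q : ℤ) - 2) * m) := by
        calc (q : ℤ) * ((3 * q + 2) * ((m : ℤ) - 2 * M.card))
            ≤ (q : ℤ) * ((3 * q + 2) * ((t1 + u) - S.card)) := by
              apply mul_le_mul_of_nonneg_left _ (le_of_lt hq0)
              apply mul_le_mul_of_nonneg_left _ (by linarith)
              linarith [hF3]
          _ = (3 * q + 2) * ((q : ℤ) * ((t1 + u) - S.card)) := by ring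
          _ ≤ (3 * q + 2) * (((q : ℤ) - 2) * u) := by
              apply mul_le_mul_of_nonneg_left hA (by linarith)
          _ = ((q : ℤ) - 2) * ((3 * q + 2) * u) := by ring
          _ ≤ ((q : ℤ) - 2) * ((q : ℤ) * m) := by
              apply mul_le_mul_of_nonneg_left hB2 (by linarith)
          _ = (q : ℤ) * (((q : ℤ) - 2) * m) := by ring
      have hC3 : (3 * (q : ℤ) + 2) * ((m : ℤ) - 2 * M.card) ≤ ((q : ℤ) - 2) * m :=
        le_of_mul_le_mul_left hC2 hq0
      ring_nf at hC3 ⊢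
      linarith [hC3]
    refine le_trans (min_le_right _ _) ?_
    rw [Int.ceil_le, div_le_iff₀ (by positivity : (0 : ℚ) < 3 * (q : ℚ) + 2)]
    push_cast
    exact_mod_cast hkey
end

section
/- For n ≥ 2, one has 2∫₀¹∫₀^s (min(1/t, 1/s, n) − 1)² dt ds = 2 log n − 2(1 − 1/n). -/
open MeasureTheory Set Real

/-- For `n ≥ 2`, `2∫₀¹∫₀^s (min(1/t, 1/s, n) − 1)² dt ds = 2 log n − 2(1 − 1/n)`. -/
theorem double_integral_min_formula (n : ℝ) (hn : 2 ≤ n) :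
    2 * ∫ s in Set.Ioc (0 : ℝ) 1, ∫ t in Set.Ioc (0 : ℝ) s,
        (min (1 / t) (min (1 / s) n) - 1) ^ 2
      = 2 * Real.log n - 2 * (1 - 1 / n) := by
  have hn0 : (0:ℝ) < n := by linarith
  have h1n0 : (0:ℝ) < 1 / n := by positivity
  have h1n1 : (1:ℝ) / n ≤ 1 := by
    rw [div_le_one hn0]; linarith
  set f : ℝ → ℝ := fun s => ∫ t in Set.Ioc (0 : ℝ) s,
        (min (1 / t) (min (1 / s) n) - 1) ^ 2 with hf
  -- inner integral on (0, 1/n]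
  have hA : ∀ s ∈ Set.Ioc (0:ℝ) (1/n), f s = s * (n-1)^2 := by
    intro s hs
    have hs0 : 0 < s := hs.1
    have hsn : n ≤ 1 / s := by
      rw [le_div_iff₀ hs0]
      calc n * s ≤ n * (1/n) := by nlinarith [hs.2]
        _ = 1 := by field_simp
    have : f s = ∫ t in Set.Ioc (0 : ℝ) s, (n - 1)^2 := by
      apply setIntegral_congr_fun measurableSet_Ioc
      intro t ht
      have ht0 : 0 < t := ht.1
      have htn : n ≤ 1 / t := le_trans hsn (by
        apply one_div_le_one_div_of_le ht0 ht.2)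
      simp only [min_eq_right hsn, min_eq_right htn]
    rw [this, setIntegral_const, Real.volume_real_Ioc, smul_eq_mul,
      max_eq_left (by linarith : (0:ℝ) ≤ s - 0)]
    ring
  -- inner integral on (1/n, 1]
  have hB : ∀ s ∈ Set.Ioc (1/n) (1:ℝ), f s = 1/s - 2 + s := by
    intro s hs
    have hs0 : 0 < s := lt_trans h1n0 hs.1
    have hsn : 1 / s ≤ n := by
      rw [div_le_iff₀ hs0]
      calc (1:ℝ) = n * (1/n) := by field_simp
        _ ≤ n * s := by nlinarith [hs.1]
    have : f s = ∫ t in Set.Ioc (0 : ℝ) s, (1/s - 1)^2 := by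
      apply setIntegral_congr_fun measurableSet_Ioc
      intro t ht
      have ht0 : 0 < t := ht.1
      have hts : 1 / s ≤ 1 / t := one_div_le_one_div_of_le ht0 ht.2
      simp only [min_eq_left hsn, min_eq_right hts]
    rw [this, setIntegral_const, Real.volume_real_Ioc, smul_eq_mul,
      max_eq_left (by linarith : (0:ℝ) ≤ s - 0)]
    field_simp
    ring
  -- split the outer integral
  have hsplit : Set.Ioc (0:ℝ) 1 = Set.Ioc (0:ℝ) (1/n) ∪ Set.Ioc (1/n) 1 :=
    (Set.Ioc_union_Ioc_eq_Ioc h1n0.le h1n1).symm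
  have hIA : IntegrableOn f (Set.Ioc (0:ℝ) (1/n)) := by
    apply (IntegrableOn.congr_fun ?_ (fun s hs => (hA s hs).symm) measurableSet_Ioc)
    exact (continuous_id.mul continuous_const).integrableOn_Ioc
  have hIB : IntegrableOn f (Set.Ioc (1/n) (1:ℝ)) := by
    apply (IntegrableOn.congr_fun ?_ (fun s hs => (hB s hs).symm) measurableSet_Ioc)
    apply IntegrableOn.mono_set ?_ Set.Ioc_subset_Icc_self
    apply ContinuousOn.integrableOn_Icc
    exact (((continuousOn_const.div continuousOn_id (fun x hx => by
      have hx1 := hx.1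
      simp only [id_eq]
      intro h; rw [h] at hx1; linarith)).sub
      continuousOn_const).add continuousOn_id)
  have key : ∫ s in Set.Ioc (0:ℝ) 1, f s
      = (∫ s in Set.Ioc (0:ℝ) (1/n), f s) + ∫ s in Set.Ioc (1/n) (1:ℝ), f s := by
    rw [hsplit]
    exact setIntegral_union (Set.Ioc_disjoint_Ioc_of_le le_rfl) measurableSet_Ioc hIA hIB
  have valA : ∫ s in Set.Ioc (0:ℝ) (1/n), f s = (1/n)^2 / 2 * (n-1)^2 := by
    rw [setIntegral_congr_fun measurableSet_Ioc hA,
      ← intervalIntegral.integral_of_le h1n0.le]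
    rw [intervalIntegral.integral_mul_const, integral_id]
    ring
  have valB : ∫ s in Set.Ioc (1/n) (1:ℝ), f s
      = Real.log n - 2 * (1 - 1/n) + (1 - (1/n)^2) / 2 := by
    rw [setIntegral_congr_fun measurableSet_Ioc hB,
      ← intervalIntegral.integral_of_le h1n1]
    have h0 : (0:ℝ) ∉ Set.uIcc (1/n) 1 := by
      rw [Set.uIcc_of_le h1n1]
      intro h; exact absurd h.1 (by linarith)
    have i1 : IntervalIntegrable (fun s : ℝ => 1/s) volume (1/n) 1 :=
      intervalIntegral.intervalIntegrable_one_div (fun x hx => by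
        intro h; rw [h] at hx; exact h0 hx) (by fun_prop)
    have i2 : IntervalIntegrable (fun _ : ℝ => (2:ℝ)) volume (1/n) 1 :=
      intervalIntegrable_const
    have i3 : IntervalIntegrable (fun s : ℝ => s) volume (1/n) 1 :=
      intervalIntegral.intervalIntegrable_id
    rw [intervalIntegral.integral_add (i1.sub i2) i3,
      intervalIntegral.integral_sub i1 i2]
    rw [integral_one_div h0, intervalIntegral.integral_const, integral_id]
    rw [one_div_one_div]
    simp only [smul_eq_mul]
    ring
  rw [hf] at key valA valB ⊢
  rw [key, valA, valB]
  field_simp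
  ring
end

section
/- Let q ≥ 2 and m ≥ 3 with qm even, and let Π(q[m]) denote the set of pair partitions σ of {1,…,qm} such that each block meets each of the m consecutive intervals J_i = {(i−1)q+1,…,iq} at most once, every block has size exactly 2, and the associated q-regular multigraph on vertex set {1,…,m} (with an edge {i,j} for each block meeting J_i and J_j) is connected. Then |Π(q[m])| ≤ (m!)^{q/2} (q^{q/2})^m. -/
open Equiv

private def Lt (n : ℕ) : Fin (n+2) := ⟨n+1, by omega⟩
private def Ls (n : ℕ) : Fin (n+2) := ⟨n, by omega⟩

private def conjF (n : ℕ) (f : Perm (Fin (n+2))) : Perm (Fin (n+2)) :=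
  (swap (f (Lt n)) (Ls n)) * f * (swap (f (Lt n)) (Ls n))

private lemma conjF_spec (n : ℕ) (f : Perm (Fin (n+2)))
    (h1 : ∀ x, f x ≠ x) (h2 : ∀ x, f (f x) = x) :
    (∀ x, conjF n f x ≠ x) ∧ (∀ x, conjF n f (conjF n f x) = x) ∧
    conjF n f (Lt n) = Ls n ∧ conjF n f (Ls n) = Lt n ∧
    (∀ x : Fin (n+2), (x:ℕ) < n ↔ ((conjF n f x : Fin (n+2)) : ℕ) < n) := by
  set s := swap (f (Lt n)) (Ls n) with hs
  have happ : ∀ x, conjF n f x = s (f (s x)) := fun x => rfl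
  have hss : ∀ x, s (s x) = x := fun x => Equiv.swap_apply_self _ _ _
  have hinv : ∀ x, conjF n f (conjF n f x) = x := by
    intro x; rw [happ, happ, hss, h2, hss]
  have hfpf : ∀ x, conjF n f x ≠ x := by
    intro x hx
    rw [happ] at hx
    have : f (s x) = s x := by
      have := congrArg s hx
      rwa [hss] at this
    exact h1 _ this
  have hLt : conjF n f (Lt n) = Ls n := by
    rw [happ]
    have h1' : Lt n ≠ f (Lt n) := fun h => h1 (Lt n) h.symm
    have h2' : Lt n ≠ Ls n := by simp [Lt, Ls, Fin.ext_iff]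
    rw [Equiv.swap_apply_of_ne_of_ne h1' h2', Equiv.swap_apply_left]
  have hLs : conjF n f (Ls n) = Lt n := by
    have := hinv (Lt n); rwa [hLt] at this
  have hfwd : ∀ x : Fin (n+2), (x:ℕ) < n → ((conjF n f x : Fin (n+2)) : ℕ) < n := by
    intro x hx
    have hxLt : x ≠ Lt n := by simp [Lt, Fin.ext_iff]; omega
    have hxLs : x ≠ Ls n := by simp [Ls, Fin.ext_iff]; omega
    have hne1 : conjF n f x ≠ Ls n := by
      rw [← hLt]; exact fun h => hxLt ((conjF n f).injective h)
    have hne2 : conjF n f x ≠ Lt n := by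
      rw [← hLs]; exact fun h => hxLs ((conjF n f).injective h)
    have hb := (conjF n f x).isLt
    simp only [Lt, Ls, Ne, Fin.ext_iff] at hne1 hne2
    omega
  refine ⟨hfpf, hinv, hLt, hLs, fun x => ⟨hfwd x, fun hx => ?_⟩⟩
  have := hfwd (conjF n f x) hx
  rwa [hinv] at this

private def eSub (n : ℕ) : {x : Fin (n+2) // (x : ℕ) < n} ≃ Fin n where
  toFun x := ⟨(x.1 : ℕ), x.2⟩
  invFun y := ⟨⟨(y : ℕ), by omega⟩, y.isLt⟩
  left_inv x := rfl
  right_inv y := rfl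

private lemma fpf_step (n : ℕ) :
    Nat.card {f : Perm (Fin (n+2)) // (∀ x, f x ≠ x) ∧ (∀ x, f (f x) = x)} ≤
      (n+1) * Nat.card {f : Perm (Fin n) // (∀ x, f x ≠ x) ∧ (∀ x, f (f x) = x)} := by
  classical
  have hmain : Nat.card {f : Perm (Fin (n+2)) // (∀ x, f x ≠ x) ∧ (∀ x, f (f x) = x)} ≤
      Nat.card (Fin (n+1) × {f : Perm (Fin n) // (∀ x, f x ≠ x) ∧ (∀ x, f (f x) = x)}) := by
    apply Nat.card_le_card_of_injective
      (f := fun F =>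
        (⟨((F.1 (Lt n) : Fin (n+2)) : ℕ), by
            have hne : F.1 (Lt n) ≠ Lt n := F.2.1 (Lt n)
            have hlt := (F.1 (Lt n)).isLt
            have hne2 : ((F.1 (Lt n)) : ℕ) ≠ n+1 := fun h => hne (Fin.ext h)
            omega⟩,
         ⟨(eSub n).permCongr ((conjF n F.1).subtypePerm
            (fun x => ((conjF_spec n F.1 F.2.1 F.2.2).2.2.2.2 x).symm)),
          by
            intro y hy
            have hspec := conjF_spec n F.1 F.2.1 F.2.2
            have : ((conjF n F.1 ⟨(y:ℕ), by omega⟩ : Fin (n+2)) : ℕ) = (y : ℕ) :=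
              congrArg Fin.val (congrArg Subtype.val
                (congrArg (eSub n).symm hy))
            exact hspec.1 ⟨(y:ℕ), by omega⟩ (Fin.ext this),
          by
            intro y
            have hspec := conjF_spec n F.1 F.2.1 F.2.2
            apply Fin.ext
            show ((conjF n F.1 (conjF n F.1 ⟨(y:ℕ), _⟩) : Fin (n+2)) : ℕ) = (y : ℕ)
            rw [hspec.2.1]⟩))
    rintro ⟨f1, hf1⟩ ⟨f2, hf2⟩ hF
    have h1 := congrArg Prod.fst hF
    have h2 := congrArg Prod.snd hF
    simp only at h1 h2
    have hLv : ((f1 (Lt n)) : ℕ) = ((f2 (Lt n)) : ℕ) := by injection h1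
    have hL : f1 (Lt n) = f2 (Lt n) := Fin.ext hLv
    have hg : (eSub n).permCongr ((conjF n f1).subtypePerm _) =
        (eSub n).permCongr ((conjF n f2).subtypePerm _) := congrArg Subtype.val h2
    have hspec1 := conjF_spec n f1 hf1.1 hf1.2
    have hspec2 := conjF_spec n f2 hf2.1 hf2.2
    have hconj : conjF n f1 = conjF n f2 := by
      apply Equiv.ext
      intro x
      by_cases hx : (x : ℕ) < n
      · have hval : ((conjF n f1 x : Fin (n+2)) : ℕ) = ((conjF n f2 x : Fin (n+2)) : ℕ) :=
          congrArg (fun p => ((p ⟨(x:ℕ), hx⟩ : Fin n) : ℕ)) hg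
        exact Fin.ext hval
      · have hb := x.isLt
        by_cases hx2 : (x : ℕ) = n
        · have : x = Ls n := Fin.ext hx2
          rw [this, hspec1.2.2.2.1, hspec2.2.2.2.1]
        · have : x = Lt n := Fin.ext (show (x:ℕ) = n+1 by omega)
          rw [this, hspec1.2.2.1, hspec2.2.2.1]
    have hrec : ∀ (f : Perm (Fin (n+2))),
        swap (f (Lt n)) (Ls n) * conjF n f * swap (f (Lt n)) (Ls n) = f := by
      intro f
      unfold conjF
      rw [← mul_assoc, ← mul_assoc, Equiv.swap_mul_self, one_mul, mul_assoc,
        Equiv.swap_mul_self, mul_one]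
    have : f1 = f2 := by
      rw [← hrec f1, ← hrec f2, hconj, hL]
    exact Subtype.ext this
  rw [Nat.card_prod, Nat.card_eq_fintype_card (α := Fin (n+1)), Fintype.card_fin] at hmain
  exact hmain

private def DD : ℕ → ℕ
  | 0 => 1
  | k+1 => (2*k+1) * DD k

private lemma DD_sq_le (k : ℕ) : (DD k)^2 ≤ Nat.factorial (2*k) := by
  induction k with
  | zero => simp [DD]
  | succ k ih =>
    have h2 : Nat.factorial (2*(k+1)) = (2*k+2) * ((2*k+1) * Nat.factorial (2*k)) := by
      have h : 2*(k+1) = (2*k+1)+1 := by ring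
      rw [h, Nat.factorial_succ, Nat.factorial_succ]
    calc (DD (k+1))^2 = (2*k+1)^2 * (DD k)^2 := by rw [DD]; ring
    _ ≤ (2*k+1)^2 * Nat.factorial (2*k) := Nat.mul_le_mul_left _ ih
    _ ≤ (2*k+2)*((2*k+1) * Nat.factorial (2*k)) := by nlinarith [Nat.factorial_pos (2*k)]
    _ = Nat.factorial (2*(k+1)) := h2.symm

private lemma choose_pow_le (nn k q : ℕ) (h : k ≤ nn) :
    Nat.choose nn k * q ^ (nn - k) ≤ (q+1)^nn := by
  have hb : (1 + q)^nn = ∑ i ∈ Finset.range (nn+1), 1^i * q^(nn-i) * Nat.choose nn i :=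
    add_pow 1 q nn
  have hmem : k ∈ Finset.range (nn+1) := Finset.mem_range.mpr (by omega)
  have hs := Finset.single_le_sum (f := fun i => 1^i * q^(nn-i) * Nat.choose nn i)
    (fun i _ => Nat.zero_le _) hmem
  calc Nat.choose nn k * q^(nn-k) = 1^k * q^(nn-k) * Nat.choose nn k := by ring
  _ ≤ (1+q)^nn := by rw [hb]; exact hs
  _ = (q+1)^nn := by ring_nf

private lemma factorial_mul_le (m : ℕ) :
    ∀ q : ℕ, Nat.factorial (q*m) ≤ (Nat.factorial m)^q * q^(q*m) := by
  intro q
  induction q with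
  | zero => simp
  | succ q ih =>
    have hk : m ≤ m + q*m := Nat.le_add_right _ _
    have hid := Nat.choose_mul_factorial_mul_factorial hk
    have hsub : m + q*m - m = q*m := by omega
    rw [hsub] at hid
    have h1 : Nat.choose (m+q*m) m * q^(q*m) ≤ (q+1)^(m+q*m) := by
      have := choose_pow_le (m+q*m) m q hk
      rwa [hsub] at this
    have hQM : (q+1)*m = m + q*m := by ring
    rw [hQM]
    calc Nat.factorial (m+q*m)
        = Nat.choose (m+q*m) m * Nat.factorial m * Nat.factorial (q*m) := hid.symm
    _ ≤ Nat.choose (m+q*m) m * Nat.factorial m * ((Nat.factorial m)^q * q^(q*m)) :=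
        Nat.mul_le_mul_left _ ih
    _ = (Nat.factorial m)^(q+1) * (Nat.choose (m+q*m) m * q^(q*m)) := by ring
    _ ≤ (Nat.factorial m)^(q+1) * (q+1)^(m+q*m) := Nat.mul_le_mul_left _ h1

private lemma card_le_DD : ∀ k : ℕ,
    Nat.card {f : Perm (Fin (2*k)) // (∀ x, f x ≠ x) ∧ (∀ x, f (f x) = x)} ≤ DD k := by
  intro k
  induction k with
  | zero =>
    have h : Nat.card {f : Perm (Fin (2*0)) // (∀ x, f x ≠ x) ∧ (∀ x, f (f x) = x)} ≤
        Nat.card (Perm (Fin 0)) :=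
      Nat.card_le_card_of_injective Subtype.val Subtype.val_injective
    simp only [DD]; simpa [Nat.card_eq_fintype_card] using h
  | succ k ih =>
    have h := fpf_step (2*k)
    have : Nat.card {f : Perm (Fin (2*k+2)) // (∀ x, f x ≠ x) ∧ (∀ x, f (f x) = x)} ≤
        (2*k+1) * DD k := le_trans h (Nat.mul_le_mul_left _ ih)
    simpa [DD, Nat.mul_succ] using this

/-- The set `Π(q[m])` of pair partitions of `{1,…,qm}` such that every block has size two,
meets each interval `J_i = {(i−1)q+1,…,iq}` at most once, and whose associated
`q`-regular multigraph on `{1,…,m}` is connected, is modeled by fixed-point-free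
involutions `f` of `Fin (q*m)` pairing elements of distinct intervals (block containing
`x` is `{x, f x}`; `x` lies in interval `x/q`), with the stated connectivity condition.
Its cardinality is at most `(m!)^{q/2} (q^{q/2})^m`. -/
theorem pair_partition_count_bound (q m : ℕ) (hq : 2 ≤ q) (hm : 3 ≤ m)
    (heven : Even (q * m)) :
    (Nat.card {f : Equiv.Perm (Fin (q * m)) //
        (∀ x, f x ≠ x) ∧ (∀ x, f (f x) = x) ∧
        (∀ x : Fin (q * m), (x : ℕ) / q ≠ ((f x : Fin (q * m)) : ℕ) / q) ∧
        (∀ M₁ M₂ : Finset (Fin m), M₁.Nonempty → M₂.Nonempty → M₁ ∪ M₂ = Finset.univ →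
          ∃ x : Fin (q * m),
            (⟨(x : ℕ) / q, Nat.div_lt_of_lt_mul x.isLt⟩ : Fin m) ∈ M₁ ∧
            (⟨((f x : Fin (q * m)) : ℕ) / q,
              Nat.div_lt_of_lt_mul (f x).isLt⟩ : Fin m) ∈ M₂)} : ℝ)
      ≤ (Nat.factorial m : ℝ) ^ ((q : ℝ) / 2) * ((q : ℝ) ^ ((q : ℝ) / 2)) ^ m := by
  classical
  obtain ⟨k, hk⟩ := heven
  have h2k : q * m = 2 * k := by omega
  -- reduce to fixed-point-free involutions
  have hS : Nat.card {f : Equiv.Perm (Fin (q * m)) //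
        (∀ x, f x ≠ x) ∧ (∀ x, f (f x) = x) ∧
        (∀ x : Fin (q * m), (x : ℕ) / q ≠ ((f x : Fin (q * m)) : ℕ) / q) ∧
        (∀ M₁ M₂ : Finset (Fin m), M₁.Nonempty → M₂.Nonempty → M₁ ∪ M₂ = Finset.univ →
          ∃ x : Fin (q * m),
            (⟨(x : ℕ) / q, Nat.div_lt_of_lt_mul x.isLt⟩ : Fin m) ∈ M₁ ∧
            (⟨((f x : Fin (q * m)) : ℕ) / q,
              Nat.div_lt_of_lt_mul (f x).isLt⟩ : Fin m) ∈ M₂)} ≤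
      Nat.card {f : Perm (Fin (q*m)) // (∀ x, f x ≠ x) ∧ (∀ x, f (f x) = x)} :=
    Nat.card_le_card_of_injective (fun F => ⟨F.1, F.2.1, F.2.2.1⟩)
      (fun a b hab => Subtype.ext (by injection hab))
  have hT : Nat.card {f : Perm (Fin (q*m)) // (∀ x, f x ≠ x) ∧ (∀ x, f (f x) = x)} ≤ DD k := by
    rw [h2k]
    exact card_le_DD k
  set c : ℕ := Nat.card {f : Equiv.Perm (Fin (q * m)) //
        (∀ x, f x ≠ x) ∧ (∀ x, f (f x) = x) ∧
        (∀ x : Fin (q * m), (x : ℕ) / q ≠ ((f x : Fin (q * m)) : ℕ) / q) ∧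
        (∀ M₁ M₂ : Finset (Fin m), M₁.Nonempty → M₂.Nonempty → M₁ ∪ M₂ = Finset.univ →
          ∃ x : Fin (q * m),
            (⟨(x : ℕ) / q, Nat.div_lt_of_lt_mul x.isLt⟩ : Fin m) ∈ M₁ ∧
            (⟨((f x : Fin (q * m)) : ℕ) / q,
              Nat.div_lt_of_lt_mul (f x).isLt⟩ : Fin m) ∈ M₂)} with hcdef
  have hcD : c ≤ DD k := le_trans hS hT
  have hnat : c^2 ≤ (Nat.factorial m)^q * q^(q*m) := by
    calc c^2 ≤ (DD k)^2 := Nat.pow_le_pow_left hcD 2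
    _ ≤ Nat.factorial (2*k) := DD_sq_le k
    _ = Nat.factorial (q*m) := by rw [h2k]
    _ ≤ (Nat.factorial m)^q * q^(q*m) := factorial_mul_le m q
  set R : ℝ := (Nat.factorial m : ℝ) ^ ((q : ℝ) / 2) * ((q : ℝ) ^ ((q : ℝ) / 2)) ^ m with hRdef
  have hfac0 : (0:ℝ) ≤ (Nat.factorial m : ℝ) := Nat.cast_nonneg _
  have hq0 : (0:ℝ) ≤ (q : ℝ) := Nat.cast_nonneg _
  have hR0 : 0 ≤ R := by positivity
  have hRsq : R^2 = ((Nat.factorial m : ℝ))^(q:ℕ) * (q:ℝ)^(q*m : ℕ) := by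
    rw [hRdef, mul_pow]
    congr 1
    · rw [← Real.rpow_natCast ((Nat.factorial m : ℝ) ^ ((q : ℝ) / 2)) 2,
        ← Real.rpow_mul hfac0, ← Real.rpow_natCast (Nat.factorial m : ℝ) q]
      norm_num
    · rw [← pow_mul, ← Real.rpow_natCast ((q:ℝ) ^ ((q : ℝ) / 2)) (m*2),
        ← Real.rpow_mul hq0, ← Real.rpow_natCast (q:ℝ) (q*m)]
      congr 1
      push_cast
      ring
  have hsq : (c:ℝ)^2 ≤ R^2 := by
    rw [hRsq]
    exact_mod_cast hnat
  have := Real.sqrt_le_sqrt hsq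
  rwa [Real.sqrt_sq (by positivity), Real.sqrt_sq hR0] at this
end
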